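/- arXiv:2508.06002 — 12 statements merged into one kernel-verified Lean document; each statement's English description precedes it below -/
import Mathlib

section
/- Let n ≥ 1, H ∈ ℝ^{n×n} be symmetric positive definite, b ∈ ℝⁿ, and f(x) = (1/2)xᵀHx + bᵀx with gradient G(x) = Hx + b. Fix x_k ∈ ℝⁿ with G(x_k) ≠ 0 and α_k > 0, and set x_{k+1} = x_k − α_k G(x_k), s_k = x_{k+1} − x_k, y_k = G(x_{k+1}) − G(x_k). Then the long KGD step-size equals the long Barzilai–Borwein step: K1(x_{k+1}; x_k, α_k) = (s_kᵀ s_k)/(s_kᵀ y_k), where in particular s_kᵀ y_k > 0 and the denominator 2 + 2(f(x_{k+1}) − f(x_k))/(α_k ‖G(x_k)‖²) is nonzero. -/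
open scoped RealInnerProductSpace

/-- For the strongly convex quadratic `f(x) = (1/2)xᵀHx + bᵀx` with gradient
`G(x) = Hx + b`, the long KGD step-size equals the long Barzilai–Borwein step. -/
theorem stmt_0 {n : ℕ} (hn : 1 ≤ n)
    (H : Matrix (Fin n) (Fin n) ℝ) (hH : H.PosDef)
    (b : EuclideanSpace ℝ (Fin n))
    (f : EuclideanSpace ℝ (Fin n) → ℝ)
    (hf : ∀ x, f x = (1 / 2) * ⟪x, Matrix.toEuclideanLin H x⟫ + ⟪b, x⟫)
    (G : EuclideanSpace ℝ (Fin n) → EuclideanSpace ℝ (Fin n))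
    (hG : ∀ x, G x = Matrix.toEuclideanLin H x + b)
    (xk : EuclideanSpace ℝ (Fin n)) (hGk : G xk ≠ 0)
    (αk : ℝ) (hαk : 0 < αk)
    (xk1 sk yk : EuclideanSpace ℝ (Fin n))
    (hx : xk1 = xk - αk • G xk)
    (hs : sk = xk1 - xk) (hy : yk = G xk1 - G xk) :
    0 < ⟪sk, yk⟫ ∧
      2 + 2 * (f xk1 - f xk) / (αk * ‖G xk‖ ^ 2) ≠ 0 ∧
      αk / (2 + 2 * (f xk1 - f xk) / (αk * ‖G xk‖ ^ 2)) = ⟪sk, sk⟫ / ⟪sk, yk⟫ := by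
  set A := Matrix.toEuclideanLin H with hA
  set g := G xk with hg
  have hsym : ∀ u v : EuclideanSpace ℝ (Fin n), ⟪A u, v⟫ = ⟪u, A v⟫ :=
    (Matrix.isHermitian_iff_isSymmetric.mp hH.isHermitian)
  have hpos : ∀ u : EuclideanSpace ℝ (Fin n), u ≠ 0 → 0 < ⟪u, A u⟫ := by
    intro u hu
    have := hH.dotProduct_mulVec_pos (x := (WithLp.equiv 2 _) u) (by simpa using hu)
    simpa [EuclideanSpace.inner_eq_star_dotProduct, Matrix.toEuclideanLin_apply, hA, dotProduct_comm] using this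
  have hgne : g ≠ 0 := hGk
  have hP : 0 < ⟪g, A g⟫ := hpos g hgne
  have hN : (0:ℝ) < ‖g‖ ^ 2 := pow_pos (norm_pos_iff.mpr hgne) 2
  have hsk : sk = -(αk • g) := by rw [hs, hx]; abel
  have hyk : yk = A sk := by
    rw [hy, hG xk1, hg, hG xk, hs, map_sub]; abel
  have hsy : ⟪sk, yk⟫ = αk ^ 2 * ⟪g, A g⟫ := by
    rw [hyk, hsk]
    simp only [inner_neg_neg, map_neg, map_smul, real_inner_smul_left, real_inner_smul_right]
    ring
  have hss : ⟪sk, sk⟫ = αk ^ 2 * ‖g‖ ^ 2 := by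
    rw [hsk, inner_neg_neg, real_inner_smul_left, real_inner_smul_right,
      real_inner_self_eq_norm_sq]
    ring
  have hx1 : xk1 = xk + sk := by rw [hs]; abel
  have hdf : f xk1 - f xk = (1/2) * ⟪sk, A sk⟫ + ⟪sk, g⟫ := by
    rw [hf, hf, hx1, hg, hG]
    have h1 : ⟪xk, A sk⟫ = ⟪sk, A xk⟫ := by rw [← hsym]; exact real_inner_comm _ _
    have hb : ⟪b, sk⟫ = ⟪sk, b⟫ := real_inner_comm _ _
    simp only [map_add, inner_add_left, inner_add_right, h1, hb]
    ring
  have hsg : ⟪sk, g⟫ = -(αk * ‖g‖^2) := by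
    rw [hsk]
    simp only [inner_neg_left, real_inner_smul_left, real_inner_self_eq_norm_sq]
  have hsAs : ⟪sk, A sk⟫ = αk ^ 2 * ⟪g, A g⟫ := by
    rw [hsk]
    simp only [inner_neg_neg, map_neg, map_smul, real_inner_smul_left, real_inner_smul_right]
    ring
  have hdf2 : f xk1 - f xk = (1/2) * (αk ^ 2 * ⟪g, A g⟫) - αk * ‖g‖^2 := by
    rw [hdf, hsg, hsAs]; ring
  have hαNne : αk * ‖g‖ ^ 2 ≠ 0 := by positivity
  have hden : 2 + 2 * (f xk1 - f xk) / (αk * ‖g‖ ^ 2) = αk * ⟪g, A g⟫ / ‖g‖ ^ 2 := by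
    rw [hdf2]; field_simp; ring
  refine ⟨by rw [hsy]; positivity, ?_, ?_⟩
  · rw [hden]; positivity
  · rw [hden, hss, hsy]
    rw [div_div_eq_mul_div, div_eq_div_iff (by positivity) (by positivity)]
    ring
end

section
/- Let n ≥ 1, H ∈ ℝ^{n×n} be symmetric positive definite, b ∈ ℝⁿ, and f(x) = (1/2)xᵀHx + bᵀx with gradient G(x) = Hx + b. Fix x_k ∈ ℝⁿ with G(x_k) ≠ 0 and α_k > 0, and set x_{k+1} = x_k − α_k G(x_k), s_k = x_{k+1} − x_k, y_k = G(x_{k+1}) − G(x_k). Then y_k ≠ 0 and the short KGD step-size equals the short Barzilai–Borwein step: K1s(x_{k+1}; x_k, α_k) = (s_kᵀ y_k)/(y_kᵀ y_k). -/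
open scoped RealInnerProductSpace

/-- For the strongly convex quadratic `f(x) = (1/2)xᵀHx + bᵀx` with gradient
`G(x) = Hx + b`, the short KGD step-size equals the short Barzilai–Borwein step. -/
theorem stmt_1 {n : ℕ} (hn : 1 ≤ n)
    (H : Matrix (Fin n) (Fin n) ℝ) (hH : H.PosDef)
    (b : EuclideanSpace ℝ (Fin n))
    (f : EuclideanSpace ℝ (Fin n) → ℝ)
    (hf : ∀ x, f x = (1 / 2) * ⟪x, Matrix.toEuclideanLin H x⟫ + ⟪b, x⟫)
    (G : EuclideanSpace ℝ (Fin n) → EuclideanSpace ℝ (Fin n))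
    (hG : ∀ x, G x = Matrix.toEuclideanLin H x + b)
    (xk : EuclideanSpace ℝ (Fin n)) (hGk : G xk ≠ 0)
    (αk : ℝ) (hαk : 0 < αk)
    (xk1 sk yk : EuclideanSpace ℝ (Fin n))
    (hx : xk1 = xk - αk • G xk)
    (hs : sk = xk1 - xk) (hy : yk = G xk1 - G xk) :
    yk ≠ 0 ∧
      2 * (αk * ‖G xk‖ ^ 2 + (f xk1 - f xk)) / ‖G xk1 - G xk‖ ^ 2 =
        ⟪sk, yk⟫ / ⟪yk, yk⟫ := by
  set A := Matrix.toEuclideanLin H with hA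
  have hsymm : ∀ u v : EuclideanSpace ℝ (Fin n), ⟪A u, v⟫ = ⟪u, A v⟫ :=
    Matrix.isHermitian_iff_isSymmetric.mp hH.isHermitian
  have hpos : ∀ u : EuclideanSpace ℝ (Fin n), u ≠ 0 → 0 < ⟪u, A u⟫ := by
    intro u hu
    have h0 : (WithLp.equiv 2 (Fin n → ℝ)) u ≠ 0 := by simpa using hu
    have := hH.re_dotProduct_pos h0
    simpa [hA, Matrix.toEuclideanLin_apply, dotProduct, PiLp.inner_apply,
      RCLike.inner_apply, mul_comm] using this
  have hsk : sk = -(αk • G xk) := by rw [hs, hx]; abel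
  have hskne : sk ≠ 0 := by
    rw [hsk]
    simpa [hαk.ne'] using hGk
  have hyk : yk = A sk := by
    rw [hy, hG, hG, hs, map_sub]
    abel
  have hykne : yk ≠ 0 := by
    intro h
    have := hpos sk hskne
    rw [← hyk, h, inner_zero_right] at this
    exact lt_irrefl 0 this
  refine ⟨hykne, ?_⟩
  -- key inner product facts
  have hxk1 : xk1 = xk + sk := by rw [hs]; abel
  have hcomm : ⟪xk, A sk⟫ = ⟪sk, A xk⟫ := by rw [← hsymm xk sk, real_inner_comm]
  have e1 : ⟪xk + sk, A (xk + sk)⟫ = ⟪xk, A xk⟫ + 2 * ⟪sk, A xk⟫ + ⟪sk, A sk⟫ := by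
    rw [map_add, inner_add_left, inner_add_right, inner_add_right]
    linarith [hcomm]
  have e2 : ⟪sk, G xk⟫ = -(αk * ‖G xk‖ ^ 2) := by
    rw [hsk, inner_neg_left, real_inner_smul_left, real_inner_self_eq_norm_sq]
  have e3 : ⟪sk, G xk⟫ = ⟪sk, A xk⟫ + ⟪b, sk⟫ := by
    rw [hG, inner_add_right, real_inner_comm sk b]
  have e4 : ⟪sk, yk⟫ = ⟪sk, A sk⟫ := by rw [hyk]
  have e5 : ‖G xk1 - G xk‖ ^ 2 = ⟪yk, yk⟫ := by
    rw [← hy, real_inner_self_eq_norm_sq]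
  have e6 : f xk1 - f xk = ⟪sk, A xk⟫ + (1/2) * ⟪sk, A sk⟫ + ⟪b, sk⟫ := by
    rw [hf, hf, hxk1, e1, inner_add_right]
    ring
  rw [e5]
  congr 1
  rw [e6, e4, e2] at *
  linarith [e2, e3]
end

section
/- Let n ≥ 1, H ∈ ℝ^{n×n} be symmetric positive definite, b ∈ ℝⁿ, f(x) = (1/2)xᵀHx + bᵀx with gradient G(x) = Hx + b and unique minimizer x* = −H⁻¹b. Let x₀ ∈ ℝⁿ, α₀ > 0, and define x_{k+1} = x_k − α_k G(x_k) where for k ≥ 1 the step is the long Barzilai–Borwein step α_k = (s_{k−1}ᵀ s_{k−1})/(s_{k−1}ᵀ y_{k−1}) with s_{k−1} = x_k − x_{k−1}, y_{k−1} = G(x_k) − G(x_{k−1}). If G(x_k) ≠ 0 for all k (so the iteration is well defined), then x_k converges to x*. -/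
open scoped RealInnerProductSpace
open Filter

open Finset in

lemma bb_aux (a q : ℕ → ℝ) (ha : ∀ k, 0 ≤ a k) (hq0 : ∀ k, 0 ≤ q k)
    (hq : Tendsto q atTop (nhds 0))
    (C c : ℝ) (hC : 1 ≤ C) (hc0 : 0 ≤ c) (hc1 : c < 1)
    (hCstep : ∀ k, a (k + 2) ≤ C * a (k + 1))
    (hcase : ∀ k, a (k + 2) ≤ c * a (k + 1) ∨ a k ≤ q k) :
    Tendsto a atTop (nhds 0) := by
  rw [Metric.tendsto_atTop]
  intro ε hε
  have hε2 : 0 < ε / 2 := by positivity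
  have hC0 : (0:ℝ) < C := lt_of_lt_of_le one_pos hC
  have hC2 : (0:ℝ) < C ^ 2 := by positivity
  have hC2' : (1:ℝ) ≤ C ^ 2 := one_le_pow₀ hC
  have hdivle : ε / 2 / C ^ 2 ≤ ε / 2 := by
    calc ε / 2 / C ^ 2 ≤ ε / 2 / 1 := div_le_div_of_nonneg_left hε2.le one_pos hC2'
      _ = ε / 2 := by ring
  obtain ⟨K0, hK0⟩ := (Metric.tendsto_atTop.1 hq) (ε / 2 / C ^ 2) (by positivity)
  set K1 := max K0 1 with hK1def
  have hqsmall : ∀ k, K1 ≤ k → q k ≤ ε / 2 / C ^ 2 := by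
    intro k hk
    have := hK0 k (le_trans (le_max_left _ _) hk)
    rw [Real.dist_eq, sub_zero, abs_of_nonneg (hq0 k)] at this
    exact this.le
  have hK11 : 1 ≤ K1 := le_max_right _ _
  have claim : ∃ k0, K1 + 1 ≤ k0 ∧ a k0 ≤ ε / 2 := by
    by_cases h : ∃ m, K1 + 1 ≤ m ∧ a m ≤ q m
    · obtain ⟨m, hm, hqm⟩ := h
      exact ⟨m, hm, hqm.trans ((hqsmall m (le_trans (Nat.le_succ _) hm)).trans hdivle)⟩
    · push_neg at h
      have hgeo : ∀ j : ℕ, a (K1 + 2 + j) ≤ c ^ j * a (K1 + 2) := by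
        intro j
        induction j with
        | zero => simp
        | succ j hj =>
          have hA : a (K1 + 1 + j + 2) ≤ c * a (K1 + 1 + j + 1) := by
            rcases hcase (K1 + 1 + j) with hA | hB
            · exact hA
            · exact absurd hB (not_le.mpr (h _ (Nat.le_add_right _ _)))
          have e1 : K1 + 1 + j + 2 = K1 + 2 + (j + 1) := by ring
          have e2 : K1 + 1 + j + 1 = K1 + 2 + j := by ring
          rw [e1, e2] at hA
          calc a (K1 + 2 + (j + 1)) ≤ c * a (K1 + 2 + j) := hA
            _ ≤ c * (c ^ j * a (K1 + 2)) := by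
                exact mul_le_mul_of_nonneg_left hj hc0
            _ = c ^ (j + 1) * a (K1 + 2) := by ring
      have hlim : Tendsto (fun j : ℕ => c ^ j * a (K1 + 2)) atTop (nhds 0) := by
        simpa using (tendsto_pow_atTop_nhds_zero_of_lt_one hc0 hc1).mul_const (a (K1 + 2))
      obtain ⟨J, hJ⟩ := Metric.tendsto_atTop.1 hlim (ε / 2) hε2
      have hj := hJ J le_rfl
      rw [Real.dist_eq, sub_zero] at hj
      exact ⟨K1 + 2 + J, by omega,
        le_trans (hgeo J) (le_trans (le_abs_self _) hj.le)⟩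
  obtain ⟨k0, hk0ge, hk0⟩ := claim
  have hinv : ∀ k, k0 ≤ k → a k ≤ ε / 2 := by
    intro k hk
    induction k, hk using Nat.le_induction with
    | base => exact hk0
    | succ k hk ih =>
      -- k ≥ k0 ≥ K1 + 1 ≥ 2, so k = m + 2? no: write k = m + 1 with m ≥ K1
      obtain ⟨m, rfl⟩ : ∃ m, k = m + 1 := ⟨k - 1, by omega⟩
      have hmK1 : K1 ≤ m := by omega
      rcases hcase m with hA | hB
      · calc a (m + 1 + 1) ≤ c * a (m + 1) := hA
          _ ≤ 1 * (ε / 2) := mul_le_mul hc1.le ih (ha _) one_pos.le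
          _ = ε / 2 := by ring
      · -- a m ≤ q m ≤ ε/2/C², and m ≥ 1 so chain two C-steps
        obtain ⟨p, rfl⟩ : ∃ p, m = p + 1 := ⟨m - 1, by omega⟩
        calc a (p + 1 + 2) ≤ C * a (p + 2) := hCstep (p + 1)
          _ ≤ C * (C * a (p + 1)) := mul_le_mul_of_nonneg_left (hCstep p) hC0.le
          _ = C ^ 2 * a (p + 1) := by ring
          _ ≤ C ^ 2 * q (p + 1) := mul_le_mul_of_nonneg_left hB hC2.le
          _ ≤ C ^ 2 * (ε / 2 / C ^ 2) := mul_le_mul_of_nonneg_left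
              (hqsmall (p + 1) hmK1) hC2.le
          _ = ε / 2 := by field_simp
  refine ⟨k0, fun k hk => ?_⟩
  rw [Real.dist_eq, sub_zero, abs_of_nonneg (ha k)]
  exact lt_of_le_of_lt (hinv k hk) (by linarith)

open Finset in
lemma bb_main {n : ℕ} (μ : Fin n → ℝ) (hμ : ∀ i, 0 < μ i)
    (c : ℕ → Fin n → ℝ) (α : ℕ → ℝ)
    (hrec : ∀ k i, c (k + 1) i = (1 - α k * μ i) * c k i)
    (hne : ∀ k, 0 < ∑ j, (c k j) ^ 2)
    (hα : ∀ k, α (k + 1) = (∑ j, (c k j) ^ 2) / (∑ j, μ j * (c k j) ^ 2))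
    (i : Fin n)
    (hlow : ∀ j, μ j < μ i → Tendsto (fun k => c k j) atTop (nhds 0)) :
    Tendsto (fun k => c k i) atTop (nhds 0) := by
  haveI : Nonempty (Fin n) := ⟨i⟩
  set S : ℕ → ℝ := fun k => ∑ j, (c k j) ^ 2 with hSdef
  set W : ℕ → ℝ := fun k => ∑ j, μ j * (c k j) ^ 2 with hWdef
  set lmax : ℝ := univ.sup' univ_nonempty μ with hlmaxdef
  set lmin : ℝ := univ.inf' univ_nonempty μ with hlmindef
  have hlmax : ∀ j, μ j ≤ lmax := fun j => le_sup' μ (mem_univ j)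
  have hlmin : ∀ j, lmin ≤ μ j := fun j => inf'_le μ (mem_univ j)
  have hlmin0 : 0 < lmin := by
    obtain ⟨j, -, hj⟩ := exists_mem_eq_inf' univ_nonempty μ
    have h2 : lmin = μ j := hj
    exact h2 ▸ hμ j
  have hlmax0 : 0 < lmax := lt_of_lt_of_le hlmin0 (le_trans (hlmin i) (hlmax i))
  have hWle : ∀ k, W k ≤ lmax * S k := by
    intro k
    rw [hWdef, hSdef, mul_sum]
    exact sum_le_sum fun j _ => mul_le_mul_of_nonneg_right (hlmax j) (sq_nonneg _)
  have hWge : ∀ k, lmin * S k ≤ W k := by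
    intro k
    rw [hWdef, hSdef, mul_sum]
    exact sum_le_sum fun j _ => mul_le_mul_of_nonneg_right (hlmin j) (sq_nonneg _)
  have hWpos : ∀ k, 0 < W k := fun k =>
    lt_of_lt_of_le (mul_pos hlmin0 (hne k)) (hWge k)
  -- the step factor bounds
  have htpos : ∀ k, 0 < α (k + 1) * μ i := by
    intro k
    rw [hα k]
    exact mul_pos (div_pos (hne k) (hWpos k)) (hμ i)
  have htlow : ∀ k, μ i / lmax ≤ α (k + 1) * μ i := by
    intro k
    rw [hα k]
    have h1 : (1:ℝ) / lmax ≤ S k / W k := by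
      rw [div_le_div_iff₀ hlmax0 (hWpos k)]
      linarith [hWle k]
    calc μ i / lmax = (1 / lmax) * μ i := by ring
      _ ≤ (S k / W k) * μ i := mul_le_mul_of_nonneg_right h1 (hμ i).le
  have hthigh : ∀ k, α (k + 1) * μ i ≤ lmax / lmin := by
    intro k
    rw [hα k]
    have h1 : S k / W k ≤ 1 / lmin := by
      rw [div_le_div_iff₀ (hWpos k) hlmin0]
      linarith [hWge k]
    calc (S k / W k) * μ i ≤ (1 / lmin) * μ i :=
          mul_le_mul_of_nonneg_right h1 (hμ i).le
      _ ≤ (1 / lmin) * lmax := by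
          exact mul_le_mul_of_nonneg_left (hlmax i) (le_of_lt (by exact one_div_pos.mpr hlmin0))
      _ = lmax / lmin := by ring
  set CC : ℝ := 1 + lmax / lmin with hCCdef
  have hCC1 : (1:ℝ) ≤ CC := by
    have h2 : 0 < lmax / lmin := div_pos hlmax0 hlmin0
    simp only [hCCdef]
    linarith
  have hfactorCC : ∀ k, (1 - α (k + 1) * μ i) ^ 2 ≤ CC ^ 2 := by
    intro k
    apply sq_le_sq'
    · have := hthigh k; simp only [hCCdef]; linarith
    · have := htpos k; linarith
  set cA : ℝ := max (1 - μ i / lmax) (1 / 2) with hcAdef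
  have hcA0 : (0:ℝ) ≤ cA := le_trans (by norm_num) (le_max_right _ _)
  have hcA1 : cA < 1 := by
    apply max_lt
    · have : 0 < μ i / lmax := div_pos (hμ i) hlmax0
      linarith
    · norm_num
  set a : ℕ → ℝ := fun k => (c k i) ^ 2 with hadef
  set Slow : ℕ → ℝ := fun k => ∑ j ∈ univ.filter (fun j => μ j < μ i), (c k j) ^ 2
    with hSlowdef
  set q : ℕ → ℝ := fun k => 3 * Slow k with hqdef
  have hSlownn : ∀ k, 0 ≤ Slow k := fun k => sum_nonneg fun j _ => sq_nonneg _
  have hastep : ∀ k, a (k + 2) = (1 - α (k + 1) * μ i) ^ 2 * a (k + 1) := by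
    intro k
    simp only [hadef]
    rw [hrec (k + 1) i, mul_pow]
  -- main case analysis
  have hcase : ∀ k, a (k + 2) ≤ cA ^ 2 * a (k + 1) ∨ a k ≤ q k := by
    intro k
    by_cases hcond : Slow k ≤ S k / 3
    · left
      rw [hastep k]
      apply mul_le_mul_of_nonneg_right _ (sq_nonneg _)
      apply sq_le_sq'
      · -- 1 - t ≥ -cA since t ≤ 3/2 and cA ≥ 1/2
        have hWbig : μ i * (S k - Slow k) ≤ W k := by
          have hsplit : W k = (∑ j ∈ univ.filter (fun j => μ j < μ i), μ j * (c k j) ^ 2)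
              + ∑ j ∈ univ.filter (fun j => ¬ μ j < μ i), μ j * (c k j) ^ 2 :=
            (sum_filter_add_sum_filter_not univ _ _).symm
          have hS2 : S k = Slow k
              + ∑ j ∈ univ.filter (fun j => ¬ μ j < μ i), (c k j) ^ 2 :=
            (sum_filter_add_sum_filter_not univ (fun j => μ j < μ i)
              (fun j => (c k j) ^ 2)).symm
          have h1 : μ i * ∑ j ∈ univ.filter (fun j => ¬ μ j < μ i), (c k j) ^ 2
              ≤ ∑ j ∈ univ.filter (fun j => ¬ μ j < μ i), μ j * (c k j) ^ 2 := by
            rw [mul_sum]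
            refine sum_le_sum fun j hj => ?_
            exact mul_le_mul_of_nonneg_right (not_lt.1 (mem_filter.1 hj).2) (sq_nonneg _)
          have h0 : (0:ℝ) ≤ ∑ j ∈ univ.filter (fun j => μ j < μ i), μ j * (c k j) ^ 2 :=
            sum_nonneg fun j _ => mul_nonneg (hμ j).le (sq_nonneg _)
          have hrw : S k - Slow k
              = ∑ j ∈ univ.filter (fun j => ¬ μ j < μ i), (c k j) ^ 2 := by linarith
          rw [hrw, hsplit]
          linarith
        have hμSlow : μ i * Slow k ≤ μ i * (S k / 3) :=
          mul_le_mul_of_nonneg_left hcond (hμ i).le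
        have hW23 : μ i * S k * (2 / 3) ≤ W k := by nlinarith
        have ht32 : α (k + 1) * μ i ≤ 3 / 2 := by
          rw [hα k, div_mul_eq_mul_div, div_le_iff₀ (hWpos k)]
          nlinarith [hne k, hμ i]
        have hcAhalf : (1:ℝ) / 2 ≤ cA := le_max_right _ _
        linarith
      · have := htlow k
        have h2 : 1 - α (k + 1) * μ i ≤ 1 - μ i / lmax := by linarith
        exact le_trans h2 (le_max_left _ _)
    · right
      push_neg at hcond
      have h1 : a k ≤ S k := by
        rw [hadef, hSdef]
        exact single_le_sum (fun j _ => sq_nonneg (c k j)) (mem_univ i)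
      simp only [hqdef]
      linarith
  -- q tends to 0
  have haq : Tendsto q atTop (nhds 0) := by
    have hSlow : Tendsto Slow atTop (nhds 0) := by
      have hsum := tendsto_finset_sum (univ.filter (fun j => μ j < μ i))
        (f := fun j (k : ℕ) => (c k j) ^ 2) (a := fun _ => (0:ℝ))
        (fun j hj => by simpa using (hlow j (mem_filter.1 hj).2).pow 2)
      simpa [hSlowdef] using hsum
    have := hSlow.const_mul (3:ℝ)
    simpa [hqdef] using this
  have ha0 : ∀ k, 0 ≤ a k := fun k => sq_nonneg _
  have hq0 : ∀ k, 0 ≤ q k := fun k => mul_nonneg (by norm_num) (hSlownn k)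
  have hCstep : ∀ k, a (k + 2) ≤ CC ^ 2 * a (k + 1) := by
    intro k
    rw [hastep k]
    exact mul_le_mul_of_nonneg_right (hfactorCC k) (sq_nonneg _)
  have hCC2 : (1:ℝ) ≤ CC ^ 2 := one_le_pow₀ hCC1
  have hcA2 : cA ^ 2 < 1 := by nlinarith
  have hfin := bb_aux a q ha0 hq0 haq (CC ^ 2) (cA ^ 2) hCC2 (sq_nonneg cA) hcA2
    hCstep hcase
  have habs : Tendsto (fun k => |c k i|) atTop (nhds 0) := by
    have h2 := (Real.continuous_sqrt.tendsto 0).comp hfin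
    simpa [Function.comp_def, hadef, Real.sqrt_sq_eq_abs] using h2
  exact (tendsto_zero_iff_abs_tendsto_zero _).2 habs

open Finset in
lemma bb_coord {n : ℕ} (μ : Fin n → ℝ) (hμ : ∀ i, 0 < μ i)
    (c : ℕ → Fin n → ℝ) (α : ℕ → ℝ)
    (hrec : ∀ k i, c (k + 1) i = (1 - α k * μ i) * c k i)
    (hne : ∀ k, 0 < ∑ j, (c k j) ^ 2)
    (hα : ∀ k, α (k + 1) = (∑ j, (c k j) ^ 2) / (∑ j, μ j * (c k j) ^ 2)) :
    ∀ i, Tendsto (fun k => c k i) atTop (nhds 0) := by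
  have key : ∀ (N : ℕ) (i : Fin n), (univ.filter (fun j => μ j < μ i)).card ≤ N →
      Tendsto (fun k => c k i) atTop (nhds 0) := by
    intro N
    induction N with
    | zero =>
      intro i hcard
      refine bb_main μ hμ c α hrec hne hα i fun j hj => absurd hcard ?_
      have hmem : j ∈ univ.filter (fun l => μ l < μ i) :=
        mem_filter.2 ⟨mem_univ _, hj⟩
      have := card_pos.2 ⟨j, hmem⟩
      omega
    | succ N IH =>
      intro i hcard
      refine bb_main μ hμ c α hrec hne hα i fun j hj => IH j ?_
      have hsub : univ.filter (fun l => μ l < μ j) ⊆ univ.filter (fun l => μ l < μ i) :=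
        fun l hl => mem_filter.2 ⟨mem_univ _, lt_trans (mem_filter.1 hl).2 hj⟩
      have hns : ¬ univ.filter (fun l => μ l < μ i) ⊆ univ.filter (fun l => μ l < μ j) := by
        intro hts
        have := (mem_filter.1 (hts (mem_filter.2 ⟨mem_univ j, hj⟩))).2
        exact lt_irrefl _ this
      have hlt := card_lt_card (Finset.ssubset_iff_subset_ne.mpr
        ⟨hsub, fun he => hns (he ▸ subset_rfl)⟩)
      omega
  exact fun i => key _ i le_rfl

open Finset in
/-- Global convergence of the long Barzilai–Borwein gradient method on a
strongly convex quadratic `f(x) = (1/2)xᵀHx + bᵀx`, with gradient `G(x) = Hx + b` and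
unique minimizer `x* = -H⁻¹b` (characterized by `Hx* = -b`). -/
theorem stmt_2 {n : ℕ} (hn : 1 ≤ n)
    (H : Matrix (Fin n) (Fin n) ℝ) (hH : H.PosDef)
    (b : EuclideanSpace ℝ (Fin n))
    (f : EuclideanSpace ℝ (Fin n) → ℝ)
    (hf : ∀ x, f x = (1 / 2) * ⟪x, Matrix.toEuclideanLin H x⟫ + ⟪b, x⟫)
    (G : EuclideanSpace ℝ (Fin n) → EuclideanSpace ℝ (Fin n))
    (hG : ∀ x, G x = Matrix.toEuclideanLin H x + b)
    (xs : EuclideanSpace ℝ (Fin n)) (hxs : Matrix.toEuclideanLin H xs = -b)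
    (x : ℕ → EuclideanSpace ℝ (Fin n)) (α : ℕ → ℝ)
    (hα0 : 0 < α 0)
    (hGk : ∀ k, G (x k) ≠ 0)
    (hstep : ∀ k, x (k + 1) = x k - α k • G (x k))
    (hBB : ∀ k, α (k + 1) =
      ⟪x (k + 1) - x k, x (k + 1) - x k⟫ / ⟪x (k + 1) - x k, G (x (k + 1)) - G (x k)⟫) :
    Tendsto x atTop (nhds xs) := by
  have hHerm : H.IsHermitian := hH.1
  set T : EuclideanSpace ℝ (Fin n) →ₗ[ℝ] EuclideanSpace ℝ (Fin n) :=
    Matrix.toEuclideanLin H with hTdef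
  set μ : Fin n → ℝ := hHerm.eigenvalues with hμdef
  set B := hHerm.eigenvectorBasis with hBdef
  have hμpos : ∀ i, 0 < μ i := fun i => hH.eigenvalues_pos i
  -- T is self-adjoint
  have hadj : T.adjoint = T := by
    rw [hTdef, ← Matrix.toEuclideanLin_conjTranspose_eq_adjoint, hHerm.eq]
  have hsymm : ∀ u v : EuclideanSpace ℝ (Fin n), ⟪T u, v⟫ = ⟪u, T v⟫ := by
    intro u v
    conv_rhs => rw [← hadj]
    rw [LinearMap.adjoint_inner_right]
  -- eigen relation
  have hTB : ∀ j, T (B j) = μ j • B j := by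
    intro j
    apply (WithLp.equiv 2 (Fin n → ℝ)).injective
    simp only [hTdef, Matrix.toEuclideanLin_apply, Equiv.apply_symm_apply]
    have := hHerm.mulVec_eigenvectorBasis j
    simpa using this
  -- coefficients
  have crepr : ∀ (v : EuclideanSpace ℝ (Fin n)) j, B.repr (T v) j = μ j * B.repr v j := by
    intro v j
    rw [B.repr_apply_apply, B.repr_apply_apply, ← hsymm, hTB j, real_inner_smul_left]
  have hinner : ∀ v w : EuclideanSpace ℝ (Fin n),
      ⟪v, w⟫ = ∑ j, B.repr v j * B.repr w j := by
    intro v w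
    rw [← B.repr.inner_map_map v w, PiLp.inner_apply]
    simp [RCLike.inner_apply, conj_trivial]
    exact sum_congr rfl fun j _ => mul_comm _ _
  -- positivity of the quadratic form
  have hselfpos : ∀ v : EuclideanSpace ℝ (Fin n), v ≠ 0 → 0 < ⟪v, v⟫ := by
    intro v hv
    rcases lt_or_eq_of_le (real_inner_self_nonneg (x := v)) with h | h
    · exact h
    · exact absurd (real_inner_self_nonpos.1 (le_of_eq h.symm)) hv
  have hpos : ∀ v : EuclideanSpace ℝ (Fin n), v ≠ 0 → 0 < ⟪v, T v⟫ := by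
    intro v hv
    have hIPv : ⟪v, T v⟫ = ∑ j, μ j * (B.repr v j) ^ 2 := by
      rw [hinner]
      exact sum_congr rfl fun j _ => by rw [crepr]; ring
    rw [hIPv]
    have hex : ∃ j, B.repr v j ≠ 0 := by
      by_contra hall
      push_neg at hall
      apply hv
      have hz : B.repr v = 0 := by
        ext j
        simpa using hall j
      simpa using (B.repr.map_eq_zero_iff).1 hz
    obtain ⟨j, hj⟩ := hex
    refine sum_pos' (fun l _ => mul_nonneg (hμpos l).le (sq_nonneg _))
      ⟨j, mem_univ j, mul_pos (hμpos j) (by positivity)⟩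
  -- gradient sequence and coefficients
  set g : ℕ → EuclideanSpace ℝ (Fin n) := fun k => G (x k) with hgdef
  set cc : ℕ → Fin n → ℝ := fun k j => B.repr (g k) j with hccdef
  have hgrec : ∀ k, g (k + 1) = g k - α k • T (g k) := by
    intro k
    show G (x (k + 1)) = G (x k) - α k • T (G (x k))
    simp only [hstep k, hG, map_sub, map_smul]
    abel
  have hcrec : ∀ k j, cc (k + 1) j = (1 - α k * μ j) * cc k j := by
    intro k j
    show B.repr (g (k + 1)) j = (1 - α k * μ j) * B.repr (g k) j
    rw [hgrec k, map_sub, map_smul]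
    simp only [PiLp.sub_apply, PiLp.smul_apply, smul_eq_mul, crepr]
    ring
  have hIP : ∀ k, ⟪g k, g k⟫ = ∑ j, (cc k j) ^ 2 := by
    intro k
    rw [hinner (g k) (g k)]
    exact sum_congr rfl fun j _ => (sq (cc k j)).symm
  have hWIP : ∀ k, ⟪g k, T (g k)⟫ = ∑ j, μ j * (cc k j) ^ 2 := by
    intro k
    rw [hinner]
    exact sum_congr rfl fun j _ => by rw [crepr]; ring
  have hSpos : ∀ k, 0 < ∑ j, (cc k j) ^ 2 := by
    intro k
    rw [← hIP k]
    exact hselfpos _ (hGk k)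
  have hTgpos : ∀ k, 0 < ⟪g k, T (g k)⟫ := fun k => hpos (g k) (hGk k)
  -- step and BB quotient computations
  have hs : ∀ k, x (k + 1) - x k = -(α k • g k) := by
    intro k
    rw [hstep k]
    show x k - α k • g k - x k = _
    abel
  have hy : ∀ k, G (x (k + 1)) - G (x k) = T (x (k + 1) - x k) := by
    intro k
    rw [hG, hG, map_sub]
    abel
  have hnum : ∀ k, ⟪x (k + 1) - x k, x (k + 1) - x k⟫ = α k ^ 2 * ⟪g k, g k⟫ := by
    intro k
    rw [hs k, inner_neg_neg, real_inner_smul_left, real_inner_smul_right]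
    ring
  have hden : ∀ k, ⟪x (k + 1) - x k, G (x (k + 1)) - G (x k)⟫
      = α k ^ 2 * ⟪g k, T (g k)⟫ := by
    intro k
    rw [hy k, hs k, map_neg, map_smul, inner_neg_neg, real_inner_smul_left,
      real_inner_smul_right]
    ring
  have hαpos : ∀ k, 0 < α k := by
    intro k
    induction k with
    | zero => exact hα0
    | succ k ih =>
      rw [hBB k, hnum k, hden k]
      exact div_pos (mul_pos (pow_pos ih 2) (hselfpos _ (hGk k)))
        (mul_pos (pow_pos ih 2) (hTgpos k))
  have hαf : ∀ k, α (k + 1) = (∑ j, (cc k j) ^ 2) / (∑ j, μ j * (cc k j) ^ 2) := by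
    intro k
    rw [hBB k, hnum k, hden k, mul_div_mul_left _ _ (pow_ne_zero 2 (hαpos k).ne'),
      hIP k, hWIP k]
  -- coordinates tend to zero
  have hcc := bb_coord μ hμpos cc α hcrec hSpos hαf
  have hgtend : Tendsto g atTop (nhds 0) := by
    have hsum : ∀ k, g k = ∑ j, cc k j • B j := fun k => (B.sum_repr (g k)).symm
    have h2 : Tendsto (fun k => ∑ j, cc k j • B j) atTop (nhds 0) := by
      have h3 := tendsto_finset_sum (univ : Finset (Fin n))
        (f := fun j (k : ℕ) => cc k j • B j) (a := fun j => (0:ℝ) • B j)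
        (fun j _ => (hcc j).smul_const (B j))
      simpa using h3
    exact h2.congr fun k => (hsum k).symm
  -- invert T
  have hinj : Function.Injective T := by
    intro u v huv
    by_contra hne'
    have h0 : u - v ≠ 0 := sub_ne_zero.2 hne'
    have h1 := hpos (u - v) h0
    rw [map_sub, huv, sub_self, inner_zero_right] at h1
    exact lt_irrefl _ h1
  have hsurj := LinearMap.injective_iff_surjective.1 hinj
  set e := LinearEquiv.ofBijective T ⟨hinj, hsurj⟩ with hedef
  have hconv : ∀ k, x k - xs = e.symm (g k) := by
    intro k
    have hT : T (x k - xs) = g k := by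
      rw [map_sub, hxs]
      show T (x k) - -b = G (x k)
      rw [hG, sub_neg_eq_add]
    rw [← hT]
    exact (e.symm_apply_apply _).symm
  have hcont : Continuous (e.symm : EuclideanSpace ℝ (Fin n) →ₗ[ℝ] EuclideanSpace ℝ (Fin n)) :=
    LinearMap.continuous_of_finiteDimensional _
  have hx0 : Tendsto (fun k => x k - xs) atTop (nhds 0) := by
    have h3 : Tendsto (fun k => e.symm (g k)) atTop (nhds (e.symm 0)) :=
      (hcont.tendsto 0).comp hgtend
    rw [map_zero] at h3
    exact h3.congr fun k => (hconv k).symm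
  exact tendsto_sub_nhds_zero_iff.1 hx0
end

section
/- Let n ≥ 1, H ∈ ℝ^{n×n} be symmetric positive definite, b ∈ ℝⁿ, f(x) = (1/2)xᵀHx + bᵀx with gradient G(x) = Hx + b, unique minimizer x* = −H⁻¹b, and condition number κ = λ_max(H)/λ_min(H). Let x₀ ∈ ℝⁿ, α₀ > 0, and define x_{k+1} = x_k − α_k G(x_k) where for k ≥ 1 the step is the long Barzilai–Borwein step α_k = (s_{k−1}ᵀ s_{k−1})/(s_{k−1}ᵀ y_{k−1}) with s_{k−1} = x_k − x_{k−1}, y_{k−1} = G(x_k) − G(x_{k−1}). If G(x_k) ≠ 0 for all k, then the convergence is at least R-linear with rate 1 − 1/κ: there exists a constant C > 0 such that ‖x_k − x*‖ ≤ C (1 − 1/κ)^k for all k ≥ 0. -/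
open scoped RealInnerProductSpace


open Finset in
theorem bb_core {n : ℕ} (lam : Fin n → ℝ) (lmin lmax : ℝ)
    (hml : ∀ i, lmin ≤ lam i) (hmu : ∀ i, lam i ≤ lmax)
    (h0 : 0 < lmin) (hlt : lmin < lmax)
    (c : ℕ → Fin n → ℝ) (a : ℕ → ℝ)
    (hrec : ∀ k i, c (k + 1) i = (1 - a k * lam i) * c k i)
    (ha : ∀ k, a (k + 1) = (∑ i, c k i ^ 2) / (∑ i, lam i * c k i ^ 2))
    (hg : ∀ k, ∃ i, c k i ≠ 0) :
    ∃ C : ℝ, 0 < C ∧ ∀ k, Real.sqrt (∑ i, c k i ^ 2) ≤ C * (1 - lmin / lmax) ^ k := by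
  have hmax0 : 0 < lmax := lt_trans h0 hlt
  set θ : ℝ := 1 - lmin / lmax with hθdef
  have hθ0 : 0 < θ := by
    have : lmin / lmax < 1 := (div_lt_one hmax0).2 hlt
    simp [hθdef]; linarith
  have hθ1 : θ < 1 := by
    have : 0 < lmin / lmax := div_pos h0 hmax0
    simp [hθdef]; linarith
  set K : ℝ := lmax / lmin - 1 with hKdef
  have hK0 : 0 < K := by
    have : 1 < lmax / lmin := (one_lt_div h0).2 hlt
    simp [hKdef]; linarith
  have hθK : θ ≤ K := by
    show 1 - lmin / lmax ≤ lmax / lmin - 1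
    have h1 : lmin / lmax ≤ 1 := le_of_lt ((div_lt_one hmax0).2 hlt)
    have h2 : 1 ≤ lmax / lmin := le_of_lt ((one_lt_div h0).2 hlt)
    have huv : (lmin / lmax) * (lmax / lmin) = 1 := by
      field_simp
    nlinarith [sq_nonneg (lmin / lmax - 1), div_pos h0 hmax0]
  -- basic sums
  set N : ℕ → ℝ := fun k => ∑ i, c k i ^ 2 with hNdef
  set D : ℕ → ℝ := fun k => ∑ i, lam i * c k i ^ 2 with hDdef
  have hNpos : ∀ k, 0 < N k := by
    intro k
    obtain ⟨i, hi⟩ := hg k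
    exact Finset.sum_pos' (fun j _ => sq_nonneg _)
      ⟨i, Finset.mem_univ i, by positivity⟩
  have hDlb : ∀ k, lmin * N k ≤ D k := by
    intro k
    rw [hNdef, hDdef]
    simp only
    rw [Finset.mul_sum]
    exact Finset.sum_le_sum fun i _ =>
      mul_le_mul_of_nonneg_right (hml i) (sq_nonneg _)
  have hDub : ∀ k, D k ≤ lmax * N k := by
    intro k
    rw [hNdef, hDdef]
    simp only
    rw [Finset.mul_sum]
    exact Finset.sum_le_sum fun i _ =>
      mul_le_mul_of_nonneg_right (hmu i) (sq_nonneg _)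
  have hDpos : ∀ k, 0 < D k := fun k =>
    lt_of_lt_of_le (mul_pos h0 (hNpos k)) (hDlb k)
  have hapos : ∀ k, 0 < a (k + 1) := fun k => by
    rw [ha k]; exact div_pos (hNpos k) (hDpos k)
  -- factor bounds
  have hA1 : ∀ k i, 1 - a (k + 1) * lam i ≤ θ := by
    intro k i
    have hlam : 0 < lam i := lt_of_lt_of_le h0 (hml i)
    have h1 : lmin / lmax ≤ a (k + 1) * lam i := by
      rw [ha k, div_mul_eq_mul_div, le_div_iff₀ (hDpos k)]
      calc lmin / lmax * D k ≤ lmin / lmax * (lmax * N k) := by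
            exact mul_le_mul_of_nonneg_left (hDub k) (le_of_lt (div_pos h0 hmax0))
        _ = lmin * N k := by field_simp
        _ ≤ lam i * N k := mul_le_mul_of_nonneg_right (hml i) (le_of_lt (hNpos k))
        _ = N k * lam i := mul_comm _ _
    rw [hθdef]; linarith
  have hA2 : ∀ k i, a (k + 1) * lam i - 1 ≤ K := by
    intro k i
    have h1 : a (k + 1) * lam i ≤ lmax / lmin := by
      rw [ha k, div_mul_eq_mul_div, div_le_div_iff₀ (hDpos k) h0]
      calc N k * lam i * lmin ≤ N k * lmax * lmin :=
            mul_le_mul_of_nonneg_right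
              (mul_le_mul_of_nonneg_left (hmu i) (le_of_lt (hNpos k))) (le_of_lt h0)
        _ = lmax * (lmin * N k) := by ring
        _ ≤ lmax * D k := mul_le_mul_of_nonneg_left (hDlb k) (le_of_lt hmax0)
    rw [hKdef]; linarith
  have habs : ∀ k i, |1 - a (k + 1) * lam i| ≤ K := by
    intro k i
    rw [abs_le]
    constructor
    · linarith [hA2 k i]
    · linarith [hA1 k i, hθK]
  -- growth of norms
  have hgrow : ∀ k, N (k + 2) ≤ K ^ 2 * N (k + 1) := by
    intro k
    rw [hNdef]
    simp only
    rw [Finset.mul_sum]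
    refine Finset.sum_le_sum fun i _ => ?_
    rw [hrec (k + 1) i, mul_pow]
    have h2 : (1 - a (k + 1) * lam i) ^ 2 ≤ K ^ 2 := by
      have := habs k i
      nlinarith [abs_nonneg (1 - a (k + 1) * lam i), sq_abs (1 - a (k + 1) * lam i)]
    nlinarith [sq_nonneg (c (k + 1) i)]
  -- conditional sharp bound
  set ε : ℝ := θ / (1 + θ) with hεdef
  have hε0 : 0 < ε := div_pos hθ0 (by linarith)
  have hε1 : (1 + θ) * (1 - ε) = 1 := by
    rw [hεdef]; field_simp; ring
  have hA3 : ∀ k i,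
      (∑ j ∈ Finset.univ.filter (fun j => lam j < lam i), c k j ^ 2) ≤ ε * N k →
      a (k + 1) * lam i - 1 ≤ θ := by
    intro k i hQ
    have hlam : 0 < lam i := lt_of_lt_of_le h0 (hml i)
    set Q : ℝ := ∑ j ∈ Finset.univ.filter (fun j => lam j < lam i), c k j ^ 2 with hQdef
    set R : ℝ := ∑ j ∈ Finset.univ.filter (fun j => ¬ lam j < lam i), c k j ^ 2 with hRdef
    have hsplit : Q + R = N k := by
      rw [hQdef, hRdef, hNdef]
      exact Finset.sum_filter_add_sum_filter_not _ _ _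
    have hDR : lam i * R ≤ D k := by
      have h1 : lam i * R ≤ ∑ j ∈ Finset.univ.filter (fun j => ¬ lam j < lam i),
          lam j * c k j ^ 2 := by
        rw [hRdef, Finset.mul_sum]
        refine Finset.sum_le_sum fun j hj => ?_
        have := (Finset.mem_filter.1 hj).2
        exact mul_le_mul_of_nonneg_right (not_lt.1 this) (sq_nonneg _)
      refine le_trans h1 ?_
      rw [hDdef]
      exact Finset.sum_le_sum_of_subset_of_nonneg (Finset.filter_subset _ _)
        (fun j _ _ => mul_nonneg (le_of_lt (lt_of_lt_of_le h0 (hml j))) (sq_nonneg _))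
    have hRlb : (1 - ε) * N k ≤ R := by linarith
    have hkey : N k * lam i ≤ (1 + θ) * D k := by
      calc N k * lam i = lam i * ((1 + θ) * ((1 - ε) * N k)) := by
            rw [show (1 + θ) * ((1 - ε) * N k) = ((1 + θ) * (1 - ε)) * N k by ring, hε1]
            ring
        _ ≤ lam i * ((1 + θ) * R) := by
            have h1θ : (0:ℝ) ≤ 1 + θ := by linarith
            exact mul_le_mul_of_nonneg_left
              (mul_le_mul_of_nonneg_left hRlb h1θ) (le_of_lt hlam)
        _ = (1 + θ) * (lam i * R) := by ring
        _ ≤ (1 + θ) * D k := by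
            have h1θ : (0:ℝ) ≤ 1 + θ := by linarith
            exact mul_le_mul_of_nonneg_left hDR h1θ
    have : a (k + 1) * lam i ≤ 1 + θ := by
      rw [ha k, div_mul_eq_mul_div, div_le_iff₀ (hDpos k)]
      calc (N k) * lam i ≤ (1 + θ) * D k := hkey
        _ = (1 + θ) * D k := rfl
    linarith
  -- |c k i| ≤ sqrt (N k)
  have hcN : ∀ k i, |c k i| ≤ Real.sqrt (N k) := by
    intro k i
    rw [← Real.sqrt_sq_eq_abs]
    apply Real.sqrt_le_sqrt
    rw [hNdef]
    exact Finset.single_le_sum (fun j _ => sq_nonneg (c k j)) (Finset.mem_univ i)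
  have hsqrtgrow : ∀ k, Real.sqrt (N (k + 2)) ≤ K * Real.sqrt (N (k + 1)) := by
    intro k
    have h1 : Real.sqrt (N (k + 2)) ≤ Real.sqrt (K ^ 2 * N (k + 1)) :=
      Real.sqrt_le_sqrt (hgrow k)
    rw [Real.sqrt_mul (sq_nonneg K), Real.sqrt_sq (le_of_lt hK0)] at h1
    exact h1
  have hgrow2 : ∀ k, 1 ≤ k → Real.sqrt (N (k + 2)) ≤ K ^ 2 * Real.sqrt (N k) := by
    intro k hk
    have h1 := hsqrtgrow k
    have h2 : Real.sqrt (N (k + 1)) ≤ K * Real.sqrt (N k) := by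
      obtain ⟨m, rfl⟩ : ∃ m, k = m + 1 := ⟨k - 1, by omega⟩
      exact hsqrtgrow m
    calc Real.sqrt (N (k + 2)) ≤ K * Real.sqrt (N (k + 1)) := h1
      _ ≤ K * (K * Real.sqrt (N k)) := mul_le_mul_of_nonneg_left h2 (le_of_lt hK0)
      _ = K ^ 2 * Real.sqrt (N k) := by ring
  -- main per-index claim by strong induction on the number of smaller eigenvalues
  have main : ∀ m : ℕ, ∀ i : Fin n,
      (Finset.univ.filter fun j => lam j < lam i).card = m →
      ∃ C : ℝ, 0 < C ∧ ∀ k, |c k i| ≤ C * θ ^ k := by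
    intro m
    induction m using Nat.strong_induction_on with
    | _ m ih =>
      intro i him
      have hsub : ∀ j : Fin n, lam j < lam i →
          (Finset.univ.filter fun l => lam l < lam j).card < m := by
        intro j hj
        rw [← him]
        apply Finset.card_lt_card
        rw [Finset.ssubset_iff_of_subset]
        · exact ⟨j, Finset.mem_filter.2 ⟨Finset.mem_univ j, hj⟩,
            fun hmem => (lt_irrefl _ (Finset.mem_filter.1 hmem).2)⟩
        · intro l hl
          have := (Finset.mem_filter.1 hl).2
          exact Finset.mem_filter.2 ⟨Finset.mem_univ l, lt_trans this hj⟩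
      have hprev : ∀ j : Fin n, ∃ Cj : ℝ, 0 < Cj ∧
          (lam j < lam i → ∀ k, |c k j| ≤ Cj * θ ^ k) := by
        intro j
        by_cases hj : lam j < lam i
        · obtain ⟨Cj, hCj0, hCjb⟩ := ih _ (hsub j hj) j rfl
          exact ⟨Cj, hCj0, fun _ => hCjb⟩
        · exact ⟨1, one_pos, fun h => absurd h hj⟩
      choose Cf hCf0 hCf using hprev
      set Dn : ℝ := (∑ j ∈ Finset.univ.filter fun j => lam j < lam i, Cf j ^ 2) + 1
        with hDndef
      have hDn0 : 0 < Dn := by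
        rw [hDndef]
        have : (0:ℝ) ≤ ∑ j ∈ Finset.univ.filter fun j => lam j < lam i, Cf j ^ 2 :=
          Finset.sum_nonneg fun j _ => sq_nonneg _
        linarith
      have hQb : ∀ k, (∑ j ∈ Finset.univ.filter fun j => lam j < lam i, c k j ^ 2)
          ≤ Dn * (θ ^ k) ^ 2 := by
        intro k
        have h1 : (∑ j ∈ Finset.univ.filter fun j => lam j < lam i, c k j ^ 2)
            ≤ ∑ j ∈ Finset.univ.filter fun j => lam j < lam i, Cf j ^ 2 * (θ ^ k) ^ 2 := by
          refine Finset.sum_le_sum fun j hj => ?_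
          have hj' := (Finset.mem_filter.1 hj).2
          have hb := hCf j hj' k
          calc c k j ^ 2 = |c k j| ^ 2 := (sq_abs _).symm
            _ ≤ (Cf j * θ ^ k) ^ 2 := by
                apply pow_le_pow_left₀ (abs_nonneg _) hb
            _ = Cf j ^ 2 * (θ ^ k) ^ 2 := by ring
        rw [← Finset.sum_mul] at h1
        refine le_trans h1 ?_
        apply mul_le_mul_of_nonneg_right _ (sq_nonneg _)
        rw [hDndef]; linarith
      set M : ℝ := K ^ 2 * Real.sqrt (Dn / ε) with hMdef
      have hM0 : 0 < M := by
        rw [hMdef]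
        exact mul_pos (pow_pos hK0 2) (Real.sqrt_pos.2 (div_pos hDn0 hε0))
      set C : ℝ := max (|c 0 i| + 1) (max ((|c 1 i| + 1) / θ)
        (max ((|c 2 i| + 1) / θ ^ 2) (M / θ ^ 2 + 1))) with hCdef
      have hC0 : 0 < C := by
        have : (0:ℝ) < |c 0 i| + 1 := by positivity
        exact lt_of_lt_of_le this (le_max_left _ _)
      refine ⟨C, hC0, ?_⟩
      have S0 : |c 0 i| ≤ C * θ ^ 0 := by
        rw [pow_zero, mul_one]
        exact le_trans (by linarith) (le_max_left _ _)
      have S1 : |c 1 i| ≤ C * θ ^ 1 := by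
        have h1 : (|c 1 i| + 1) / θ ≤ C :=
          le_trans (le_max_left _ _) (le_max_right _ _)
        rw [div_le_iff₀ hθ0] at h1
        rw [pow_one]; linarith
      have S2 : |c 2 i| ≤ C * θ ^ 2 := by
        have h1 : (|c 2 i| + 1) / θ ^ 2 ≤ C :=
          le_trans (le_trans (le_max_left _ _) (le_max_right _ _)) (le_max_right _ _)
        rw [div_le_iff₀ (pow_pos hθ0 2)] at h1
        linarith
      have hMC : M / θ ^ 2 + 1 ≤ C :=
        le_trans (le_trans (le_max_right _ _) (le_max_right _ _)) (le_max_right _ _)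
      have step : ∀ k, 1 ≤ k → |c (k + 1) i| ≤ C * θ ^ (k + 1) →
          |c (k + 2) i| ≤ C * θ ^ (k + 2) := by
        intro k hk1 ihk
        by_cases hcase : (∑ j ∈ Finset.univ.filter fun j => lam j < lam i, c k j ^ 2)
            ≤ ε * N k
        · -- good step size for this component
          have hf : |1 - a (k + 1) * lam i| ≤ θ := by
            rw [abs_le]
            exact ⟨by linarith [hA3 k i hcase], hA1 k i⟩
          have heq : |c (k + 2) i| = |1 - a (k + 1) * lam i| * |c (k + 1) i| := by
            rw [show k + 2 = (k + 1) + 1 by ring, hrec (k + 1) i, abs_mul]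
          rw [heq]
          calc |1 - a (k + 1) * lam i| * |c (k + 1) i| ≤ θ * (C * θ ^ (k + 1)) :=
                mul_le_mul hf ihk (abs_nonneg _) (le_of_lt hθ0)
            _ = C * θ ^ (k + 2) := by ring
        · -- the whole gradient is already tiny
          push_neg at hcase
          have hNk : N k ≤ Dn / ε * (θ ^ k) ^ 2 := by
            rw [div_mul_eq_mul_div, le_div_iff₀ hε0]
            calc N k * ε = ε * N k := mul_comm _ _
              _ ≤ (∑ j ∈ Finset.univ.filter fun j => lam j < lam i, c k j ^ 2) :=
                  le_of_lt hcase
              _ ≤ Dn * (θ ^ k) ^ 2 := hQb k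
          have hsN : Real.sqrt (N k) ≤ Real.sqrt (Dn / ε) * θ ^ k := by
            calc Real.sqrt (N k) ≤ Real.sqrt (Dn / ε * (θ ^ k) ^ 2) :=
                  Real.sqrt_le_sqrt hNk
              _ = Real.sqrt (Dn / ε) * θ ^ k := by
                  rw [Real.sqrt_mul (le_of_lt (div_pos hDn0 hε0)),
                    Real.sqrt_sq (le_of_lt (pow_pos hθ0 k))]
          calc |c (k + 2) i| ≤ Real.sqrt (N (k + 2)) := hcN (k + 2) i
            _ ≤ K ^ 2 * Real.sqrt (N k) := hgrow2 k hk1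
            _ ≤ K ^ 2 * (Real.sqrt (Dn / ε) * θ ^ k) :=
                mul_le_mul_of_nonneg_left hsN (le_of_lt (pow_pos hK0 2))
            _ = M / θ ^ 2 * θ ^ (k + 2) := by
                rw [hMdef]
                field_simp
                ring
            _ ≤ C * θ ^ (k + 2) :=
                mul_le_mul_of_nonneg_right (by linarith)
                  (le_of_lt (pow_pos hθ0 (k + 2)))
      have all2 : ∀ k, |c (k + 2) i| ≤ C * θ ^ (k + 2) := by
        intro k
        induction k with
        | zero => exact S2
        | succ m ihm => exact step (m + 1) (by omega) ihm
      intro k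
      match k with
      | 0 => exact S0
      | 1 => exact S1
      | (m + 2) => exact all2 m
  have PAll : ∀ i : Fin n, ∃ C : ℝ, 0 < C ∧ ∀ k, |c k i| ≤ C * θ ^ k :=
    fun i => main _ i rfl
  choose CF hCF0 hCF using PAll
  refine ⟨Real.sqrt (∑ j, CF j ^ 2) + 1, by positivity, ?_⟩
  intro k
  have h1 : (∑ i, c k i ^ 2) ≤ (∑ j, CF j ^ 2) * (θ ^ k) ^ 2 := by
    rw [Finset.sum_mul]
    refine Finset.sum_le_sum fun j _ => ?_
    calc c k j ^ 2 = |c k j| ^ 2 := (sq_abs _).symm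
      _ ≤ (CF j * θ ^ k) ^ 2 := pow_le_pow_left₀ (abs_nonneg _) (hCF j k) 2
      _ = CF j ^ 2 * (θ ^ k) ^ 2 := by ring
  have hs : (0:ℝ) ≤ ∑ j, CF j ^ 2 := Finset.sum_nonneg fun j _ => sq_nonneg _
  calc Real.sqrt (∑ i, c k i ^ 2) ≤ Real.sqrt ((∑ j, CF j ^ 2) * (θ ^ k) ^ 2) :=
        Real.sqrt_le_sqrt h1
    _ = Real.sqrt (∑ j, CF j ^ 2) * θ ^ k := by
        rw [Real.sqrt_mul hs, Real.sqrt_sq (le_of_lt (pow_pos hθ0 k))]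
    _ ≤ (Real.sqrt (∑ j, CF j ^ 2) + 1) * θ ^ k :=
        mul_le_mul_of_nonneg_right (by linarith) (le_of_lt (pow_pos hθ0 k))

/-- R-linear convergence of the long Barzilai–Borwein gradient method on a
strongly convex quadratic with rate `1 - 1/κ`, `κ = λ_max(H)/λ_min(H)`. -/
theorem stmt_3 {n : ℕ} (hn : 1 ≤ n)
    (H : Matrix (Fin n) (Fin n) ℝ) (hH : H.PosDef)
    (b : EuclideanSpace ℝ (Fin n))
    (f : EuclideanSpace ℝ (Fin n) → ℝ)
    (hf : ∀ x, f x = (1 / 2) * ⟪x, Matrix.toEuclideanLin H x⟫ + ⟪b, x⟫)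
    (G : EuclideanSpace ℝ (Fin n) → EuclideanSpace ℝ (Fin n))
    (hG : ∀ x, G x = Matrix.toEuclideanLin H x + b)
    (xs : EuclideanSpace ℝ (Fin n)) (hxs : Matrix.toEuclideanLin H xs = -b)
    (κ : ℝ) (hκ : κ = (⨆ i, hH.1.eigenvalues i) / (⨅ i, hH.1.eigenvalues i))
    (x : ℕ → EuclideanSpace ℝ (Fin n)) (α : ℕ → ℝ)
    (hα0 : 0 < α 0)
    (hGk : ∀ k, G (x k) ≠ 0)
    (hstep : ∀ k, x (k + 1) = x k - α k • G (x k))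
    (hBB : ∀ k, α (k + 1) =
      ⟪x (k + 1) - x k, x (k + 1) - x k⟫ / ⟪x (k + 1) - x k, G (x (k + 1)) - G (x k)⟫) :
    ∃ C : ℝ, 0 < C ∧ ∀ k : ℕ, ‖x k - xs‖ ≤ C * (1 - 1 / κ) ^ k := by
  classical
  haveI : Nonempty (Fin n) := ⟨⟨0, hn⟩⟩
  set T := Matrix.toEuclideanLin H with hT
  set ev := hH.1.eigenvalues with hev
  have hevpos : ∀ i, 0 < ev i := fun i => hH.eigenvalues_pos i
  set lmin := ⨅ i, ev i with hlmin
  set lmax := ⨆ i, ev i with hlmax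
  have hml : ∀ i, lmin ≤ ev i := fun i =>
    ciInf_le (Set.Finite.bddBelow (Set.finite_range ev)) i
  have hmu : ∀ i, ev i ≤ lmax := fun i =>
    le_ciSup (Set.Finite.bddAbove (Set.finite_range ev)) i
  obtain ⟨i0, hi0⟩ := exists_eq_ciInf_of_finite (f := ev)
  have h0 : 0 < lmin := by rw [hlmin, ← hi0]; exact hevpos i0
  have hsymm : ∀ v w : EuclideanSpace ℝ (Fin n), ⟪T v, w⟫ = ⟪v, T w⟫ :=
    (Matrix.isHermitian_iff_isSymmetric.1 hH.1)
  set V := hH.1.eigenvectorBasis with hV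
  have hTV : ∀ i, T (V i) = ev i • V i := by
    intro i
    have h := hH.1.mulVec_eigenvectorBasis i
    ext j
    exact congrFun h j
  have reprT : ∀ (v : EuclideanSpace ℝ (Fin n)) (i), V.repr (T v) i = ev i * V.repr v i := by
    intro v i
    rw [V.repr_apply_apply, V.repr_apply_apply, ← hsymm, hTV i, real_inner_smul_left]
  have hinner : ∀ v w : EuclideanSpace ℝ (Fin n),
      ⟪v, w⟫ = ∑ i, V.repr v i * V.repr w i := by
    intro v w
    rw [← LinearIsometryEquiv.inner_map_map V.repr v w]
    simp only [PiLp.inner_apply, RCLike.inner_apply, conj_trivial]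
    exact Finset.sum_congr rfl fun i _ => mul_comm _ _
  have hinnorm : ∀ v : EuclideanSpace ℝ (Fin n), ⟪v, v⟫ = ∑ i, V.repr v i ^ 2 := by
    intro v
    rw [hinner v v]
    exact Finset.sum_congr rfl fun i _ => (sq (V.repr v i)).symm
  have hTq : ∀ v : EuclideanSpace ℝ (Fin n), ⟪v, T v⟫ = ∑ i, ev i * V.repr v i ^ 2 := by
    intro v
    rw [hinner v (T v)]
    refine Finset.sum_congr rfl fun i _ => ?_
    rw [reprT]
    ring
  -- coordinates of the gradient
  set c : ℕ → Fin n → ℝ := fun k i => V.repr (G (x k)) i with hc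
  have hgrec : ∀ k, G (x (k + 1)) = G (x k) - α k • T (G (x k)) := by
    intro k
    rw [hG (x (k + 1)), hstep k, map_sub, map_smul, hG (x k), map_add]
    have hb' : T b = T b := rfl
    module
  have hcrec : ∀ k i, c (k + 1) i = (1 - α k * ev i) * c k i := by
    intro k i
    show V.repr (G (x (k + 1))) i = _
    rw [hgrec k, map_sub, map_smul]
    rw [PiLp.sub_apply, PiLp.smul_apply, reprT]
    show V.repr (G (x k)) i - α k * (ev i * V.repr (G (x k)) i) = _
    ring
  have hTs : ∀ k, G (x (k + 1)) - G (x k) = T (x (k + 1) - x k) := by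
    intro k
    rw [hG (x (k + 1)), hG (x k), map_sub]
    abel
  have hsdiff : ∀ k, x (k + 1) - x k = (-(α k)) • G (x k) := by
    intro k
    rw [hstep k, neg_smul]
    abel
  have hips : ∀ v : EuclideanSpace ℝ (Fin n), v ≠ 0 → 0 < ⟪v, v⟫ := by
    intro v hv
    rw [real_inner_self_eq_norm_sq]
    exact pow_pos (norm_pos_iff.2 hv) 2
  have hqpos : ∀ v : EuclideanSpace ℝ (Fin n), v ≠ 0 → 0 < ⟪v, T v⟫ := by
    intro v hv
    rw [hTq v]
    have hvn : 0 < ⟪v, v⟫ := hips v hv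
    rw [hinnorm v] at hvn
    calc (0:ℝ) < lmin * ∑ i, V.repr v i ^ 2 := mul_pos h0 hvn
      _ = ∑ i, lmin * V.repr v i ^ 2 := Finset.mul_sum _ _ _
      _ ≤ ∑ i, ev i * V.repr v i ^ 2 :=
          Finset.sum_le_sum fun i _ => mul_le_mul_of_nonneg_right (hml i) (sq_nonneg _)
  have hαpos : ∀ k, 0 < α k := by
    intro k
    induction k with
    | zero => exact hα0
    | succ k ihk =>
      have hsne : x (k + 1) - x k ≠ 0 := by
        rw [hsdiff k]
        exact smul_ne_zero (neg_ne_zero.2 (ne_of_gt ihk)) (hGk k)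
      rw [hBB k, hTs k]
      exact div_pos (hips _ hsne) (hqpos _ hsne)
  have hcnz : ∀ k, ∃ i, c k i ≠ 0 := by
    intro k
    by_contra h
    push_neg at h
    apply hGk k
    have hrz : V.repr (G (x k)) = 0 := by
      ext i
      exact h i
    exact (LinearIsometryEquiv.map_eq_zero_iff V.repr).1 hrz
  have haBB : ∀ k, α (k + 1) = (∑ i, c k i ^ 2) / (∑ i, ev i * c k i ^ 2) := by
    intro k
    rw [hBB k, hTs k, hsdiff k, map_smul]
    rw [real_inner_smul_left, real_inner_smul_left, real_inner_smul_right,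
      real_inner_smul_right]
    rw [← mul_assoc, ← mul_assoc]
    have hne : (-(α k)) * (-(α k)) ≠ 0 :=
      mul_ne_zero (neg_ne_zero.2 (ne_of_gt (hαpos k))) (neg_ne_zero.2 (ne_of_gt (hαpos k)))
    rw [mul_div_mul_left _ _ hne, hinnorm, hTq]
  rcases eq_or_lt_of_le (le_trans (hml i0) (hmu i0)) with heq | hlt
  · -- κ = 1 : the method terminates in finitely many steps, contradiction
    exfalso
    have hevconst : ∀ i, ev i = lmin := fun i =>
      le_antisymm (heq ▸ hmu i) (hml i)
    have hTeq : ∀ v : EuclideanSpace ℝ (Fin n), T v = lmin • v := by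
      intro v
      apply V.repr.injective
      ext i
      rw [reprT, map_smul, PiLp.smul_apply, hevconst i]
      rfl
    obtain ⟨i1, hi1⟩ := hcnz 0
    have hX : (0:ℝ) < ∑ i, c 0 i ^ 2 :=
      Finset.sum_pos' (fun j _ => sq_nonneg _) ⟨i1, Finset.mem_univ i1, by positivity⟩
    have hα1 : α 1 = 1 / lmin := by
      rw [haBB 0]
      have h1 : (∑ i, ev i * c 0 i ^ 2) = (∑ i, c 0 i ^ 2) * lmin := by
        rw [Finset.sum_mul]
        exact Finset.sum_congr rfl fun i _ => by rw [hevconst i]; ring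
      rw [h1, div_mul_eq_div_div, div_self (ne_of_gt hX)]
    apply hGk 2
    have h2 := hgrec 1
    rw [hTeq (G (x 1)), hα1, smul_smul, one_div,
      inv_mul_cancel₀ (ne_of_gt h0), one_smul, sub_self] at h2
    exact h2
  · -- κ > 1 : apply the core convergence result
    obtain ⟨C, hC0, hCb⟩ := bb_core ev lmin lmax hml hmu h0 hlt c α hcrec haBB hcnz
    refine ⟨C / lmin, div_pos hC0 h0, ?_⟩
    intro k
    have hθeq : 1 - 1 / κ = 1 - lmin / lmax := by
      rw [hκ, one_div_div]
    rw [hθeq]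
    have hgnorm : ‖G (x k)‖ = Real.sqrt (∑ i, c k i ^ 2) := by
      have h1 : ‖G (x k)‖ ^ 2 = ∑ i, c k i ^ 2 := by
        rw [← real_inner_self_eq_norm_sq, hinnorm]
      rw [← h1, Real.sqrt_sq (norm_nonneg _)]
    have hgb : ‖G (x k)‖ ≤ C * (1 - lmin / lmax) ^ k := by
      rw [hgnorm]; exact hCb k
    have hTw : T (x k - xs) = G (x k) := by
      rw [map_sub, hxs, hG (x k)]
      abel
    have hwb : lmin * ‖x k - xs‖ ^ 2 ≤ ‖x k - xs‖ * ‖G (x k)‖ := by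
      calc lmin * ‖x k - xs‖ ^ 2 = lmin * ⟪x k - xs, x k - xs⟫ := by
            rw [real_inner_self_eq_norm_sq]
        _ ≤ ⟪x k - xs, T (x k - xs)⟫ := by
            rw [hinnorm, hTq, Finset.mul_sum]
            exact Finset.sum_le_sum fun i _ =>
              mul_le_mul_of_nonneg_right (hml i) (sq_nonneg _)
        _ = ⟪x k - xs, G (x k)⟫ := by rw [hTw]
        _ ≤ ‖x k - xs‖ * ‖G (x k)‖ := real_inner_le_norm _ _
    have hwg : ‖x k - xs‖ ≤ ‖G (x k)‖ / lmin := by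
      rcases eq_or_ne ‖x k - xs‖ 0 with hw | hw
      · rw [hw]
        positivity
      · have hwpos : 0 < ‖x k - xs‖ := lt_of_le_of_ne (norm_nonneg _) (Ne.symm hw)
        rw [le_div_iff₀ h0]
        nlinarith [hwb]
    calc ‖x k - xs‖ ≤ ‖G (x k)‖ / lmin := hwg
      _ ≤ (C * (1 - lmin / lmax) ^ k) / lmin := by
          gcongr
      _ = C / lmin * (1 - lmin / lmax) ^ k := by ring
end

section
/- Let n ≥ 1, H ∈ ℝ^{n×n} be symmetric positive definite, b ∈ ℝⁿ, f(x) = (1/2)xᵀHx + bᵀx with gradient G(x) = Hx + b, unique minimizer x* = −H⁻¹b, and condition number κ = λ_max(H)/λ_min(H). Let x₀ ∈ ℝⁿ, α₀ > 0, and define x_{k+1} = x_k − α_k G(x_k) where for k ≥ 1 the step is the short Barzilai–Borwein step α_k = (s_{k−1}ᵀ y_{k−1})/(y_{k−1}ᵀ y_{k−1}) with s_{k−1} = x_k − x_{k−1}, y_{k−1} = G(x_k) − G(x_{k−1}). If G(x_k) ≠ 0 for all k, then x_k converges to x* at least R-linearly with rate 1 − 1/κ: there exists a constant C > 0 such that ‖x_k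 − x*‖ ≤ C (1 − 1/κ)^k for all k ≥ 0. -/
open scoped RealInnerProductSpace

lemma bb_solve (r E : ℝ) (hr0 : 0 < r) (hE : 0 ≤ E) (u : ℕ → ℝ) (hu : ∀ k, 0 ≤ u k)
    (hrec : ∀ k, 2 ≤ k → u (k+1) ≤ max (r * u k) (E * r ^ (k-1))) :
    ∃ V, 0 < V ∧ ∀ k, u k ≤ V * r ^ k := by
  set V : ℝ := max (max (u 0 + 1) (u 1 / r + 1)) (max (u 2 / r^2 + 1) (E / r^2 + 1)) with hV
  have h0 : u 0 + 1 ≤ V := le_max_of_le_left (le_max_left _ _)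
  have h1 : u 1 / r + 1 ≤ V := le_max_of_le_left (le_max_right _ _)
  have h2 : u 2 / r^2 + 1 ≤ V := le_max_of_le_right (le_max_left _ _)
  have h3 : E / r^2 + 1 ≤ V := le_max_of_le_right (le_max_right _ _)
  have hV0 : 0 < V := by linarith [hu 0]
  refine ⟨V, hV0, ?_⟩
  intro k
  induction k using Nat.strong_induction_on with
  | _ k ih =>
    match k, ih with
    | 0, _ => rw [pow_zero, mul_one]; linarith [hu 0]
    | 1, _ =>
      have : u 1 / r ≤ V := by linarith
      calc u 1 = u 1 / r * r := by field_simp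
        _ ≤ V * r := by nlinarith
        _ = V * r ^ 1 := by ring
    | 2, _ =>
      have : u 2 / r^2 ≤ V := by linarith
      have hr2 : (0:ℝ) < r^2 := by positivity
      calc u 2 = u 2 / r^2 * r^2 := by field_simp
        _ ≤ V * r^2 := by nlinarith
    | (m+3), ih =>
      have hmax : max (r * u (m+2)) (E * r ^ (m+1)) ≤ V * r ^ (m+3) := by
        apply max_le
        · have := ih (m+2) (by omega)
          calc r * u (m+2) ≤ r * (V * r ^ (m+2)) := by nlinarith
            _ = V * r ^ (m+3) := by ring
        · have hEV : E / r^2 ≤ V := by linarith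
          have he : E * r ^ (m+1) = E / r^2 * r ^ (m+3) := by field_simp; ring
          rw [he]
          have : (0:ℝ) < r ^ (m+3) := by positivity
          nlinarith
      calc u (m+3) = u (m+2+1) := rfl
        _ ≤ _ := hrec (m+2) (by omega)
        _ ≤ V * r ^ (m+3) := hmax

lemma bb_component {n : ℕ} (lam : Fin n → ℝ) (lmin lmax : ℝ)
    (hlmin : 0 < lmin) (hminle : ∀ i, lmin ≤ lam i) (hlemax : ∀ i, lam i ≤ lmax)
    (hmono : Monotone lam) (hlt : lmin < lmax)
    (c : ℕ → Fin n → ℝ) (α : ℕ → ℝ)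
    (hrec : ∀ k i, c (k+1) i = (1 - α k * lam i) * c k i)
    (halpha : ∀ k, α (k+1) = (∑ j, lam j * c k j ^ 2) / (∑ j, lam j ^ 2 * c k j ^ 2))
    (hnz : ∀ k, 0 < ∑ j, c k j ^ 2) :
    ∀ i : Fin n, ∃ C, 0 < C ∧ ∀ k, |c k i| ≤ C * (1 - lmin / lmax) ^ k := by
  have hlmax0 : (0:ℝ) < lmax := lt_trans hlmin hlt
  have hq1 : lmin / lmax < 1 := (div_lt_one hlmax0).2 hlt
  have hq0 : 0 < lmin / lmax := by positivity
  set r : ℝ := 1 - lmin / lmax with hrdef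
  have hr0 : 0 < r := by rw [hrdef]; linarith
  have hr1 : r < 1 := by rw [hrdef]; linarith
  have hnum : ∀ k, 0 < ∑ j, lam j * c k j ^ 2 := by
    intro k
    have h1 : lmin * (∑ j, c k j ^ 2) ≤ ∑ j, lam j * c k j ^ 2 := by
      rw [Finset.mul_sum]
      exact Finset.sum_le_sum fun j _ => mul_le_mul_of_nonneg_right (hminle j) (sq_nonneg _)
    nlinarith [hnz k]
  have hden : ∀ k, 0 < ∑ j, lam j ^ 2 * c k j ^ 2 := by
    intro k
    have h1 : lmin * (∑ j, lam j * c k j ^ 2) ≤ ∑ j, lam j ^ 2 * c k j ^ 2 := by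
      rw [Finset.mul_sum]
      apply Finset.sum_le_sum
      intro j _
      have h0 : 0 < lam j := lt_of_lt_of_le hlmin (hminle j)
      calc lmin * (lam j * c k j ^ 2) ≤ lam j * (lam j * c k j ^ 2) :=
            mul_le_mul_of_nonneg_right (hminle j) (mul_nonneg h0.le (sq_nonneg _))
        _ = lam j ^ 2 * c k j ^ 2 := by ring
    nlinarith [hnum k]
  have hden_le : ∀ k, (∑ j, lam j ^ 2 * c k j ^ 2) ≤ lmax * ∑ j, lam j * c k j ^ 2 := by
    intro k
    rw [Finset.mul_sum]
    apply Finset.sum_le_sum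
    intro j _
    have h0 : 0 < lam j := lt_of_lt_of_le hlmin (hminle j)
    calc lam j ^ 2 * c k j ^ 2 = lam j * (lam j * c k j ^ 2) := by ring
      _ ≤ lmax * (lam j * c k j ^ 2) :=
          mul_le_mul_of_nonneg_right (hlemax j) (mul_nonneg h0.le (sq_nonneg _))
  have hden_ge : ∀ k, lmin * (∑ j, lam j * c k j ^ 2) ≤ ∑ j, lam j ^ 2 * c k j ^ 2 := by
    intro k
    rw [Finset.mul_sum]
    apply Finset.sum_le_sum
    intro j _
    have h0 : 0 < lam j := lt_of_lt_of_le hlmin (hminle j)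
    calc lmin * (lam j * c k j ^ 2) ≤ lam j * (lam j * c k j ^ 2) :=
          mul_le_mul_of_nonneg_right (hminle j) (mul_nonneg h0.le (sq_nonneg _))
      _ = lam j ^ 2 * c k j ^ 2 := by ring
  -- rewrite the factor as a quotient
  have hform : ∀ k (i : Fin n), 1 - α (k+1) * lam i =
      ((∑ j, lam j ^ 2 * c k j ^ 2) - lam i * ∑ j, lam j * c k j ^ 2) /
        (∑ j, lam j ^ 2 * c k j ^ 2) := by
    intro k i
    rw [halpha k]
    field_simp [(hden k).ne']
  -- generic factor bound for BB steps
  have hfac : ∀ k i, |1 - α (k+1) * lam i| ≤ 1 + lmax / lmin := by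
    intro k i
    have hN := hnum k; have hD := hden k
    have hli : 0 < lam i := lt_of_lt_of_le hlmin (hminle i)
    rw [hform k i, abs_le]
    constructor
    · rw [le_div_iff₀ hD]
      have h1 : lam i * (∑ j, lam j * c k j ^ 2) ≤ lmax * (∑ j, lam j * c k j ^ 2) :=
        mul_le_mul_of_nonneg_right (hlemax i) hN.le
      have h2 : lmax * (∑ j, lam j * c k j ^ 2) ≤ (lmax / lmin) * (∑ j, lam j ^ 2 * c k j ^ 2) := by
        rw [div_mul_eq_mul_div, le_div_iff₀ hlmin]
        calc lmax * (∑ j, lam j * c k j ^ 2) * lmin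
            = lmax * (lmin * (∑ j, lam j * c k j ^ 2)) := by ring
          _ ≤ lmax * (∑ j, lam j ^ 2 * c k j ^ 2) :=
              mul_le_mul_of_nonneg_left (hden_ge k) hlmax0.le
      nlinarith
    · rw [div_le_iff₀ hD]
      have h1 : 0 ≤ lam i * (∑ j, lam j * c k j ^ 2) := mul_nonneg hli.le hN.le
      have h2 : 0 ≤ (lmax / lmin) * (∑ j, lam j ^ 2 * c k j ^ 2) := by positivity
      nlinarith
  -- contraction under the "case A" condition
  have hcontr : ∀ k (i : Fin n),
      (∑ j ∈ Finset.univ.filter (fun j : Fin n => (j:ℕ) < (i:ℕ)), c k j ^ 2) ≤ r * c k i ^ 2 →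
      |1 - α (k+1) * lam i| ≤ r := by
    intro k i hcase
    have hN := hnum k; have hD := hden k
    have hli : 0 < lam i := lt_of_lt_of_le hlmin (hminle i)
    have key1 : lam i * (∑ j, lam j * c k j ^ 2) - (∑ j, lam j ^ 2 * c k j ^ 2)
        ≤ r * (∑ j, lam j ^ 2 * c k j ^ 2) := by
      have hsplit : lam i * (∑ j, lam j * c k j ^ 2) - (∑ j, lam j ^ 2 * c k j ^ 2)
          = ∑ j, (lam i - lam j) * (lam j * c k j ^ 2) := by
        rw [Finset.mul_sum, ← Finset.sum_sub_distrib]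
        exact Finset.sum_congr rfl fun j _ => by ring
      have hle1 : ∑ j, (lam i - lam j) * (lam j * c k j ^ 2) ≤
          ∑ j ∈ Finset.univ.filter (fun j : Fin n => (j:ℕ) < (i:ℕ)),
            (lam i - lam j) * (lam j * c k j ^ 2) := by
        rw [← Finset.sum_filter_add_sum_filter_not Finset.univ
              (fun j : Fin n => (j:ℕ) < (i:ℕ))]
        have hnonpos : ∑ j ∈ Finset.univ.filter (fun j : Fin n => ¬ (j:ℕ) < (i:ℕ)),
            (lam i - lam j) * (lam j * c k j ^ 2) ≤ 0 := by
          apply Finset.sum_nonpos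
          intro j hj
          simp only [Finset.mem_filter] at hj
          have hij : lam i ≤ lam j := hmono (by omega : i ≤ j)
          have h0 : 0 < lam j := lt_of_lt_of_le hlmin (hminle j)
          exact mul_nonpos_of_nonpos_of_nonneg (by linarith)
            (mul_nonneg h0.le (sq_nonneg _))
        linarith
      have hle2 : ∑ j ∈ Finset.univ.filter (fun j : Fin n => (j:ℕ) < (i:ℕ)),
            (lam i - lam j) * (lam j * c k j ^ 2) ≤
          lam i ^ 2 * ∑ j ∈ Finset.univ.filter (fun j : Fin n => (j:ℕ) < (i:ℕ)), c k j ^ 2 := by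
        rw [Finset.mul_sum]
        apply Finset.sum_le_sum
        intro j hj
        have h0 : 0 < lam j := lt_of_lt_of_le hlmin (hminle j)
        simp only [Finset.mem_filter] at hj
        have hij : lam j ≤ lam i := hmono (by omega : j ≤ i)
        have t2 : lam j * c k j ^ 2 ≤ lam i * c k j ^ 2 :=
          mul_le_mul_of_nonneg_right hij (sq_nonneg _)
        calc (lam i - lam j) * (lam j * c k j ^ 2) ≤ lam i * (lam i * c k j ^ 2) :=
              mul_le_mul (by linarith) t2 (mul_nonneg h0.le (sq_nonneg _)) hli.le
          _ = lam i ^ 2 * c k j ^ 2 := by ring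
      have hle3 : lam i ^ 2 * (∑ j ∈ Finset.univ.filter (fun j : Fin n => (j:ℕ) < (i:ℕ)), c k j ^ 2)
          ≤ r * (lam i ^ 2 * c k i ^ 2) := by
        calc lam i ^ 2 * (∑ j ∈ Finset.univ.filter (fun j : Fin n => (j:ℕ) < (i:ℕ)), c k j ^ 2)
            ≤ lam i ^ 2 * (r * c k i ^ 2) :=
              mul_le_mul_of_nonneg_left hcase (by positivity)
          _ = r * (lam i ^ 2 * c k i ^ 2) := by ring
      have hle4 : lam i ^ 2 * c k i ^ 2 ≤ ∑ j, lam j ^ 2 * c k j ^ 2 := by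
        have heq : lam i ^ 2 * c k i ^ 2 = ∑ j ∈ ({i} : Finset (Fin n)), lam j ^ 2 * c k j ^ 2 := by
          simp
        rw [heq]
        exact Finset.sum_le_sum_of_subset_of_nonneg (Finset.subset_univ _)
          (fun j _ _ => by positivity)
      have hle5 : r * (lam i ^ 2 * c k i ^ 2) ≤ r * (∑ j, lam j ^ 2 * c k j ^ 2) :=
        mul_le_mul_of_nonneg_left hle4 hr0.le
      linarith [hsplit ▸ le_trans hle1 (le_trans hle2 (le_trans hle3 hle5))]
    have key2 : (1 - r) * (∑ j, lam j ^ 2 * c k j ^ 2) ≤ lam i * ∑ j, lam j * c k j ^ 2 := by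
      have h1 : (1 - r) = lmin / lmax := by rw [hrdef]; ring
      rw [h1]
      have h2 : lmin / lmax * (∑ j, lam j ^ 2 * c k j ^ 2)
          ≤ lmin / lmax * (lmax * ∑ j, lam j * c k j ^ 2) :=
        mul_le_mul_of_nonneg_left (hden_le k) (by positivity)
      have h3 : lmin / lmax * (lmax * ∑ j, lam j * c k j ^ 2) = lmin * ∑ j, lam j * c k j ^ 2 := by
        field_simp
      have h4 : lmin * (∑ j, lam j * c k j ^ 2) ≤ lam i * ∑ j, lam j * c k j ^ 2 :=
        mul_le_mul_of_nonneg_right (hminle i) hN.le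
      linarith
    rw [hform k i, abs_le]
    constructor
    · rw [le_div_iff₀ hD]; linarith
    · rw [div_le_iff₀ hD]; linarith
  -- main induction over components
  suffices hmain : ∀ m : ℕ, ∀ i : Fin n, (i:ℕ) < m → ∃ C, 0 < C ∧ ∀ k, |c k i| ≤ C * r ^ k by
    intro i; exact hmain n i i.isLt
  intro m
  induction m with
  | zero => intro i hi; omega
  | succ m IH =>
    intro i hi
    rcases Nat.lt_or_ge (i:ℕ) m with hlt' | hge
    · exact IH i hlt'
    have IH' : ∀ j : Fin n, ∃ C, 0 < C ∧ ((j:ℕ) < (i:ℕ) → ∀ k, |c k j| ≤ C * r ^ k) := by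
      intro j
      rcases Nat.lt_or_ge (j:ℕ) (i:ℕ) with hj | hj
      · obtain ⟨C, hC0, hC⟩ := IH j (by omega)
        exact ⟨C, hC0, fun _ => hC⟩
      · exact ⟨1, one_pos, fun h => absurd h (by omega)⟩
    choose Cf hCf0 hCf using IH'
    have hD0 : 0 < (∑ j ∈ Finset.univ.filter (fun j : Fin n => (j:ℕ) < (i:ℕ)), Cf j ^ 2) + 1 := by
      have : 0 ≤ ∑ j ∈ Finset.univ.filter (fun j : Fin n => (j:ℕ) < (i:ℕ)), Cf j ^ 2 :=
        Finset.sum_nonneg fun j _ => sq_nonneg _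
      linarith
    set D : ℝ := (∑ j ∈ Finset.univ.filter (fun j : Fin n => (j:ℕ) < (i:ℕ)), Cf j ^ 2) + 1 with hDdef
    have hDbound : ∀ k,
        (∑ j ∈ Finset.univ.filter (fun j : Fin n => (j:ℕ) < (i:ℕ)), c k j ^ 2)
          ≤ D * (r ^ k) ^ 2 := by
      intro k
      have h1 : (∑ j ∈ Finset.univ.filter (fun j : Fin n => (j:ℕ) < (i:ℕ)), c k j ^ 2)
          ≤ ∑ j ∈ Finset.univ.filter (fun j : Fin n => (j:ℕ) < (i:ℕ)), (Cf j * r ^ k) ^ 2 := by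
        apply Finset.sum_le_sum
        intro j hj
        simp only [Finset.mem_filter] at hj
        have h2 := hCf j hj.2 k
        calc c k j ^ 2 = |c k j| ^ 2 := (sq_abs _).symm
          _ ≤ (Cf j * r ^ k) ^ 2 := by
              apply pow_le_pow_left₀ (abs_nonneg _) h2
      have h2 : ∑ j ∈ Finset.univ.filter (fun j : Fin n => (j:ℕ) < (i:ℕ)), (Cf j * r ^ k) ^ 2
          = (∑ j ∈ Finset.univ.filter (fun j : Fin n => (j:ℕ) < (i:ℕ)), Cf j ^ 2) * (r ^ k) ^ 2 := by
        rw [Finset.sum_mul]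
        exact Finset.sum_congr rfl fun j _ => by ring
      have h3 : (0:ℝ) ≤ (r ^ k) ^ 2 := sq_nonneg _
      rw [hDdef]
      nlinarith
    have hM1 : (1:ℝ) ≤ 1 + lmax / lmin := by
      have : 0 < lmax / lmin := by positivity
      linarith
    have hufac : ∀ k, 1 ≤ k → |c (k+1) i| ≤ (1 + lmax / lmin) * |c k i| := by
      intro k hk
      obtain ⟨p, rfl⟩ : ∃ p, k = p + 1 := ⟨k-1, by omega⟩
      rw [hrec (p+1) i, abs_mul]
      exact mul_le_mul_of_nonneg_right (hfac p i) (abs_nonneg _)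
    have hE0 : (0:ℝ) ≤ (1 + lmax / lmin) ^ 2 * Real.sqrt (D / r) := by positivity
    have hbig : ∀ k, 2 ≤ k → |c (k+1) i| ≤
        max (r * |c k i|) ((1 + lmax / lmin) ^ 2 * Real.sqrt (D / r) * r ^ (k-1)) := by
      intro k hk
      obtain ⟨p, rfl⟩ : ∃ p, k = p + 2 := ⟨k-2, by omega⟩
      have hsub : p + 2 - 1 = p + 1 := rfl
      rw [hsub]
      by_cases hcase :
          (∑ j ∈ Finset.univ.filter (fun j : Fin n => (j:ℕ) < (i:ℕ)), c (p+1) j ^ 2)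
            ≤ r * c (p+1) i ^ 2
      · have hc := hcontr (p+1) i hcase
        refine le_trans ?_ (le_max_left _ _)
        rw [hrec (p+2) i, abs_mul]
        exact mul_le_mul_of_nonneg_right hc (abs_nonneg _)
      · push_neg at hcase
        refine le_trans ?_ (le_max_right _ _)
        have hsmall : |c (p+1) i| ≤ Real.sqrt (D / r) * r ^ (p+1) := by
          have h2 : c (p+1) i ^ 2 ≤ D / r * (r ^ (p+1)) ^ 2 := by
            have h3 := hDbound (p+1)
            rw [div_mul_eq_mul_div, le_div_iff₀ hr0]
            nlinarith
          have h5 : |c (p+1) i| ^ 2 ≤ (Real.sqrt (D / r) * r ^ (p+1)) ^ 2 := by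
            rw [mul_pow, Real.sq_sqrt (by positivity : (0:ℝ) ≤ D / r), sq_abs]
            exact h2
          have h6 : 0 ≤ Real.sqrt (D / r) * r ^ (p+1) := by positivity
          nlinarith [abs_nonneg (c (p+1) i)]
        have hs1 : |c (p+2) i| ≤ (1 + lmax / lmin) * |c (p+1) i| := hufac (p+1) (by omega)
        have hs2 : |c (p+2+1) i| ≤ (1 + lmax / lmin) * |c (p+2) i| := hufac (p+2) (by omega)
        have h0 : (0:ℝ) ≤ 1 + lmax / lmin := by linarith
        calc |c (p+2+1) i| ≤ (1 + lmax / lmin) * |c (p+2) i| := hs2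
          _ ≤ (1 + lmax / lmin) * ((1 + lmax / lmin) * |c (p+1) i|) :=
              mul_le_mul_of_nonneg_left hs1 h0
          _ ≤ (1 + lmax / lmin) * ((1 + lmax / lmin) * (Real.sqrt (D / r) * r ^ (p+1))) :=
              mul_le_mul_of_nonneg_left (mul_le_mul_of_nonneg_left hsmall h0) h0
          _ = (1 + lmax / lmin) ^ 2 * Real.sqrt (D / r) * r ^ (p+1) := by ring
    exact bb_solve r _ hr0 hE0 (fun k => |c k i|) (fun k => abs_nonneg _) hbig

set_option maxHeartbeats 2000000 in
/-- R-linear convergence of the short Barzilai–Borwein gradient method on a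
strongly convex quadratic with rate `1 - 1/κ`, `κ = λ_max(H)/λ_min(H)`. -/
theorem stmt_4 {n : ℕ} (hn : 1 ≤ n)
    (H : Matrix (Fin n) (Fin n) ℝ) (hH : H.PosDef)
    (b : EuclideanSpace ℝ (Fin n))
    (f : EuclideanSpace ℝ (Fin n) → ℝ)
    (hf : ∀ x, f x = (1 / 2) * ⟪x, Matrix.toEuclideanLin H x⟫ + ⟪b, x⟫)
    (G : EuclideanSpace ℝ (Fin n) → EuclideanSpace ℝ (Fin n))
    (hG : ∀ x, G x = Matrix.toEuclideanLin H x + b)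
    (xs : EuclideanSpace ℝ (Fin n)) (hxs : Matrix.toEuclideanLin H xs = -b)
    (κ : ℝ) (hκ : κ = (⨆ i, hH.1.eigenvalues i) / (⨅ i, hH.1.eigenvalues i))
    (x : ℕ → EuclideanSpace ℝ (Fin n)) (α : ℕ → ℝ)
    (hα0 : 0 < α 0)
    (hGk : ∀ k, G (x k) ≠ 0)
    (hstep : ∀ k, x (k + 1) = x k - α k • G (x k))
    (hBB : ∀ k, α (k + 1) =
      ⟪x (k + 1) - x k, G (x (k + 1)) - G (x k)⟫ /
        ⟪G (x (k + 1)) - G (x k), G (x (k + 1)) - G (x k)⟫) :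
    ∃ C : ℝ, 0 < C ∧ ∀ k : ℕ, ‖x k - xs‖ ≤ C * (1 - 1 / κ) ^ k := by
  classical
  have hne : Nonempty (Fin n) := ⟨⟨0, by omega⟩⟩
  set L : EuclideanSpace ℝ (Fin n) →ₗ[ℝ] EuclideanSpace ℝ (Fin n) :=
    (Matrix.toEuclideanLin H : _) with hLdef
  set g : ℕ → EuclideanSpace ℝ (Fin n) := fun k => G (x k) with hgdef
  have hgval : ∀ k, g k = L (x k) + b := fun k => hG (x k)
  have hgstep : ∀ k, g (k+1) = g k - α k • L (g k) := by
    intro k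
    have h1 : g (k+1) = L (x k - α k • g k) + b := by
      rw [hgval (k+1), hstep k]
    rw [h1, map_sub, map_smul, hgval k]
    abel
  -- spectral data
  set B := hH.1.eigenvectorBasis with hBdef
  set lam0 := hH.1.eigenvalues with hlam0def
  have hsym : ∀ u v : EuclideanSpace ℝ (Fin n), ⟪L u, v⟫ = ⟪u, L v⟫ :=
    (Matrix.isHermitian_iff_isSymmetric.1 hH.1)
  have heig : ∀ j, L (B j) = lam0 j • B j := by
    intro j
    have h := hH.1.mulVec_eigenvectorBasis j
    ext i
    have := congrFun h i
    simpa [hLdef, Matrix.toEuclideanLin_apply] using this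
  have hcoord : ∀ j (v : EuclideanSpace ℝ (Fin n)), ⟪B j, L v⟫ = lam0 j * ⟪B j, v⟫ := by
    intro j v
    rw [← hsym (B j) v, heig j, real_inner_smul_left]
  -- Parseval facts
  have hpars : ∀ u v : EuclideanSpace ℝ (Fin n), ⟪u, v⟫ = ∑ j, ⟪B j, u⟫ * ⟪B j, v⟫ := by
    intro u v
    rw [← B.sum_inner_mul_inner u v]
    exact Finset.sum_congr rfl fun j _ => by rw [real_inner_comm u (B j)]
  have hnormsq : ∀ v : EuclideanSpace ℝ (Fin n), ‖v‖^2 = ∑ j, ⟪B j, v⟫ ^ 2 := by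
    intro v
    rw [← real_inner_self_eq_norm_sq, hpars v v]
    exact Finset.sum_congr rfl fun j _ => (sq _).symm
  -- min and max eigenvalues
  set lmin : ℝ := ⨅ i, lam0 i with hlmindef
  set lmax : ℝ := ⨆ i, lam0 i with hlmaxdef
  have hminle0 : ∀ j, lmin ≤ lam0 j := fun j => ciInf_le (Finite.bddBelow_range _) j
  have hlemax0 : ∀ j, lam0 j ≤ lmax := fun j => le_ciSup (Finite.bddAbove_range _) j
  have hlminpos : 0 < lmin := by
    obtain ⟨j0, hj0⟩ := Finite.exists_min lam0
    have : lmin = lam0 j0 := le_antisymm (ciInf_le (Finite.bddBelow_range _) j0) (le_ciInf hj0)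
    rw [this]
    exact hH.eigenvalues_pos j0
  have hlmaxpos : 0 < lmax := lt_of_lt_of_le hlminpos (le_trans (hminle0 (Classical.arbitrary _)) (hlemax0 _))
  -- inner products of g with L
  have hinLg : ∀ k, ⟪g k, L (g k)⟫ = ∑ j, lam0 j * ⟪B j, g k⟫ ^ 2 := by
    intro k
    rw [hpars (g k) (L (g k))]
    apply Finset.sum_congr rfl
    intro j _
    rw [hcoord j (g k)]
    ring
  have hinLL : ∀ k, ⟪L (g k), L (g k)⟫ = ∑ j, lam0 j ^ 2 * ⟪B j, g k⟫ ^ 2 := by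
    intro k
    rw [hpars (L (g k)) (L (g k))]
    apply Finset.sum_congr rfl
    intro j _
    rw [hcoord j (g k)]
    ring
  have hgnz : ∀ k, (0:ℝ) < ∑ j, ⟪B j, g k⟫ ^ 2 := by
    intro k
    rw [← hnormsq (g k)]
    exact pow_pos (norm_pos_iff.mpr (hGk k)) 2
  have hnumpos : ∀ k, (0:ℝ) < ∑ j, lam0 j * ⟪B j, g k⟫ ^ 2 := by
    intro k
    have h1 : lmin * (∑ j, ⟪B j, g k⟫ ^ 2) ≤ ∑ j, lam0 j * ⟪B j, g k⟫ ^ 2 := by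
      rw [Finset.mul_sum]
      exact Finset.sum_le_sum fun j _ => mul_le_mul_of_nonneg_right (hminle0 j) (sq_nonneg _)
    nlinarith [hgnz k]
  have hdenpos : ∀ k, (0:ℝ) < ∑ j, lam0 j ^ 2 * ⟪B j, g k⟫ ^ 2 := by
    intro k
    have h1 : lmin * (∑ j, lam0 j * ⟪B j, g k⟫ ^ 2) ≤ ∑ j, lam0 j ^ 2 * ⟪B j, g k⟫ ^ 2 := by
      rw [Finset.mul_sum]
      apply Finset.sum_le_sum
      intro j _
      have h0 : 0 < lam0 j := lt_of_lt_of_le hlminpos (hminle0 j)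
      calc lmin * (lam0 j * ⟪B j, g k⟫ ^ 2) ≤ lam0 j * (lam0 j * ⟪B j, g k⟫ ^ 2) :=
            mul_le_mul_of_nonneg_right (hminle0 j) (mul_nonneg h0.le (sq_nonneg _))
        _ = lam0 j ^ 2 * ⟪B j, g k⟫ ^ 2 := by ring
    nlinarith [hnumpos k]
  -- positivity of steps and the BB formula
  have hαformula : ∀ k, α k ≠ 0 →
      α (k+1) = (∑ j, lam0 j * ⟪B j, g k⟫ ^ 2) / (∑ j, lam0 j ^ 2 * ⟪B j, g k⟫ ^ 2) := by
    intro k hαk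
    have hs : x (k+1) - x k = -(α k • g k) := by rw [hstep k]; abel
    have hy : G (x (k+1)) - G (x k) = -(α k • L (g k)) := by
      have := hgstep k
      simp only [hgdef] at this ⊢
      rw [this]; abel
    have h1 : ⟪x (k + 1) - x k, G (x (k + 1)) - G (x k)⟫ = α k ^ 2 * ⟪g k, L (g k)⟫ := by
      rw [hs, hy, inner_neg_neg, real_inner_smul_left, real_inner_smul_right]
      ring
    have h2 : ⟪G (x (k + 1)) - G (x k), G (x (k + 1)) - G (x k)⟫
        = α k ^ 2 * ⟪L (g k), L (g k)⟫ := by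
      rw [hy, inner_neg_neg, real_inner_smul_left, real_inner_smul_right]
      ring
    rw [hBB k, h1, h2, hinLg k, hinLL k, mul_div_mul_left _ _ (pow_ne_zero 2 hαk)]
  have hαpos : ∀ k, 0 < α k := by
    intro k
    induction k with
    | zero => exact hα0
    | succ k ih =>
      rw [hαformula k ih.ne']
      exact div_pos (hnumpos k) (hdenpos k)
  -- ‖L v‖ ≥ lmin ‖v‖ and g k = L (x k - xs)
  have hgLxs : ∀ k, g k = L (x k - xs) := by
    intro k
    rw [map_sub, hxs, hgval k]
    abel
  have hLlower : ∀ v : EuclideanSpace ℝ (Fin n), lmin * ‖v‖ ≤ ‖L v‖ := by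
    intro v
    have h1 : (lmin * ‖v‖) ^ 2 ≤ ‖L v‖ ^ 2 := by
      have h2 : ‖L v‖ ^ 2 = ∑ j, lam0 j ^ 2 * ⟪B j, v⟫ ^ 2 := by
        rw [hnormsq (L v)]
        apply Finset.sum_congr rfl
        intro j _
        rw [hcoord j v]; ring
      have h3 : lmin ^ 2 * (∑ j, ⟪B j, v⟫ ^ 2) ≤ ∑ j, lam0 j ^ 2 * ⟪B j, v⟫ ^ 2 := by
        rw [Finset.mul_sum]
        apply Finset.sum_le_sum
        intro j _
        have h0 : 0 < lam0 j := lt_of_lt_of_le hlminpos (hminle0 j)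
        have : lmin ^ 2 ≤ lam0 j ^ 2 := by nlinarith [hminle0 j]
        exact mul_le_mul_of_nonneg_right this (sq_nonneg _)
      rw [h2, mul_pow, hnormsq v]
      exact h3
    have h4 : 0 ≤ lmin * ‖v‖ := mul_nonneg hlminpos.le (norm_nonneg _)
    nlinarith [norm_nonneg (L v)]
  -- relate κ to lmin / lmax
  have hκval : 1 - 1 / κ = 1 - lmin / lmax := by
    rw [hκ, one_div_div]
  -- case split on lmin < lmax
  rcases lt_or_ge lmin lmax with hlt | hge
  · -- main case: apply the component lemma through the sorting permutation
    set σ := Tuple.sort lam0 with hσdef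
    set lam : Fin n → ℝ := lam0 ∘ σ with hlamdef
    have hmono : Monotone lam := Tuple.monotone_sort lam0
    set c : ℕ → Fin n → ℝ := fun k i => ⟪B (σ i), g k⟫ with hcdef
    have hrec : ∀ k i, c (k+1) i = (1 - α k * lam i) * c k i := by
      intro k i
      simp only [hcdef, hlamdef, Function.comp]
      rw [hgstep k, inner_sub_right, real_inner_smul_right, hcoord (σ i) (g k)]
      ring
    have hsum1 : ∀ k, (∑ j, lam j * c k j ^ 2) = ∑ j, lam0 j * ⟪B j, g k⟫ ^ 2 := by
      intro k
      exact Equiv.sum_comp σ (fun j => lam0 j * ⟪B j, g k⟫ ^ 2)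
    have hsum2 : ∀ k, (∑ j, lam j ^ 2 * c k j ^ 2) = ∑ j, lam0 j ^ 2 * ⟪B j, g k⟫ ^ 2 := by
      intro k
      exact Equiv.sum_comp σ (fun j => lam0 j ^ 2 * ⟪B j, g k⟫ ^ 2)
    have hsum0 : ∀ k, (∑ j, c k j ^ 2) = ∑ j, ⟪B j, g k⟫ ^ 2 := by
      intro k
      exact Equiv.sum_comp σ (fun j => ⟪B j, g k⟫ ^ 2)
    have halpha : ∀ k, α (k+1) = (∑ j, lam j * c k j ^ 2) / (∑ j, lam j ^ 2 * c k j ^ 2) := by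
      intro k
      rw [hsum1 k, hsum2 k]
      exact hαformula k (hαpos k).ne'
    have hnz : ∀ k, 0 < ∑ j, c k j ^ 2 := by
      intro k; rw [hsum0 k]; exact hgnz k
    have hcomp := bb_component lam lmin lmax hlminpos
      (fun i => hminle0 (σ i)) (fun i => hlemax0 (σ i)) hmono hlt c α hrec halpha hnz
    choose Cf hCf0 hCf using hcomp
    set r : ℝ := 1 - lmin / lmax with hrdef
    have hr0 : 0 < r := by
      have : lmin / lmax < 1 := (div_lt_one hlmaxpos).2 hlt
      rw [hrdef]; linarith
    -- total gradient bound
    have hgbound : ∀ k, ‖g k‖ ≤ Real.sqrt (∑ j, Cf j ^ 2) * r ^ k := by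
      intro k
      have h1 : ‖g k‖ ^ 2 ≤ (∑ j, Cf j ^ 2) * (r ^ k) ^ 2 := by
        rw [hnormsq (g k), ← hsum0 k, Finset.sum_mul]
        apply Finset.sum_le_sum
        intro j _
        have h2 := hCf j k
        calc c k j ^ 2 = |c k j| ^ 2 := (sq_abs _).symm
          _ ≤ (Cf j * r ^ k) ^ 2 := by
              apply pow_le_pow_left₀ (abs_nonneg _) h2
          _ = Cf j ^ 2 * (r ^ k) ^ 2 := by ring
      have h3 : (Real.sqrt (∑ j, Cf j ^ 2) * r ^ k) ^ 2 = (∑ j, Cf j ^ 2) * (r ^ k) ^ 2 := by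
        rw [mul_pow, Real.sq_sqrt (Finset.sum_nonneg fun j _ => sq_nonneg _)]
      have h4 : 0 ≤ Real.sqrt (∑ j, Cf j ^ 2) * r ^ k := by positivity
      nlinarith [norm_nonneg (g k)]
    refine ⟨Real.sqrt (∑ j, Cf j ^ 2) / lmin + 1, by positivity, ?_⟩
    intro k
    rw [hκval]
    have h5 := hLlower (x k - xs)
    rw [← hgLxs k] at h5
    have h6 := hgbound k
    have h7 : 0 ≤ r ^ k := le_of_lt (pow_pos hr0 k)
    have h8 : lmin * ‖x k - xs‖ ≤ Real.sqrt (∑ j, Cf j ^ 2) * r ^ k := le_trans h5 h6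
    have h9 : ‖x k - xs‖ ≤ Real.sqrt (∑ j, Cf j ^ 2) / lmin * r ^ k := by
      rw [div_mul_eq_mul_div, le_div_iff₀ hlminpos]
      nlinarith
    nlinarith
  · -- degenerate case: all eigenvalues equal, contradiction with G (x 2) ≠ 0
    exfalso
    have hall : ∀ j, lam0 j = lmin := fun j => le_antisymm (le_trans (hlemax0 j) hge) (hminle0 j)
    have hLid : ∀ v : EuclideanSpace ℝ (Fin n), L v = lmin • v := by
      intro v
      conv_lhs => rw [← B.sum_repr' v]
      rw [map_sum]
      conv_rhs => rw [← B.sum_repr' v]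
      rw [Finset.smul_sum]
      apply Finset.sum_congr rfl
      intro j _
      rw [map_smul, heig j, hall j, smul_comm]
    have hα1 : α 1 = 1 / lmin := by
      rw [hαformula 0 hα0.ne']
      have h1 : ∀ j, lam0 j * ⟪B j, g 0⟫ ^ 2 = lmin * ⟪B j, g 0⟫ ^ 2 := fun j => by rw [hall j]
      have h2 : ∀ j, lam0 j ^ 2 * ⟪B j, g 0⟫ ^ 2 = lmin ^ 2 * ⟪B j, g 0⟫ ^ 2 :=
        fun j => by rw [hall j]
      rw [Finset.sum_congr rfl (fun j _ => h1 j), Finset.sum_congr rfl (fun j _ => h2 j),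
        ← Finset.mul_sum, ← Finset.mul_sum]
      rw [div_eq_div_iff (ne_of_gt (mul_pos (pow_pos hlminpos 2) (hgnz 0))) hlminpos.ne']
      ring
    have hg2 : g 2 = 0 := by
      have := hgstep 1
      rw [hα1, hLid (g 1)] at this
      rw [this, smul_smul]
      rw [one_div_mul_cancel hlminpos.ne', one_smul]
      abel
    exact hGk 2 hg2
end

section
/- Let n ≥ 1, H ∈ ℝ^{n×n} be symmetric positive definite with positive definite square root H^{1/2}, b ∈ ℝⁿ, f(x) = (1/2)xᵀHx + bᵀx with gradient G(x) = Hx + b, and define φ(w) = (1/2)wᵀHw + (H^{1/2}b)ᵀw with gradient Φ(w) = Hw + H^{1/2}b. Let (x_k) and positive steps (α_k) satisfy x_{k+1} = x_k − α_k G(x_k), and set w_k = H^{1/2} x_k. Then (i) w_{k+1} = w_k − α_k Φ(w_k) for all k; and (ii) for every k with x_{k+1} ≠ x_k, the short Barzilai–Borwein step for (x_k) with respect to f equals the long Barzilai–Borwein step for (w_k) with respect to φ: (s_kᵀ y_k)/(y_kᵀ y_k) = (z_kᵀ z_k)/(z_kᵀ (Φ(w_{k+1}) − Φ(w_k))), where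 s_k = x_{k+1} − x_k, y_k = G(x_{k+1}) − G(x_k), z_k = w_{k+1} − w_k. -/
open scoped RealInnerProductSpace

/-- Via the change of variables `w = H^{1/2} x`, the short Barzilai–Borwein
step for `f(x) = (1/2)xᵀHx + bᵀx` equals the long Barzilai–Borwein step for the quadratic
`φ(w) = (1/2)wᵀHw + (H^{1/2}b)ᵀw`, whose gradient is `Φ(w) = Hw + H^{1/2}b`. -/
theorem stmt_5 {n : ℕ} (hn : 1 ≤ n)
    (H R : Matrix (Fin n) (Fin n) ℝ) (hH : H.PosDef) (hR : R.PosDef) (hRR : R * R = H)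
    (b : EuclideanSpace ℝ (Fin n))
    (f : EuclideanSpace ℝ (Fin n) → ℝ)
    (hf : ∀ x, f x = (1 / 2) * ⟪x, Matrix.toEuclideanLin H x⟫ + ⟪b, x⟫)
    (G : EuclideanSpace ℝ (Fin n) → EuclideanSpace ℝ (Fin n))
    (hG : ∀ x, G x = Matrix.toEuclideanLin H x + b)
    (φ : EuclideanSpace ℝ (Fin n) → ℝ)
    (hφ : ∀ w, φ w = (1 / 2) * ⟪w, Matrix.toEuclideanLin H w⟫ +
      ⟪Matrix.toEuclideanLin R b, w⟫)
    (Φ : EuclideanSpace ℝ (Fin n) → EuclideanSpace ℝ (Fin n))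
    (hΦ : ∀ w, Φ w = Matrix.toEuclideanLin H w + Matrix.toEuclideanLin R b)
    (x : ℕ → EuclideanSpace ℝ (Fin n)) (α : ℕ → ℝ)
    (hα : ∀ k, 0 < α k)
    (hstep : ∀ k, x (k + 1) = x k - α k • G (x k))
    (w : ℕ → EuclideanSpace ℝ (Fin n))
    (hw : ∀ k, w k = Matrix.toEuclideanLin R (x k)) :
    (∀ k, w (k + 1) = w k - α k • Φ (w k)) ∧
      ∀ k, x (k + 1) ≠ x k →
        ⟪x (k + 1) - x k, G (x (k + 1)) - G (x k)⟫ /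
            ⟪G (x (k + 1)) - G (x k), G (x (k + 1)) - G (x k)⟫ =
          ⟪w (k + 1) - w k, w (k + 1) - w k⟫ /
            ⟪w (k + 1) - w k, Φ (w (k + 1)) - Φ (w k)⟫ := by
  set L := Matrix.toEuclideanLin H with hL
  set M := Matrix.toEuclideanLin R with hM
  have hMM : ∀ v, M (M v) = L v := by
    intro v
    simp only [hL, hM, Matrix.toEuclideanLin_apply, ← hRR, Equiv.apply_symm_apply,
      Matrix.mulVec_mulVec]
  have hMsymm : ∀ u v : EuclideanSpace ℝ (Fin n), ⟪M u, v⟫ = ⟪u, M v⟫ := by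
    have := (Matrix.isHermitian_iff_isSymmetric (A := R)).mp hR.isHermitian
    exact fun u v => this u v
  have hcommL : ∀ v, M (L v) = L (M v) := fun v => by rw [← hMM v, hMM (M v)]
  constructor
  · intro k
    rw [hw, hw, hstep, hΦ, hG, map_sub, map_smul, map_add, hcommL]
  · intro k _
    have hs : ∀ u v, G u - G v = L (u - v) := by
      intro u v; rw [hG, hG, map_sub]; abel
    have hΦz : ∀ u v, Φ u - Φ v = L (u - v) := by
      intro u v; rw [hΦ, hΦ, map_sub]; abel
    set s := x (k + 1) - x k with hsdef
    have hz : w (k + 1) - w k = M s := by rw [hw, hw, ← map_sub]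
    have e1 : ⟪M s, M s⟫ = ⟪s, L s⟫ := by rw [hMsymm, hMM]
    have e2 : ⟪M s, L (M s)⟫ = ⟪L s, L s⟫ := by rw [← hcommL, ← hMsymm, hMM]
    rw [hs, hΦz, hz, ← hsdef, e1, e2]
end

section
/- Let f : ℝⁿ → ℝ be twice continuously differentiable with vᵀ∇²f(y)v ≤ Λ₁‖v‖² for all y, v ∈ ℝⁿ, where Λ₁ > 0. Fix x ∈ ℝⁿ with G(x) = ∇f(x) ≠ 0, a constant η with 0 < η < 1/3, and an initial trial step α > 0. Define Δτ₀ = α and, as long as the sufficient-decrease condition fails (i.e. f(x − Δτ_k G(x)) > f(x) − η Δτ_k ‖G(x)‖²), set Δτ_{k+1} = K0(x; x, Δτ_k); in this case the radicand 3 + 24(f(x̃_k) − f(x))/(Δτ_k(‖G(x) + G(x̃_k)‖² + 4‖G(x)‖²)) with x̃_k = x − Δτ_k G(x) is at least 3(1 − 2η) > 0, so K0 is well defined. Then there exists an integer p ≥ 0 such that f(x − Δτ_p G(x)) ≤ f(x) − η Δτ_p ‖G(x)‖². -/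
open scoped RealInnerProductSpace

/-- The Regime-0 KGD step-size
`K0(x; x, α) = α / √(3 + 24(f(x̃) − f(x)) / (α(‖G(x) + G(x̃)‖² + 4‖G(x)‖²)))`
with `x̃ = x − α G(x)`. -/
noncomputable def K0 {n : ℕ} (f : EuclideanSpace ℝ (Fin n) → ℝ)
    (G : EuclideanSpace ℝ (Fin n) → EuclideanSpace ℝ (Fin n))
    (x : EuclideanSpace ℝ (Fin n)) (α : ℝ) : ℝ :=
  α / Real.sqrt (3 + 24 * (f (x - α • G x) - f x) /
      (α * (‖G x + G (x - α • G x)‖ ^ 2 + 4 * ‖G x‖ ^ 2)))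

lemma kgd_taylor {n : ℕ} (f : EuclideanSpace ℝ (Fin n) → ℝ) (hf : ContDiff ℝ 2 f)
    (Λ₁ : ℝ)
    (hupper : ∀ y v : EuclideanSpace ℝ (Fin n),
      ⟪v, fderiv ℝ (gradient f) y v⟫ ≤ Λ₁ * ‖v‖ ^ 2)
    (y v : EuclideanSpace ℝ (Fin n)) :
    f (y + v) ≤ f y + ⟪gradient f y, v⟫ + Λ₁ * ‖v‖ ^ 2 / 2 := by
  have hdf : Differentiable ℝ f := hf.differentiable (by norm_num)
  have hgC : ContDiff ℝ 1 (gradient f) := by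
    have h1 : ContDiff ℝ 1 (fderiv ℝ f) := hf.fderiv_right (by norm_num)
    exact ((InnerProductSpace.toDual ℝ (EuclideanSpace ℝ (Fin n))).symm.toContinuousLinearEquiv :
      _ ≃L[ℝ] _).contDiff.comp h1
  have hg : Differentiable ℝ (gradient f) := hgC.differentiable one_ne_zero
  have h_inner : ∀ z : EuclideanSpace ℝ (Fin n), ⟪gradient f z, v⟫ = fderiv ℝ f z v := fun z =>
    InnerProductSpace.toDual_symm_apply
  set C : ℝ := Λ₁ * ‖v‖ ^ 2 with hC
  set c : ℝ := ⟪gradient f y, v⟫ with hc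
  have hgd : ∀ s : ℝ, HasDerivAt (fun s : ℝ => y + s • v) v s := fun s => by
    simpa using ((hasDerivAt_id s).smul_const v).const_add y
  set ψ : ℝ → ℝ := fun s => ⟪gradient f (y + s • v), v⟫ with hψdef
  have hψ : ∀ s : ℝ, HasDerivAt ψ ⟪fderiv ℝ (gradient f) (y + s • v) v, v⟫ s := by
    intro s
    have h1 : HasDerivAt (fun s : ℝ => gradient f (y + s • v))
        (fderiv ℝ (gradient f) (y + s • v) v) s :=
      by have := (hg (y + s • v)).hasFDerivAt.comp_hasDerivAt s (hgd s); exact this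
    have := HasDerivAt.inner ℝ h1 (hasDerivAt_const s v)
    simpa [hψdef] using this
  have hφ : ∀ s : ℝ, HasDerivAt (fun s : ℝ => f (y + s • v)) (ψ s) s := by
    intro s
    have h1 : HasDerivAt (fun s : ℝ => f (y + s • v))
        (fderiv ℝ f (y + s • v) v) s :=
      (hdf (y + s • v)).hasFDerivAt.comp_hasDerivAt s (hgd s)
    simpa [hψdef, h_inner] using h1
  set Φ : ℝ → ℝ := fun s => ψ s - c - C * s with hΦdef
  have hΦ : ∀ s : ℝ, HasDerivAt Φ (⟪fderiv ℝ (gradient f) (y + s • v) v, v⟫ - C) s := by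
    intro s
    have := ((hψ s).sub_const c).sub ((hasDerivAt_id s).const_mul C)
    exact this.congr_deriv (by simp)
  have hΦnonpos : ∀ s : ℝ, s ≥ 0 → Φ s ≤ 0 := by
    intro s hs
    have hanti : Antitone Φ := antitone_of_hasDerivAt_nonpos hΦ (by
      intro s
      have := hupper (y + s • v) v
      have h2 : ⟪fderiv ℝ (gradient f) (y + s • v) v, v⟫
          = ⟪v, fderiv ℝ (gradient f) (y + s • v) v⟫ := real_inner_comm _ _
      simp only [Pi.zero_apply]
      rw [h2]
      linarith)
    have h0 : Φ 0 = 0 := by simp [hΦdef, hψdef, hc]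
    have := hanti hs
    rw [h0] at this
    exact this
  set χ : ℝ → ℝ := fun s => f (y + s • v) - f y - s * c - C / 2 * s ^ 2 with hχdef
  have hχ : ∀ s : ℝ, HasDerivAt χ (Φ s) s := by
    intro s
    have hsq : HasDerivAt (fun s : ℝ => C / 2 * s ^ 2) (C * s) s := by
      have := (hasDerivAt_pow 2 s).const_mul (C / 2)
      exact this.congr_deriv (by norm_num; ring)
    have := (((hφ s).sub_const (f y)).sub ((hasDerivAt_id s).mul_const c)).sub hsq
    exact this.congr_deriv (by simp [hΦdef])
  have hanti : AntitoneOn χ (Set.Ici (0 : ℝ)) := by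
    apply antitoneOn_of_hasDerivWithinAt_nonpos (convex_Ici 0)
      (fun s _ => (hχ s).continuousAt.continuousWithinAt)
      (fun s _ => (hχ s).hasDerivWithinAt)
    intro s hs
    rw [interior_Ici] at hs
    exact hΦnonpos s (le_of_lt hs)
  have h10 : χ 1 ≤ χ 0 := hanti (Set.self_mem_Ici) (by norm_num) zero_le_one
  simp only [hχdef, one_smul, zero_smul, add_zero, one_pow, zero_pow, mul_zero, mul_one] at h10
  nlinarith [h10]

/-- Finite termination of the Regime-0 KGD backtracking: iterating
`Δτ_{k+1} = K0(x; x, Δτ_k)` while sufficient decrease fails eventually produces a step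
satisfying the sufficient-decrease condition. -/
theorem stmt_6 {n : ℕ} (f : EuclideanSpace ℝ (Fin n) → ℝ) (hf : ContDiff ℝ 2 f)
    (Λ₁ : ℝ) (hΛ₁ : 0 < Λ₁)
    (hupper : ∀ y v : EuclideanSpace ℝ (Fin n),
      ⟪v, fderiv ℝ (gradient f) y v⟫ ≤ Λ₁ * ‖v‖ ^ 2)
    (x : EuclideanSpace ℝ (Fin n)) (hGx : gradient f x ≠ 0)
    (η : ℝ) (hη0 : 0 < η) (hη : η < 1 / 3)
    (α : ℝ) (hα : 0 < α)
    (Δτ : ℕ → ℝ) (h0 : Δτ 0 = α)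
    (hrec : ∀ k, f x - η * Δτ k * ‖gradient f x‖ ^ 2 < f (x - Δτ k • gradient f x) →
      Δτ (k + 1) = K0 f (gradient f) x (Δτ k)) :
    ∃ p : ℕ, f (x - Δτ p • gradient f x) ≤ f x - η * Δτ p * ‖gradient f x‖ ^ 2 := by
  by_contra hcon
  push_neg at hcon
  set G : EuclideanSpace ℝ (Fin n) := gradient f x with hGdef
  have hg2 : 0 < ‖G‖ ^ 2 := pow_pos (norm_pos_iff.mpr hGx) 2
  set g2 : ℝ := ‖G‖ ^ 2 with hg2def
  -- Taylor bound specialized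
  have htaylor : ∀ t : ℝ, f (x - t • G) ≤ f x - t * g2 + Λ₁ * t ^ 2 * g2 / 2 := by
    intro t
    have := kgd_taylor f hf Λ₁ hupper x (-(t • G))
    have hpt : x + -(t • G) = x - t • G := by abel
    rw [hpt] at this
    have hin : ⟪G, -(t • G)⟫ = -(t * g2) := by
      rw [inner_neg_right, real_inner_smul_right, real_inner_self_eq_norm_sq, ← hg2def]
    have hnv : ‖-(t • G)‖ ^ 2 = t ^ 2 * g2 := by
      rw [norm_neg, norm_smul]
      simp [mul_pow, hg2def, sq_abs]
    rw [← hGdef] at this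
    rw [hin, hnv] at this
    linarith
  set c : ℝ := Real.sqrt (3 - 6 * η) with hcdef
  have hc1 : 1 < c := by
    rw [hcdef]
    rw [show (1:ℝ) = Real.sqrt 1 by simp]
    exact Real.sqrt_lt_sqrt (by norm_num) (by linarith)
  have hc0 : 0 < c := lt_trans one_pos hc1
  -- induction: positivity and geometric decay
  have hkey : ∀ k, 0 < Δτ k ∧ Δτ k ≤ α / c ^ k := by
    intro k
    induction k with
    | zero => simp [h0, hα]
    | succ k ih =>
      obtain ⟨ht, hle⟩ := ih
      set t := Δτ k with htdef
      have hrk := hrec k (hcon k)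
      set N : ℝ := f (x - t • G) - f x with hNdef
      set D : ℝ := ‖G + gradient f (x - t • G)‖ ^ 2 + 4 * g2 with hDdef
      have hD4 : 4 * g2 ≤ D := by
        rw [hDdef]
        nlinarith [sq_nonneg ‖G + gradient f (x - t • G)‖]
      have hDpos : 0 < D := by linarith
      have hN : -(η * t * g2) < N := by
        have := hcon k
        rw [hNdef]
        linarith
      set r : ℝ := 3 + 24 * N / (t * D) with hrdef
      have hr : 3 - 6 * η ≤ r := by
        rw [hrdef]
        have h1 : -(6 * η) ≤ 24 * N / (t * D) := by
          rw [le_div_iff₀ (mul_pos ht hDpos)]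
          nlinarith [mul_nonneg (mul_nonneg hη0.le ht.le) (sub_nonneg.2 hD4)]
        linarith
      have hr0 : 0 < r := by linarith
      have hK : Δτ (k + 1) = t / Real.sqrt r := by
        rw [hrk]
        unfold K0
        rw [hrdef, hNdef, hDdef, hg2def, hGdef]
      have hsr : c ≤ Real.sqrt r := by
        rw [hcdef]
        exact Real.sqrt_le_sqrt hr
      have hsr0 : 0 < Real.sqrt r := Real.sqrt_pos.2 hr0
      constructor
      · rw [hK]; exact div_pos ht hsr0
      · rw [hK, pow_succ]
        calc t / Real.sqrt r ≤ t / c := by gcongr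
          _ ≤ (α / c ^ k) / c := by gcongr
          _ = α / (c ^ k * c) := by rw [div_div]
  -- choose k large
  set T : ℝ := 2 * (1 - η) / Λ₁ with hTdef
  have hT0 : 0 < T := by
    apply div_pos _ hΛ₁
    linarith
  obtain ⟨k, hk⟩ := pow_unbounded_of_one_lt (α / T) hc1
  have hck : 0 < c ^ k := pow_pos hc0 k
  have hlt : α / c ^ k < T := by
    rw [div_lt_iff₀ hck]
    rw [div_lt_iff₀ hT0] at hk
    nlinarith
  obtain ⟨ht, hle⟩ := hkey k
  have htT : Δτ k < T := lt_of_le_of_lt hle hlt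
  have hΛt : Λ₁ * Δτ k < 2 * (1 - η) := by
    rw [hTdef, lt_div_iff₀ hΛ₁] at htT
    linarith [htT]
  have h1 := hcon k
  have h2 := htaylor (Δτ k)
  nlinarith [mul_pos ht hg2, mul_lt_mul_of_pos_right hΛt (mul_pos ht hg2)]
end

section
/- Let f : ℝⁿ → ℝ, x ∈ ℝⁿ with G(x) = ∇f(x) ≠ 0, Δτ > 0, and 0 < η < 1/3, and set x̃ = x − Δτ G(x). If f(x̃) ≥ f(x) − η Δτ ‖G(x)‖², then 3 + 24(f(x̃) − f(x))/(Δτ(‖G(x) + G(x̃)‖² + 4‖G(x)‖²)) ≥ 3(1 − 2η) > 0, and consequently the Regime-0 KGD step-size satisfies K0(x; x, Δτ) ≤ Δτ / √(3(1 − 2η)). -/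
open scoped RealInnerProductSpace

/-- If the sufficient-decrease condition fails at a trial step `Δτ`, then the
radicand in the Regime-0 KGD step-size is at least `3(1 − 2η) > 0`, and consequently
`K0(x; x, Δτ) ≤ Δτ / √(3(1 − 2η))`. -/
theorem stmt_7 {n : ℕ} (f : EuclideanSpace ℝ (Fin n) → ℝ)
    (x : EuclideanSpace ℝ (Fin n)) (hGx : gradient f x ≠ 0)
    (Δτ : ℝ) (hΔτ : 0 < Δτ)
    (η : ℝ) (hη0 : 0 < η) (hη : η < 1 / 3)
    (hfail : f x - η * Δτ * ‖gradient f x‖ ^ 2 ≤ f (x - Δτ • gradient f x)) :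
    3 * (1 - 2 * η) ≤ 3 + 24 * (f (x - Δτ • gradient f x) - f x) /
        (Δτ * (‖gradient f x + gradient f (x - Δτ • gradient f x)‖ ^ 2 +
          4 * ‖gradient f x‖ ^ 2)) ∧
      0 < 3 * (1 - 2 * η) ∧
      K0 f (gradient f) x Δτ ≤ Δτ / Real.sqrt (3 * (1 - 2 * η)) := by
  set g := ‖gradient f x‖ ^ 2 with hg
  set A := ‖gradient f x + gradient f (x - Δτ • gradient f x)‖ ^ 2 with hA
  have hgpos : 0 < g := pow_pos (norm_pos_iff.mpr hGx) 2
  have hA0 : 0 ≤ A := by positivity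
  have hD : 0 < Δτ * (A + 4 * g) := by positivity
  have hrad : 3 * (1 - 2 * η) ≤ 3 + 24 * (f (x - Δτ • gradient f x) - f x) /
      (Δτ * (A + 4 * g)) := by
    have h1 : -(6 * η) ≤ 24 * (f (x - Δτ • gradient f x) - f x) / (Δτ * (A + 4 * g)) := by
      rw [le_div_iff₀ hD]
      nlinarith [mul_nonneg (mul_nonneg hη0.le hΔτ.le) hA0]
    linarith
  have hpos : (0:ℝ) < 3 * (1 - 2 * η) := by nlinarith
  refine ⟨hrad, hpos, ?_⟩
  have hsq : Real.sqrt (3 * (1 - 2 * η)) ≤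
      Real.sqrt (3 + 24 * (f (x - Δτ • gradient f x) - f x) / (Δτ * (A + 4 * g))) :=
    Real.sqrt_le_sqrt hrad
  have hsqpos : 0 < Real.sqrt (3 * (1 - 2 * η)) := Real.sqrt_pos.mpr hpos
  unfold K0
  exact div_le_div_of_nonneg_left hΔτ.le hsqpos hsq
end

section
/- There exist real numbers 0 < a < b and coefficients c₁, c₂, c₃ ∈ ℝ such that the function f : ℝ → ℝ defined by f(x) = (x − b)² for x ≤ −a, f(x) = c₁x⁴ + c₂x² + c₃ for −a < x < a, and f(x) = (x + b)² for x ≥ a is continuously differentiable, and the long-KGD gradient iteration x_{k+1} = x_k − α_k f'(x_k), α_{k+1} = K1(x_{k+1}; x_k, α_k) starting from x₁ = −a with α₁ = 1/2 is well defined with f'(x_k) ≠ 0 for all k and is 4-periodic: x₁ = −a, x₂ = b, x₃ = a, x₄ = −b, and x_{k+4} = x_k for all k ≥ 1; in particular the iteration does not converge. -/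
open Filter Set

noncomputable def Ff (a : ℝ) : ℝ → ℝ := fun x =>
  if x ≤ -a then (x - 1) ^ 2
  else if x < a then 0 * x ^ 4 + (a + 1) / a * x ^ 2 + (a + 1)
  else (x + 1) ^ 2

noncomputable def Gg (a : ℝ) : ℝ → ℝ := fun x =>
  if x ≤ -a then 2 * (x - 1)
  else if x ≤ a then 2 * (a + 1) / a * x
  else 2 * (x + 1)

noncomputable def Xx (a : ℝ) : ℕ → ℝ := fun k =>
  if k % 4 = 1 then -a else if k % 4 = 2 then 1 else if k % 4 = 3 then a else -1

noncomputable def Aa (a : ℝ) : ℕ → ℝ := fun k =>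
  if k % 2 = 1 then 1 / 2 else (1 - a) / 4

lemma Ff_le {a y : ℝ} (h : y ≤ -a) : Ff a y = (y - 1) ^ 2 := by
  simp only [Ff]; rw [if_pos h]

lemma Ff_mid {a y : ℝ} (h1 : ¬ y ≤ -a) (h2 : y < a) :
    Ff a y = 0 * y ^ 4 + (a + 1) / a * y ^ 2 + (a + 1) := by
  simp only [Ff]; rw [if_neg h1, if_pos h2]

lemma Ff_ge {a y : ℝ} (h1 : ¬ y ≤ -a) (h2 : ¬ y < a) : Ff a y = (y + 1) ^ 2 := by
  simp only [Ff]; rw [if_neg h1, if_neg h2]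

lemma cubic_root : ∃ a : ℝ, 0 < a ∧ a < 1 ∧ a ^ 3 + 3 * a ^ 2 + 7 * a = 3 := by
  have hc : ContinuousOn (fun t : ℝ => t ^ 3 + 3 * t ^ 2 + 7 * t - 3) (Icc 0 1) := by
    fun_prop
  have h := intermediate_value_Ioo (by norm_num : (0:ℝ) ≤ 1) hc
  have h0 : (0:ℝ) ∈ Ioo ((fun t : ℝ => t ^ 3 + 3 * t ^ 2 + 7 * t - 3) 0)
      ((fun t : ℝ => t ^ 3 + 3 * t ^ 2 + 7 * t - 3) 1) := by norm_num
  obtain ⟨a, ha, ha0⟩ := h h0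
  refine ⟨a, ha.1, ha.2, ?_⟩
  have h1 : a ^ 3 + 3 * a ^ 2 + 7 * a - 3 = 0 := ha0
  linarith

lemma hasDerivFf {a : ℝ} (ha0 : 0 < a) : ∀ x : ℝ, HasDerivAt (Ff a) (Gg a x) x := by
  have ha : a ≠ 0 := ne_of_gt ha0
  intro x
  have hp1 : ∀ y : ℝ, HasDerivAt (fun z : ℝ => (z - 1) ^ 2) (2 * (y - 1)) y := by
    intro y
    simpa using ((hasDerivAt_id y).sub_const 1).fun_pow 2
  have hp3 : ∀ y : ℝ, HasDerivAt (fun z : ℝ => (z + 1) ^ 2) (2 * (y + 1)) y := by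
    intro y
    simpa using ((hasDerivAt_id y).add_const 1).fun_pow 2
  have hp2 : ∀ y : ℝ, HasDerivAt
      (fun z : ℝ => 0 * z ^ 4 + (a + 1) / a * z ^ 2 + (a + 1))
      (2 * (a + 1) / a * y) y := by
    intro y
    have h1 := ((hasDerivAt_pow 4 y).const_mul (0:ℝ)).fun_add
      ((hasDerivAt_pow 2 y).const_mul ((a + 1) / a))
    have h2 := h1.add_const (a + 1)
    refine h2.congr_deriv ?_
    ring
  rcases lt_trichotomy x (-a) with hx | hx | hx
  · -- x < -a
    have hG : Gg a x = 2 * (x - 1) := if_pos hx.le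
    rw [hG]
    refine (hp1 x).congr_of_eventuallyEq ?_
    filter_upwards [Iio_mem_nhds hx] with y hy
    exact Ff_le (le_of_lt hy)
  · -- x = -a
    subst hx
    have hG : Gg a (-a) = 2 * (-a - 1) := if_pos le_rfl
    rw [hG]
    have hleft : HasDerivWithinAt (Ff a) (2 * (-a - 1)) (Iic (-a)) (-a) := by
      refine ((hp1 (-a)).hasDerivWithinAt).congr ?_ ?_
      · intro y hy; exact Ff_le hy
      · exact Ff_le le_rfl
    have hright : HasDerivWithinAt (Ff a) (2 * (-a - 1)) (Ici (-a)) (-a) := by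
      have hd : HasDerivWithinAt
          (fun z : ℝ => 0 * z ^ 4 + (a + 1) / a * z ^ 2 + (a + 1))
          (2 * (-a - 1)) (Ici (-a)) (-a) := by
        have h := (hp2 (-a)).hasDerivWithinAt (s := Ici (-a))
        refine h.congr_deriv ?_
        field_simp
        ring
      have hkey : (-a - 1) ^ 2 = 0 * (-a) ^ 4 + (a + 1) / a * (-a) ^ 2 + (a + 1) := by
        field_simp
        ring
      refine hd.congr_of_eventuallyEq ?_ ?_
      · have hmem : Iio a ∈ nhdsWithin (-a) (Ici (-a)) :=
          nhdsWithin_le_nhds (Iio_mem_nhds (by linarith))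
        filter_upwards [hmem, self_mem_nhdsWithin] with y hy hy'
        rcases eq_or_lt_of_le (mem_Ici.mp hy') with h | h
        · rw [← h, Ff_le le_rfl]
          exact hkey
        · rw [Ff_mid (not_le.2 h) (mem_Iio.mp hy)]
      · rw [Ff_le le_rfl]; exact hkey
    have h := hleft.union hright
    rwa [Iic_union_Ici, hasDerivWithinAt_univ] at h
  · -- -a < x
    rcases lt_trichotomy x a with hxa | hxa | hxa
    · have hG : Gg a x = 2 * (a + 1) / a * x := by
        simp only [Gg]; rw [if_neg (not_le.2 hx), if_pos hxa.le]
      rw [hG]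
      refine (hp2 x).congr_of_eventuallyEq ?_
      filter_upwards [Ioo_mem_nhds hx hxa] with y hy
      exact Ff_mid (not_le.2 hy.1) hy.2
    · rw [hxa] at hx ⊢
      have hG : Gg a a = 2 * (a + 1) / a * a := by
        simp only [Gg]; rw [if_neg (not_le.2 hx), if_pos le_rfl]
      rw [hG]
      have hkey : (a + 1) ^ 2 = 0 * a ^ 4 + (a + 1) / a * a ^ 2 + (a + 1) := by
        field_simp
        ring
      have hleft : HasDerivWithinAt (Ff a) (2 * (a + 1) / a * a) (Iic a) a := by
        refine ((hp2 a).hasDerivWithinAt).congr_of_eventuallyEq ?_ ?_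
        · have hmem : Ioi (-a) ∈ nhdsWithin a (Iic a) :=
            nhdsWithin_le_nhds (Ioi_mem_nhds hx)
          filter_upwards [hmem, self_mem_nhdsWithin] with y hy hy'
          rcases eq_or_lt_of_le (mem_Iic.mp hy') with h | h
          · rw [h, Ff_ge (not_le.2 hx) (lt_irrefl a)]
            exact hkey
          · rw [Ff_mid (not_le.2 (mem_Ioi.mp hy)) h]
        · rw [Ff_ge (not_le.2 hx) (lt_irrefl a)]
          exact hkey
      have hright : HasDerivWithinAt (Ff a) (2 * (a + 1) / a * a) (Ici a) a := by
        have hd : HasDerivWithinAt (fun z : ℝ => (z + 1) ^ 2) (2 * (a + 1) / a * a)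
            (Ici a) a := by
          have h := (hp3 a).hasDerivWithinAt (s := Ici a)
          refine h.congr_deriv ?_
          field_simp
        refine hd.congr ?_ ?_
        · intro y hy
          exact Ff_ge (not_le.2 (by have := mem_Ici.mp hy; linarith)) (not_lt.2 hy)
        · exact Ff_ge (not_le.2 hx) (lt_irrefl a)
      have h := hleft.union hright
      rwa [Iic_union_Ici, hasDerivWithinAt_univ] at h
    · have hG : Gg a x = 2 * (x + 1) := by
        simp only [Gg]; rw [if_neg (not_le.2 hx), if_neg (not_le.2 hxa)]
      rw [hG]
      refine (hp3 x).congr_of_eventuallyEq ?_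
      filter_upwards [Ioi_mem_nhds hxa] with y hy
      have hy' := mem_Ioi.mp hy
      exact Ff_ge (not_le.2 (by linarith)) (not_lt.2 hy'.le)

lemma contGg {a : ℝ} (ha0 : 0 < a) : Continuous (Gg a) := by
  have ha : a ≠ 0 := ne_of_gt ha0
  have hB : Continuous (fun x : ℝ => if x ≤ a then 2 * (a + 1) / a * x else 2 * (x + 1)) := by
    refine Continuous.if_le (by fun_prop) (by fun_prop) continuous_id continuous_const ?_
    intro x hx
    rw [hx]; field_simp
  have hGeq : Gg a = fun x : ℝ => if x ≤ -a then 2 * (x - 1)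
      else if x ≤ a then 2 * (a + 1) / a * x else 2 * (x + 1) := rfl
  rw [hGeq]
  refine Continuous.if_le (by fun_prop) hB continuous_id continuous_const ?_
  intro x hx
  rw [hx, if_pos (by linarith : -a ≤ a)]
  field_simp
  ring

lemma contDiffFf {a : ℝ} (ha0 : 0 < a) : ContDiff ℝ 1 (Ff a) := by
  rw [contDiff_one_iff_deriv]
  refine ⟨fun x => (hasDerivFf ha0 x).differentiableAt, ?_⟩
  have h : deriv (Ff a) = Gg a := funext fun x => (hasDerivFf ha0 x).deriv
  rw [h]
  exact contGg ha0

/-- There is a piecewise-defined continuously differentiable function on ℝ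
for which the long-KGD gradient iteration starting from `x₁ = −a` with `α₁ = 1/2` is well
defined and cycles 4-periodically through `−a, b, a, −b`; in particular it does not
converge. -/
theorem stmt_10 :
    ∃ (a b c₁ c₂ c₃ : ℝ), 0 < a ∧ a < b ∧
      ∃ f : ℝ → ℝ,
        (∀ x : ℝ, f x = if x ≤ -a then (x - b) ^ 2
          else if x < a then c₁ * x ^ 4 + c₂ * x ^ 2 + c₃
          else (x + b) ^ 2) ∧
        ContDiff ℝ 1 f ∧
        ∃ (x : ℕ → ℝ) (α : ℕ → ℝ),
          x 1 = -a ∧ α 1 = 1 / 2 ∧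
          (∀ k, 1 ≤ k → deriv f (x k) ≠ 0) ∧
          (∀ k, 1 ≤ k → x (k + 1) = x k - α k * deriv f (x k)) ∧
          (∀ k, 1 ≤ k → α (k + 1) =
            α k / (2 + 2 * (f (x (k + 1)) - f (x k)) / (α k * deriv f (x k) ^ 2))) ∧
          x 2 = b ∧ x 3 = a ∧ x 4 = -b ∧
          (∀ k, 1 ≤ k → x (k + 4) = x k) ∧
          ¬ ∃ l : ℝ, Tendsto x atTop (nhds l) := by
  obtain ⟨a, ha0, ha1, hc⟩ := cubic_root
  have ha : a ≠ 0 := ne_of_gt ha0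
  have hap : a + 1 ≠ 0 := by positivity
  have h1a : (1:ℝ) - a ≠ 0 := ne_of_gt (by linarith)
  have hder : ∀ y, deriv (Ff a) y = Gg a y := fun y => (hasDerivFf ha0 y).deriv
  -- derivative values
  have hgna : Gg a (-a) = 2 * (-a - 1) := by simp only [Gg]; rw [if_pos le_rfl]
  have hg1 : Gg a 1 = 2 * (1 + 1) := by
    simp only [Gg]
    rw [if_neg (not_le.2 (by linarith : -a < 1)), if_neg (not_le.2 ha1)]
  have hga : Gg a a = 2 * (a + 1) / a * a := by
    simp only [Gg]; rw [if_neg (not_le.2 (by linarith : -a < a)), if_pos le_rfl]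
  have hgn1 : Gg a (-1) = 2 * (-1 - 1) := by
    simp only [Gg]; rw [if_pos (by linarith : (-1:ℝ) ≤ -a)]
  -- function values
  have hfna : Ff a (-a) = (a + 1) ^ 2 := by rw [Ff_le le_rfl]; ring
  have hf1 : Ff a 1 = 4 := by
    rw [Ff_ge (not_le.2 (by linarith : -a < 1)) (not_lt.2 ha1.le)]; norm_num
  have hfa : Ff a a = (a + 1) ^ 2 := by
    rw [Ff_ge (not_le.2 (by linarith : -a < a)) (lt_irrefl a)]
  have hfn1 : Ff a (-1) = 4 := by
    rw [Ff_le (by linarith : (-1:ℝ) ≤ -a)]; norm_num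
  refine ⟨a, 1, 0, (a + 1) / a, a + 1, ha0, ha1, Ff a, fun x => rfl, contDiffFf ha0,
    Xx a, Aa a, ?_, ?_, ?_, ?_, ?_, ?_, ?_, ?_, ?_, ?_⟩
  · simp [Xx]
  · simp [Aa]
  · -- deriv ≠ 0
    intro k _
    rcases (by omega : k % 4 = 0 ∨ k % 4 = 1 ∨ k % 4 = 2 ∨ k % 4 = 3) with hr | hr | hr | hr
    · rw [show Xx a k = -1 by simp [Xx, hr], hder, hgn1]; norm_num
    · rw [show Xx a k = -a by simp [Xx, hr], hder, hgna]
      intro h; nlinarith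
    · rw [show Xx a k = 1 by simp [Xx, hr], hder, hg1]; norm_num
    · rw [show Xx a k = a by simp [Xx, hr], hder, hga]
      positivity
  · -- x recursion
    intro k _
    rcases (by omega : k % 4 = 0 ∨ k % 4 = 1 ∨ k % 4 = 2 ∨ k % 4 = 3) with hr | hr | hr | hr
    · rw [show Xx a k = -1 by simp [Xx, hr],
        show Xx a (k+1) = -a by simp [Xx, show (k+1) % 4 = 1 by omega],
        show Aa a k = (1-a)/4 by simp [Aa, show k % 2 = 0 by omega],
        hder, hgn1]
      ring
    · rw [show Xx a k = -a by simp [Xx, hr],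
        show Xx a (k+1) = 1 by simp [Xx, show (k+1) % 4 = 2 by omega],
        show Aa a k = 1/2 by simp [Aa, show k % 2 = 1 by omega],
        hder, hgna]
      ring
    · rw [show Xx a k = 1 by simp [Xx, hr],
        show Xx a (k+1) = a by simp [Xx, show (k+1) % 4 = 3 by omega],
        show Aa a k = (1-a)/4 by simp [Aa, show k % 2 = 0 by omega],
        hder, hg1]
      ring
    · rw [show Xx a k = a by simp [Xx, hr],
        show Xx a (k+1) = -1 by simp [Xx, show (k+1) % 4 = 0 by omega],
        show Aa a k = 1/2 by simp [Aa, show k % 2 = 1 by omega],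
        hder, hga]
      field_simp
      ring
  · -- α recursion
    intro k _
    rcases (by omega : k % 4 = 0 ∨ k % 4 = 1 ∨ k % 4 = 2 ∨ k % 4 = 3) with hr | hr | hr | hr
    · rw [show Xx a k = -1 by simp [Xx, hr],
        show Xx a (k+1) = -a by simp [Xx, show (k+1) % 4 = 1 by omega],
        show Aa a k = (1-a)/4 by simp [Aa, show k % 2 = 0 by omega],
        show Aa a (k+1) = 1/2 by simp [Aa, show (k+1) % 2 = 1 by omega],
        hder, hgn1, hfna, hfn1]
      have hden : 2 + 2*((a+1)^2 - 4)/((1-a)/4*(2*(-1-1))^2) = (1-a)/2 := by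
        field_simp
        ring
      rw [hden]
      field_simp
      ring
    · rw [show Xx a k = -a by simp [Xx, hr],
        show Xx a (k+1) = 1 by simp [Xx, show (k+1) % 4 = 2 by omega],
        show Aa a k = 1/2 by simp [Aa, show k % 2 = 1 by omega],
        show Aa a (k+1) = (1-a)/4 by simp [Aa, show (k+1) % 2 = 0 by omega],
        hder, hgna, hfna, hf1]
      have hsq2 : (1/2:ℝ)*(2*(-a-1))^2 = 2*(a+1)^2 := by ring
      rw [hsq2]
      have hden : 2 + 2*(4 - (a+1)^2)/(2*(a+1)^2) = ((a+1)^2+4)/(a+1)^2 := by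
        field_simp
        ring
      rw [hden, div_div_eq_mul_div, eq_div_iff (by positivity)]
      field_simp
      linear_combination (-2)*hc
    · rw [show Xx a k = 1 by simp [Xx, hr],
        show Xx a (k+1) = a by simp [Xx, show (k+1) % 4 = 3 by omega],
        show Aa a k = (1-a)/4 by simp [Aa, show k % 2 = 0 by omega],
        show Aa a (k+1) = 1/2 by simp [Aa, show (k+1) % 2 = 1 by omega],
        hder, hg1, hfa, hf1]
      have hden : 2 + 2*((a+1)^2 - 4)/((1-a)/4*(2*(1+1))^2) = (1-a)/2 := by
        field_simp
        ring
      rw [hden]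
      field_simp
      ring
    · rw [show Xx a k = a by simp [Xx, hr],
        show Xx a (k+1) = -1 by simp [Xx, show (k+1) % 4 = 0 by omega],
        show Aa a k = 1/2 by simp [Aa, show k % 2 = 1 by omega],
        show Aa a (k+1) = (1-a)/4 by simp [Aa, show (k+1) % 2 = 0 by omega],
        hder, hga, hfa, hfn1]
      have hsq2 : (1/2:ℝ)*(2*(a+1)/a*a)^2 = 2*(a+1)^2 := by field_simp
      rw [hsq2]
      have hden : 2 + 2*(4 - (a+1)^2)/(2*(a+1)^2) = ((a+1)^2+4)/(a+1)^2 := by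
        field_simp
        ring
      rw [hden, div_div_eq_mul_div, eq_div_iff (by positivity)]
      field_simp
      linear_combination (-2)*hc
  · simp [Xx]
  · simp [Xx]
  · simp [Xx]
  · intro k _
    simp [Xx, Nat.add_mod_right]
  · rintro ⟨l, hl⟩
    have ht1 : Tendsto (fun n : ℕ => 4 * n + 1) atTop atTop :=
      tendsto_atTop_mono (fun n => by simp only [id_eq]; omega) tendsto_id
    have ht2 : Tendsto (fun n : ℕ => 4 * n + 2) atTop atTop :=
      tendsto_atTop_mono (fun n => by simp only [id_eq]; omega) tendsto_id
    have h1 : Tendsto (fun n : ℕ => Xx a (4 * n + 1)) atTop (nhds l) := hl.comp ht1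
    have h2 : Tendsto (fun n : ℕ => Xx a (4 * n + 2)) atTop (nhds l) := hl.comp ht2
    have e1 : (fun n : ℕ => Xx a (4 * n + 1)) = fun _ => -a :=
      funext fun n => by simp [Xx, show (4 * n + 1) % 4 = 1 by omega]
    have e2 : (fun n : ℕ => Xx a (4 * n + 2)) = fun _ => (1:ℝ) :=
      funext fun n => by simp [Xx, show (4 * n + 2) % 4 = 2 by omega]
    rw [e1] at h1
    rw [e2] at h2
    have hla : l = -a := tendsto_nhds_unique h1 tendsto_const_nhds
    have hl1 : l = 1 := tendsto_nhds_unique h2 tendsto_const_nhds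
    linarith [hla ▸ hl1]
end

section
/- Let f : ℝⁿ → ℝ be continuously differentiable, x₀ ∈ ℝⁿ, and suppose the sublevel set Ω = { x ∈ ℝⁿ : f(x) ≤ f(x₀) } is compact. Let η > 0, integer M ≥ 0, and constants 0 < c ≤ A. Suppose the sequences (x_k) ⊂ ℝⁿ and (α_k) ⊂ [c, A] satisfy x_{k+1} = x_k − α_k ∇f(x_k) and the nonmonotone sufficient-decrease condition f(x_{k+1}) ≤ max_{0 ≤ j ≤ min(k, M)} f(x_{k−j}) − η α_k ‖∇f(x_k)‖² for every k ≥ 0. Then x_k ∈ Ω for all k, ∇f(x_k) → 0 as k → ∞, and every cluster point x̄ of (x_k) is a stationary point of f, i.e. ∇f(x̄) = 0. -/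
open Filter

/-- Global convergence of gradient iterations with bounded step-sizes
satisfying the nonmonotone (Grippo–Lampariello–Lucidi type) sufficient-decrease
condition: the iterates stay in the compact sublevel set `Ω`, the gradients tend to zero,
and every cluster point is a stationary point. -/
theorem stmt_11 {n : ℕ} (f : EuclideanSpace ℝ (Fin n) → ℝ) (hf : ContDiff ℝ 1 f)
    (x₀ : EuclideanSpace ℝ (Fin n))
    (hΩ : IsCompact {y : EuclideanSpace ℝ (Fin n) | f y ≤ f x₀})
    (η : ℝ) (hη : 0 < η) (M : ℕ)
    (c A : ℝ) (hc : 0 < c) (hcA : c ≤ A)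
    (x : ℕ → EuclideanSpace ℝ (Fin n)) (α : ℕ → ℝ)
    (hx0 : x 0 = x₀)
    (hα : ∀ k, α k ∈ Set.Icc c A)
    (hstep : ∀ k, x (k + 1) = x k - α k • gradient f (x k))
    (hdec : ∀ k, f (x (k + 1)) ≤
      (Finset.range (min k M + 1)).sup' Finset.nonempty_range_add_one (fun j => f (x (k - j)))
        - η * α k * ‖gradient f (x k)‖ ^ 2) :
    (∀ k, x k ∈ {y : EuclideanSpace ℝ (Fin n) | f y ≤ f x₀}) ∧
      Tendsto (fun k => gradient f (x k)) atTop (nhds 0) ∧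
      ∀ xbar : EuclideanSpace ℝ (Fin n), MapClusterPt xbar atTop x → gradient f xbar = 0 := by
  set F : ℕ → ℝ := fun k =>
    (Finset.range (min k M + 1)).sup' Finset.nonempty_range_add_one (fun j => f (x (k - j)))
    with hFdef
  have hηc : 0 < η * c := mul_pos hη hc
  have hFx : ∀ k, f (x k) ≤ F k := by
    intro k
    have h0 : (0 : ℕ) ∈ Finset.range (min k M + 1) := Finset.mem_range.mpr (Nat.succ_pos _)
    have h := Finset.le_sup' (fun j => f (x (k - j))) h0
    simp only [Nat.sub_zero] at h
    exact h
  have hdec' : ∀ k, f (x (k + 1)) ≤ F k - η * c * ‖gradient f (x k)‖ ^ 2 := by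
    intro k
    have h : f (x (k + 1)) ≤ F k - η * α k * ‖gradient f (x k)‖ ^ 2 := hdec k
    have hg : (0:ℝ) ≤ ‖gradient f (x k)‖ ^ 2 := sq_nonneg _
    have h2 : (0:ℝ) ≤ (α k - c) * η * ‖gradient f (x k)‖ ^ 2 :=
      mul_nonneg (mul_nonneg (sub_nonneg.mpr (hα k).1) hη.le) hg
    nlinarith
  have hFanti : ∀ k, F (k + 1) ≤ F k := by
    intro k
    apply Finset.sup'_le
    intro j hj
    have hj' : j < min (k+1) M + 1 := Finset.mem_range.mp hj
    match j with
    | 0 =>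
      have := hdec' k
      have hg : (0:ℝ) ≤ η * c * ‖gradient f (x k)‖ ^ 2 :=
        mul_nonneg hηc.le (sq_nonneg _)
      simpa using this.trans (by linarith)
    | (i+1) =>
      have hi : i ∈ Finset.range (min k M + 1) := Finset.mem_range.mpr (by omega)
      have := Finset.le_sup' (fun j => f (x (k - j))) hi
      have he : k + 1 - (i + 1) = k - i := by omega
      rw [he]
      exact this
  have hFanti' : Antitone F := antitone_nat_of_succ_le hFanti
  have hF0 : F 0 = f x₀ := by
    rw [hFdef]; simp [hx0]
  have hmem : ∀ k, f (x k) ≤ f x₀ := fun k =>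
    (hFx k).trans (by rw [← hF0]; exact hFanti' (Nat.zero_le k))
  have hmemΩ : ∀ k, x k ∈ {y : EuclideanSpace ℝ (Fin n) | f y ≤ f x₀} := hmem
  -- lower bound
  obtain ⟨z, hz, hzmin⟩ := hΩ.exists_isMinOn ⟨x₀, by simp⟩ hf.continuous.continuousOn
  have hlow : ∀ k, f z ≤ F k := fun k => (hzmin (hmemΩ k)).trans (hFx k)
  set Fstar := ⨅ k, F k with hFstar
  have hFtend : Tendsto F atTop (nhds Fstar) :=
    tendsto_atTop_ciInf hFanti' ⟨f z, by rintro y ⟨k, rfl⟩; exact hlow k⟩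
  -- uniform continuity helper
  have huc : ∀ (u v : ℕ → EuclideanSpace ℝ (Fin n)),
      (∀ k, u k ∈ {y | f y ≤ f x₀}) → (∀ k, v k ∈ {y | f y ≤ f x₀}) →
      Tendsto (fun k => dist (u k) (v k)) atTop (nhds 0) →
      Tendsto (fun k => f (u k) - f (v k)) atTop (nhds 0) := by
    intro u v hu hv hd
    have hUC := hΩ.uniformContinuousOn_of_continuous hf.continuous.continuousOn
    rw [Metric.uniformContinuousOn_iff] at hUC
    rw [Metric.tendsto_atTop] at hd ⊢
    intro ε hε
    obtain ⟨δ, hδ, hδ'⟩ := hUC ε hε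
    obtain ⟨N, hN⟩ := hd δ hδ
    refine ⟨N, fun k hk => ?_⟩
    have h1 := hN k hk
    rw [Real.dist_eq, sub_zero, abs_of_nonneg dist_nonneg] at h1
    have := hδ' (u k) (hu k) (v k) (hv k) h1
    rw [Real.dist_eq] at this
    rw [Real.dist_eq, sub_zero]
    exact this
  -- the index achieving the max
  have hex : ∀ k, ∃ j, j ∈ Finset.range (min k M + 1) ∧ F k = f (x (k - j)) := fun k =>
    Finset.exists_mem_eq_sup' (Finset.nonempty_range_add_one) (fun j => f (x (k - j)))
  choose b hbmem hbF using hex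
  have hbM : ∀ k, b k ≤ M := fun k => by
    have := Finset.mem_range.mp (hbmem k); omega
  set l : ℕ → ℕ := fun k => k - b k with hldef
  have hl1 : ∀ k, k - M ≤ l k := fun k => by
    have := hbM k; simp only [hldef]; omega
  have hl2 : ∀ k, l k ≤ k := fun k => Nat.sub_le _ _
  have hFl : ∀ k, F k = f (x (l k)) := hbF
  have hltop : Tendsto l atTop atTop :=
    tendsto_atTop_mono hl1 (tendsto_sub_atTop_nat M)
  -- squeeze for gradients at a sequence of indices
  have hsq : ∀ (m : ℕ → ℕ), Tendsto (fun k => F (m k)) atTop (nhds Fstar) →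
      Tendsto (fun k => f (x (m k + 1))) atTop (nhds Fstar) →
      Tendsto (fun k => ‖gradient f (x (m k))‖ ^ 2) atTop (nhds 0) := by
    intro m hFm hfm
    have h1 : Tendsto (fun k => (η*c)⁻¹ * (F (m k) - f (x (m k + 1)))) atTop (nhds 0) := by
      have := (hFm.sub hfm)
      simpa using this.const_mul ((η*c)⁻¹)
    refine squeeze_zero' (Eventually.of_forall fun k => sq_nonneg _)
      (Eventually.of_forall fun k => ?_) h1
    rw [le_inv_mul_iff₀ hηc]
    linarith [hdec' (m k)]
  -- norm from squared norm
  have hnormsq : ∀ (u : ℕ → ℝ), (∀ k, 0 ≤ u k) →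
      Tendsto (fun k => (u k) ^ 2) atTop (nhds 0) → Tendsto u atTop (nhds 0) := by
    intro u hu h
    have := (Real.continuous_sqrt.tendsto' 0 0 Real.sqrt_zero).comp h
    refine this.congr fun k => ?_
    simp [Function.comp, Real.sqrt_sq (hu k)]
  -- step size goes to zero given gradient sq to zero
  have hdist0 : ∀ (m : ℕ → ℕ),
      Tendsto (fun k => ‖gradient f (x (m k))‖ ^ 2) atTop (nhds 0) →
      Tendsto (fun k => dist (x (m k)) (x (m k + 1))) atTop (nhds 0) := by
    intro m hg
    have hn := hnormsq (fun k => ‖gradient f (x (m k))‖) (fun k => norm_nonneg _) hg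
    have hA : Tendsto (fun k => A * ‖gradient f (x (m k))‖) atTop (nhds 0) := by
      simpa using hn.const_mul A
    apply squeeze_zero (fun k => dist_nonneg) (fun k => ?_) hA
    have : x (m k) - x (m k + 1) = α (m k) • gradient f (x (m k)) := by
      rw [hstep (m k)]; abel
    rw [dist_eq_norm, this, norm_smul, Real.norm_eq_abs,
      abs_of_pos (lt_of_lt_of_le hc (hα (m k)).1)]
    exact mul_le_mul_of_nonneg_right (hα (m k)).2 (norm_nonneg _)
  -- key induction
  have key : ∀ j : ℕ, Tendsto (fun k => f (x (l k - j))) atTop (nhds Fstar) := by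
    intro j
    induction j with
    | zero =>
      have := hFtend.congr hFl
      simpa using this
    | succ j ih =>
      have hmtop : Tendsto (fun k => l k - (j+1)) atTop atTop :=
        (tendsto_sub_atTop_nat (j+1)).comp hltop
      have hev : ∀ᶠ k in atTop, l k - (j+1) + 1 = l k - j := by
        filter_upwards [hltop.eventually_ge_atTop (j+1)] with k hk
        omega
      have hfm : Tendsto (fun k => f (x (l k - (j+1) + 1))) atTop (nhds Fstar) :=
        ih.congr' (hev.mono fun k hk => by rw [← hk])
      have hFm : Tendsto (fun k => F (l k - (j+1))) atTop (nhds Fstar) := hFtend.comp hmtop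
      have hg := hsq (fun k => l k - (j+1)) hFm hfm
      have hd := hdist0 (fun k => l k - (j+1)) hg
      have hdiff := huc (fun k => x (l k - (j+1))) (fun k => x (l k - (j+1) + 1))
        (fun k => hmemΩ _) (fun k => hmemΩ _) hd
      have := hdiff.add hfm
      simpa using this
  -- f (x k) → Fstar
  have hfx : Tendsto (fun k => f (x k)) atTop (nhds Fstar) := by
    rw [Metric.tendsto_atTop]
    intro ε hε
    have h := fun j => Metric.tendsto_atTop.mp (key j) ε hε
    choose N hN using h
    refine ⟨(Finset.range (M+1)).sup N, fun k hk => ?_⟩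
    have h1 : k ≤ l (k + M) := by have := hl1 (k+M); omega
    have h2 : l (k+M) ≤ k + M := hl2 (k+M)
    have hj : l (k+M) - k ≤ M := by omega
    have hNle : N (l (k+M) - k) ≤ (Finset.range (M+1)).sup N :=
      Finset.le_sup (Finset.mem_range.mpr (by omega))
    have := hN (l (k+M) - k) (k+M) (by omega)
    have he : l (k+M) - (l (k+M) - k) = k := by omega
    rw [he] at this
    exact this
  -- gradients → 0
  have hfx1 : Tendsto (fun k => f (x (k + 1))) atTop (nhds Fstar) :=
    hfx.comp (tendsto_add_atTop_nat 1)
  have hgsq : Tendsto (fun k => ‖gradient f (x k)‖ ^ 2) atTop (nhds 0) :=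
    hsq (fun k => k) hFtend hfx1
  have hgn : Tendsto (fun k => ‖gradient f (x k)‖) atTop (nhds 0) :=
    hnormsq _ (fun k => norm_nonneg _) hgsq
  have hgtend : Tendsto (fun k => gradient f (x k)) atTop (nhds 0) :=
    tendsto_zero_iff_norm_tendsto_zero.mpr hgn
  refine ⟨hmemΩ, hgtend, ?_⟩
  intro xbar hcl
  have hgc : Continuous (gradient f) := by
    have h1 : Continuous (fderiv ℝ f) := hf.continuous_fderiv one_ne_zero
    exact ((InnerProductSpace.toDual ℝ (EuclideanSpace ℝ (Fin n))).symm.continuous).comp h1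
  have h2 : MapClusterPt (gradient f xbar) atTop ((gradient f) ∘ x) :=
    hcl.continuousAt_comp hgc.continuousAt
  have h3 : (nhds (gradient f xbar) ⊓ nhds (0 : EuclideanSpace ℝ (Fin n))).NeBot := by
    have hle : Filter.map ((gradient f) ∘ x) atTop ≤ nhds 0 := hgtend
    have h2' : (nhds (gradient f xbar) ⊓ Filter.map ((gradient f) ∘ x) atTop).NeBot := h2
    exact h2'.mono (le_inf inf_le_left (le_trans inf_le_right hle))
  exact eq_of_nhds_neBot h3
end

section
/- Let f : ℝⁿ → ℝ be continuously differentiable, x₀ ∈ ℝⁿ, and suppose the sublevel set Ω = { x ∈ ℝⁿ : f(x) ≤ f(x₀) } is compact. Let η > 0, integer M ≥ 0, and constants 0 < c ≤ A. Suppose the sequences (x_k) ⊂ ℝⁿ and (α_k) ⊂ [c, A] satisfy x_{k+1} = x_k − α_k ∇f(x_k) and f(x_{k+1}) ≤ max_{0 ≤ j ≤ min(k, M)} f(x_{k−j}) − η α_k ‖∇f(x_k)‖² for every k ≥ 0. If moreover f has only finitely many stationary points in Ω, then the sequence (x_k) converges. -/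
open Filter

lemma aux_sqrt {u : ℕ → ℝ} (hu : ∀ k, 0 ≤ u k)
    (h : Tendsto (fun k => u k ^ 2) atTop (nhds 0)) : Tendsto u atTop (nhds 0) := by
  have h2 := h.sqrt
  rw [Real.sqrt_zero] at h2
  exact h2.congr fun k => Real.sqrt_sq (hu k)

lemma aux_gsq {u v : ℕ → ℝ} {C : ℝ} (hC : 0 < C)
    (hle : ∀ᶠ k in atTop, C * u k ^ 2 ≤ v k) (hu0 : ∀ k, 0 ≤ u k)
    (hv : Tendsto v atTop (nhds 0)) : Tendsto u atTop (nhds 0) := by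
  apply aux_sqrt hu0
  have hsq : Tendsto (fun k => C * u k ^ 2) atTop (nhds 0) :=
    tendsto_of_tendsto_of_tendsto_of_le_of_le' tendsto_const_nhds hv
      (Eventually.of_forall fun k => mul_nonneg hC.le (sq_nonneg _)) hle
  have h2 := hsq.const_mul C⁻¹
  rw [mul_zero] at h2
  exact h2.congr fun k => by rw [← mul_assoc, inv_mul_cancel₀ hC.ne', one_mul]

lemma aux_sep {E : Type*} [MetricSpace E] {S : Set E} (hS : S.Finite) (a : E) :
    ∃ r > 0, ∀ p ∈ S, p ≠ a → r ≤ dist a p := by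
  have hcl : IsClosed (S \ {a}) := (hS.subset Set.diff_subset).isClosed
  have ha : a ∈ (S \ {a})ᶜ := by simp
  obtain ⟨r, hr, hball⟩ := Metric.isOpen_iff.mp hcl.isOpen_compl a ha
  refine ⟨r, hr, fun p hp hne => ?_⟩
  by_contra h
  push_neg at h
  have hmem : p ∈ Metric.ball a r := by rwa [Metric.mem_ball, dist_comm]
  exact hball hmem ⟨hp, hne⟩

lemma aux_unif {E : Type*} [MetricSpace E] {f : E → ℝ} {Ω : Set E}
    (hUC : UniformContinuousOn f Ω) {u v : ℕ → E} (hu : ∀ k, u k ∈ Ω) (hv : ∀ k, v k ∈ Ω)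
    (hd : Tendsto (fun k => dist (u k) (v k)) atTop (nhds 0)) :
    Tendsto (fun k => f (u k) - f (v k)) atTop (nhds 0) := by
  rw [Metric.tendsto_atTop]
  intro ε hε
  obtain ⟨δ, hδ, hδ'⟩ := Metric.uniformContinuousOn_iff.mp hUC ε hε
  obtain ⟨N, hN⟩ := Metric.tendsto_atTop.mp hd δ hδ
  refine ⟨N, fun k hk => ?_⟩
  have h1 : dist (u k) (v k) < δ := by
    have := hN k hk
    rwa [Real.dist_eq, sub_zero, abs_of_nonneg dist_nonneg] at this
  have h2 := hδ' _ (hu k) _ (hv k) h1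
  rw [Real.dist_eq] at h2 ⊢
  rwa [sub_zero]

/-- If, in addition to the hypotheses guaranteeing global convergence of the
nonmonotone gradient iteration, `f` has only finitely many stationary points in the
compact sublevel set `Ω`, then the whole sequence of iterates converges. -/
theorem stmt_12 {n : ℕ} (f : EuclideanSpace ℝ (Fin n) → ℝ) (hf : ContDiff ℝ 1 f)
    (x₀ : EuclideanSpace ℝ (Fin n))
    (hΩ : IsCompact {y : EuclideanSpace ℝ (Fin n) | f y ≤ f x₀})
    (η : ℝ) (hη : 0 < η) (M : ℕ)
    (c A : ℝ) (hc : 0 < c) (hcA : c ≤ A)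
    (x : ℕ → EuclideanSpace ℝ (Fin n)) (α : ℕ → ℝ)
    (hx0 : x 0 = x₀)
    (hα : ∀ k, α k ∈ Set.Icc c A)
    (hstep : ∀ k, x (k + 1) = x k - α k • gradient f (x k))
    (hdec : ∀ k, f (x (k + 1)) ≤
      (Finset.range (min k M + 1)).sup' Finset.nonempty_range_add_one (fun j => f (x (k - j)))
        - η * α k * ‖gradient f (x k)‖ ^ 2)
    (hfin : {y : EuclideanSpace ℝ (Fin n) | f y ≤ f x₀ ∧ gradient f y = 0}.Finite) :
    ∃ l : EuclideanSpace ℝ (Fin n), Tendsto x atTop (nhds l) := by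
  classical
  set F : ℕ → ℝ := fun k =>
    (Finset.range (min k M + 1)).sup' Finset.nonempty_range_add_one (fun j => f (x (k - j)))
    with hFdef
  have hdec' : ∀ k, f (x (k + 1)) ≤ F k - η * α k * ‖gradient f (x k)‖ ^ 2 := hdec
  have hαpos : ∀ k, 0 < α k := fun k => lt_of_lt_of_le hc (hα k).1
  have hterm : ∀ k, 0 ≤ η * α k * ‖gradient f (x k)‖ ^ 2 := fun k =>
    mul_nonneg (mul_nonneg hη.le (hαpos k).le) (sq_nonneg _)
  have hfxF : ∀ k, f (x k) ≤ F k := by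
    intro k
    have h0 : (0 : ℕ) ∈ Finset.range (min k M + 1) := Finset.mem_range.mpr (by omega)
    exact Finset.le_sup' (fun j => f (x (k - j))) h0
  have hFsucc : ∀ k, F (k + 1) ≤ F k := by
    intro k
    show (Finset.range (min (k + 1) M + 1)).sup' Finset.nonempty_range_add_one
      (fun j => f (x (k + 1 - j))) ≤ F k
    apply Finset.sup'_le
    intro j hj
    rw [Finset.mem_range] at hj
    match j with
    | 0 =>
      simpa using (show f (x (k + 1)) ≤ F k by linarith [hdec' k, hterm k])
    | (i + 1) =>
      have hik : k + 1 - (i + 1) = k - i := by omega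
      have hmem : i ∈ Finset.range (min k M + 1) := Finset.mem_range.mpr (by omega)
      rw [hik]
      exact Finset.le_sup' (fun j => f (x (k - j))) hmem
  have hFanti : Antitone F := antitone_nat_of_succ_le hFsucc
  have hF0 : F 0 = f x₀ := by simp [hFdef, hx0]
  have hxΩ : ∀ k, x k ∈ {y : EuclideanSpace ℝ (Fin n) | f y ≤ f x₀} := by
    intro k
    have : F k ≤ f x₀ := le_of_le_of_eq (hFanti (Nat.zero_le k)) hF0
    exact Set.mem_setOf_eq ▸ ((hfxF k).trans this)
  have hΩne : ({y : EuclideanSpace ℝ (Fin n) | f y ≤ f x₀} : Set _).Nonempty :=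
    ⟨x₀, by simp⟩
  obtain ⟨z, hzΩ, hz⟩ := hΩ.exists_isMinOn hΩne hf.continuous.continuousOn
  have hFbdd : BddBelow (Set.range F) := by
    refine ⟨f z, ?_⟩
    rintro _ ⟨k, rfl⟩
    exact (hz (hxΩ k)).trans (hfxF k)
  have hFtend : Tendsto F atTop (nhds (⨅ k, F k)) := tendsto_atTop_ciInf hFanti hFbdd
  set Fstar : ℝ := ⨅ k, F k with hFstar
  -- choose the index attaining the window maximum
  have hex : ∀ k, ∃ m, m ≤ k ∧ k ≤ m + M ∧ f (x m) = F k := by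
    intro k
    obtain ⟨j, hj, hji⟩ :=
      Finset.exists_mem_eq_sup' (Finset.nonempty_range_add_one) (fun j => f (x (k - j)))
    rw [Finset.mem_range] at hj
    exact ⟨k - j, by omega, by omega, hji.symm⟩
  choose ℓ hℓ1 hℓ2 hℓ3 using hex
  have hUC : UniformContinuousOn f {y : EuclideanSpace ℝ (Fin n) | f y ≤ f x₀} :=
    hΩ.uniformContinuousOn_of_continuous hf.continuous.continuousOn
  have hcomp : ∀ j : ℕ, Tendsto (fun k => ℓ k - j) atTop atTop := by
    intro j
    apply tendsto_atTop_mono (fun k => ?_) (tendsto_sub_atTop_nat (M + j))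
    have := hℓ2 k
    omega
  have hP : ∀ j : ℕ, Tendsto (fun k => f (x (ℓ k - j))) atTop (nhds Fstar) := by
    intro j
    induction j with
    | zero =>
      have he : (fun k => f (x (ℓ k - 0))) = F := funext fun k => by rw [Nat.sub_zero, hℓ3]
      rw [he]; exact hFtend
    | succ j ih =>
      have hev : ∀ᶠ k in atTop, ℓ k - j = (ℓ k - (j + 1)) + 1 := by
        filter_upwards [eventually_ge_atTop (M + j + 1)] with k hk
        have := hℓ2 k
        omega
      have hF' : Tendsto (fun k => F (ℓ k - (j + 1))) atTop (nhds Fstar) :=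
        hFtend.comp (hcomp (j + 1))
      have hv : Tendsto (fun k => F (ℓ k - (j + 1)) - f (x (ℓ k - j))) atTop (nhds 0) := by
        have h := hF'.sub ih
        rwa [sub_self] at h
      have hub : ∀ᶠ k in atTop,
          η * c * ‖gradient f (x (ℓ k - (j + 1)))‖ ^ 2
            ≤ F (ℓ k - (j + 1)) - f (x (ℓ k - j)) := by
        filter_upwards [hev] with k hk
        have h1 := hdec' (ℓ k - (j + 1))
        have hca := (hα (ℓ k - (j + 1))).1
        have h2 : η * c * ‖gradient f (x (ℓ k - (j + 1)))‖ ^ 2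
            ≤ η * α (ℓ k - (j + 1)) * ‖gradient f (x (ℓ k - (j + 1)))‖ ^ 2 :=
          mul_le_mul_of_nonneg_right (mul_le_mul_of_nonneg_left hca hη.le)
            (sq_nonneg ‖gradient f (x (ℓ k - (j + 1)))‖)
        rw [hk]
        linarith
      have hg0 : Tendsto (fun k => ‖gradient f (x (ℓ k - (j + 1)))‖) atTop (nhds 0) :=
        aux_gsq (by positivity) hub (fun k => norm_nonneg _) hv
      have hd0 : Tendsto (fun k => dist (x (ℓ k - j)) (x (ℓ k - (j + 1)))) atTop (nhds 0) := by
        apply tendsto_of_tendsto_of_tendsto_of_le_of_le' tendsto_const_nhds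
          (by simpa using hg0.const_mul A)
          (Eventually.of_forall fun k => dist_nonneg)
        filter_upwards [hev] with k hk
        rw [hk]
        have hs : x ((ℓ k - (j + 1)) + 1) - x (ℓ k - (j + 1))
            = -(α (ℓ k - (j + 1)) • gradient f (x (ℓ k - (j + 1)))) := by
          rw [hstep (ℓ k - (j + 1))]; abel
        rw [dist_eq_norm, hs, norm_neg, norm_smul, Real.norm_eq_abs,
          abs_of_pos (hαpos (ℓ k - (j + 1)))]
        exact mul_le_mul_of_nonneg_right (hα (ℓ k - (j + 1))).2 (norm_nonneg _)
      have hdiff : Tendsto (fun k => f (x (ℓ k - j)) - f (x (ℓ k - (j + 1)))) atTop (nhds 0) :=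
        aux_unif hUC (fun k => hxΩ _) (fun k => hxΩ _) hd0
      have h := ih.sub hdiff
      rw [sub_zero] at h
      exact h.congr fun k => by ring
  have hfx1 : Tendsto (fun k => f (x (k + 1))) atTop (nhds Fstar) := by
    rw [Metric.tendsto_atTop]
    intro ε hε
    have h := fun j : ℕ => Metric.tendsto_atTop.mp (hP j) ε hε
    choose Nf hNf using h
    refine ⟨(Finset.range (M + 1)).sup Nf, fun k hk => ?_⟩
    have h1 := hℓ1 (k + M + 1)
    have h2 := hℓ2 (k + M + 1)
    have hj : ℓ (k + M + 1) - (ℓ (k + M + 1) - (k + 1)) = k + 1 := by omega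
    have hjM : ℓ (k + M + 1) - (k + 1) ≤ M := by omega
    have hNle : Nf (ℓ (k + M + 1) - (k + 1)) ≤ (Finset.range (M + 1)).sup Nf :=
      Finset.le_sup (Finset.mem_range.mpr (by omega))
    have h3 := hNf (ℓ (k + M + 1) - (k + 1)) (k + M + 1) (by omega)
    rwa [hj] at h3
  have hvF : Tendsto (fun k => F k - f (x (k + 1))) atTop (nhds 0) := by
    have h := hFtend.sub hfx1
    rwa [sub_self] at h
  have hgall : Tendsto (fun k => ‖gradient f (x k)‖) atTop (nhds 0) := by
    apply aux_gsq (show (0 : ℝ) < η * c by positivity) ?_ (fun k => norm_nonneg _) hvF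
    refine Eventually.of_forall fun k => ?_
    have h1 := hdec' k
    have hca := (hα k).1
    have h2 : η * c * ‖gradient f (x k)‖ ^ 2 ≤ η * α k * ‖gradient f (x k)‖ ^ 2 :=
      mul_le_mul_of_nonneg_right (mul_le_mul_of_nonneg_left hca hη.le)
        (sq_nonneg ‖gradient f (x k)‖)
    linarith
  have hstep0 : Tendsto (fun k => dist (x (k + 1)) (x k)) atTop (nhds 0) := by
    apply tendsto_of_tendsto_of_tendsto_of_le_of_le' tendsto_const_nhds
      (by simpa using hgall.const_mul A)
      (Eventually.of_forall fun k => dist_nonneg)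
    refine Eventually.of_forall fun k => ?_
    have hs : x (k + 1) - x k = -(α k • gradient f (x k)) := by rw [hstep k]; abel
    rw [dist_eq_norm, hs, norm_neg, norm_smul, Real.norm_eq_abs, abs_of_pos (hαpos k)]
    exact mul_le_mul_of_nonneg_right (hα k).2 (norm_nonneg _)
  -- every subsequential limit is a stationary point in Ω
  have hgc : Continuous (gradient f) := by
    have hfd := hf.continuous_fderiv one_ne_zero
    exact (InnerProductSpace.toDual ℝ (EuclideanSpace ℝ (Fin n))).symm.continuous.comp hfd
  have hclusS : ∀ (ψ : ℕ → ℕ), StrictMono ψ → ∀ b,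
      Tendsto (fun k => x (ψ k)) atTop (nhds b) →
      b ∈ {y : EuclideanSpace ℝ (Fin n) | f y ≤ f x₀ ∧ gradient f y = 0} := by
    intro ψ hψ b hb
    refine ⟨?_, ?_⟩
    · exact le_of_tendsto ((hf.continuous.tendsto b).comp hb)
        (Eventually.of_forall fun k => hxΩ (ψ k))
    · have h1 : Tendsto (fun k => ‖gradient f (x (ψ k))‖) atTop (nhds ‖gradient f b‖) :=
        ((hgc.tendsto b).comp hb).norm
      have h2 : Tendsto (fun k => ‖gradient f (x (ψ k))‖) atTop (nhds 0) :=
        hgall.comp hψ.tendsto_atTop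
      exact norm_eq_zero.mp (tendsto_nhds_unique h1 h2)
  -- eventually the sequence is within ε of the stationary set
  have hnear : ∀ ε > 0, ∀ᶠ k in atTop,
      ∃ p ∈ {y : EuclideanSpace ℝ (Fin n) | f y ≤ f x₀ ∧ gradient f y = 0},
        dist (x k) p < ε := by
    intro ε hε
    by_contra hcon
    rw [Filter.not_eventually] at hcon
    have hcon' : ∃ᶠ k in atTop,
        ∀ p ∈ {y : EuclideanSpace ℝ (Fin n) | f y ≤ f x₀ ∧ gradient f y = 0},
          ε ≤ dist (x k) p :=
      hcon.mono fun k hk => by push_neg at hk; exact hk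
    obtain ⟨φ', hφ', hP'⟩ := extraction_of_frequently_atTop hcon'
    obtain ⟨b, hbΩ, ψ, hψ, hψt⟩ := hΩ.tendsto_subseq (fun k => hxΩ (φ' k))
    have hbS := hclusS (fun k => φ' (ψ k)) (hφ'.comp hψ) b hψt
    have hlim : Tendsto (fun k => dist (x (φ' (ψ k))) b) atTop (nhds 0) :=
      tendsto_iff_dist_tendsto_zero.mp hψt
    have hge : ε ≤ 0 := ge_of_tendsto hlim (Eventually.of_forall fun k => hP' (ψ k) b hbS)
    linarith
  -- get a cluster point
  obtain ⟨a, haΩ, φ, hφ, hφt⟩ := hΩ.tendsto_subseq hxΩ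
  obtain ⟨r, hr, hrS⟩ := aux_sep hfin a
  refine ⟨a, ?_⟩
  rw [Metric.tendsto_atTop]
  intro ε hε
  have hmr : 0 < min ε r := lt_min hε hr
  set δ : ℝ := min ε r / 3 with hδdef
  have hδ : 0 < δ := by rw [hδdef]; linarith
  have hsmall : ∀ᶠ k in atTop, dist (x (k + 1)) (x k) < δ := by
    obtain ⟨N, hN⟩ := Metric.tendsto_atTop.mp hstep0 δ hδ
    refine eventually_atTop.mpr ⟨N, fun k hk => ?_⟩
    have h := hN k hk
    rwa [Real.dist_eq, sub_zero, abs_of_nonneg dist_nonneg] at h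
  obtain ⟨N, hN⟩ := eventually_atTop.mp (hsmall.and (hnear δ hδ))
  obtain ⟨N', hN'⟩ := Metric.tendsto_atTop.mp hφt δ hδ
  have hk0N : N ≤ φ (max N N') := le_trans (le_max_left _ _) hφ.le_apply
  have hk0 : dist (x (φ (max N N'))) a < δ := hN' (max N N') (le_max_right _ _)
  set k0 : ℕ := φ (max N N') with hk0def
  have hmain : ∀ m, dist (x (k0 + m)) a < δ := by
    intro m
    induction m with
    | zero => simpa using hk0
    | succ m ih =>
      have hst := (hN (k0 + m) (by omega)).1
      obtain ⟨p, hpS, hpd⟩ := (hN (k0 + m + 1) (by omega)).2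
      have hadd : k0 + (m + 1) = (k0 + m) + 1 := rfl
      rw [hadd]
      by_cases hpa : p = a
      · rwa [hpa] at hpd
      · exfalso
        have h1 : dist a (x ((k0 + m) + 1))
            ≤ dist a (x (k0 + m)) + dist (x (k0 + m)) (x ((k0 + m) + 1)) := dist_triangle _ _ _
        have h2 : dist a p ≤ dist a (x ((k0 + m) + 1)) + dist (x ((k0 + m) + 1)) p :=
          dist_triangle _ _ _
        have h3 := hrS p hpS hpa
        have hmin : min ε r ≤ r := min_le_right _ _
        rw [dist_comm a (x (k0 + m))] at h1
        have hstep' : dist (x (k0 + m)) (x ((k0 + m) + 1)) < δ := by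
          rw [dist_comm]; exact hst
        have hpd' : dist (x ((k0 + m) + 1)) p < δ := hpd
        linarith
  refine ⟨k0, fun k hk => ?_⟩
  have h := hmain (k - k0)
  rw [Nat.add_sub_cancel' hk] at h
  have hδε : δ < ε := by
    have : min ε r ≤ ε := min_le_left _ _
    rw [hδdef]; linarith
  linarith
end

section
/- Fix n ≥ 1 and constants 0 < Λ₂ ≤ Λ₁. There exists a positive integer N, depending only on Λ₁ and Λ₂ (and the dimension n), with the following property: for every symmetric positive definite H ∈ ℝ^{n×n} satisfying Λ₂‖v‖² ≤ vᵀHv ≤ Λ₁‖v‖² for all v, every x* ∈ ℝⁿ, every starting point x̂₀ ∈ ℝⁿ, and every initial step α̂₀ ∈ [1/Λ₁, 1/Λ₂], the iterates of the long Barzilai–Borwein gradient method applied to the quadratic f̂(x) = (1/2)(x − x*)ᵀH(x − x*) — namely x̂_{j+1} = x̂_j − α̂_j Ĝ(x̂_j) with Ĝ(x) = H(x − x*) and, for j ≥ 1, α̂_j = (ŝ_{j−1}ᵀ ŝ_{j−1})/(ŝ_{j−1}ᵀ ŷ_{j−1}) where ŝ_{j−1} = x̂_j − x̂_{j−1}, ŷ_{j−1}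 = Ĝ(x̂_j) − Ĝ(x̂_{j−1}) (the iteration stopping, i.e. remaining constant, if Ĝ(x̂_j) = 0) — satisfy ‖x̂_j − x*‖ ≤ (1/2)‖x̂₀ − x*‖ for all j ≥ N. -/
set_option maxHeartbeats 1000000


open scoped RealInnerProductSpace


open Finset in
theorem bb_core_s16 (Λ₁ Λ₂ : ℝ) (hΛ₂ : 0 < Λ₂) (hΛ : Λ₂ ≤ Λ₁) (n : ℕ) (l : ℕ) (hl : l ≤ n) :
    ∀ ε : ℝ, 0 < ε → ∃ N : ℕ, ∀ (lam : Fin n → ℝ) (μ : ℕ → Fin n → ℝ) (α : ℕ → ℝ),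
      Monotone lam → (∀ i, Λ₂ ≤ lam i) → (∀ i, lam i ≤ Λ₁) →
      (∀ j, 1/Λ₁ ≤ α j) → (∀ j, α j ≤ 1/Λ₂) →
      (∀ j i, μ (j+1) i = (1 - α j * lam i) * μ j i) →
      (∀ j, α (j+1) * (∑ i, lam i * μ j i ^ 2) = ∑ i, μ j i ^ 2) →
      ∀ j, N ≤ j →
        (∑ i ∈ Finset.univ.filter (fun i : Fin n => (i : ℕ) < l), μ j i ^ 2)
          ≤ ε * ∑ i, μ 0 i ^ 2 := by
  have hΛ₁ : 0 < Λ₁ := lt_of_lt_of_le hΛ₂ hΛ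
  induction l with
  | zero =>
    intro ε hε
    refine ⟨0, ?_⟩
    intro lam μ α _ _ _ _ _ _ _ j _
    have h0 : (univ.filter (fun i : Fin n => (i : ℕ) < 0)) = ∅ := by
      ext i; simp
    rw [h0, Finset.sum_empty]
    have : 0 ≤ ∑ i, μ 0 i ^ 2 := Finset.sum_nonneg fun i _ => sq_nonneg _
    positivity
  | succ l ih =>
    have hln : l < n := hl
    have hl' : l ≤ n := le_of_lt hln
    intro ε hε
    set θ : ℝ := max (1 - Λ₂/Λ₁) (1/2) with hθdef
    have hθ0 : (0:ℝ) < θ := lt_of_lt_of_le one_half_pos (le_max_right _ _)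
    have hθ1 : θ < 1 := by
      apply max_lt
      · have : 0 < Λ₂/Λ₁ := div_pos hΛ₂ hΛ₁
        linarith
      · norm_num
    set Γ : ℝ := max (Λ₁/Λ₂ - 1) 1 with hΓdef
    have hΓ1 : (1:ℝ) ≤ Γ := le_max_right _ _
    have hΓ0 : (0:ℝ) < Γ := lt_of_lt_of_le one_pos hΓ1
    set δ : ℝ := θ/2 with hδdef
    have hδ0 : (0:ℝ) < δ := by positivity
    have hδhalf : δ < 1/2 := by rw [hδdef]; linarith
    set ε' : ℝ := min (ε/2) (δ * (ε/2) / Γ^4) with hε'def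
    have hε'0 : (0:ℝ) < ε' := lt_min (by positivity) (by positivity)
    obtain ⟨Nl, hNl⟩ := ih hl' ε' hε'0
    obtain ⟨K, hK⟩ := exists_pow_lt_of_lt_one
      (x := (ε/2) / ((Γ^2)^(Nl+2))) (y := θ^2) (by positivity) (by nlinarith)
    refine ⟨Nl + 2 + K, ?_⟩
    intro lam μ α hmono hlow hup hα1 hα2 hrec hray j hj
    set iL : Fin n := ⟨l, hln⟩ with hiL
    have hαpos : ∀ j, 0 < α j := fun j => lt_of_lt_of_le (by positivity) (hα1 j)
    -- growth bound
    have key1 : ∀ j i, (1 - α j * lam i)^2 ≤ Γ^2 := by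
      intro j i
      have hlpos : 0 < lam i := lt_of_lt_of_le hΛ₂ (hlow i)
      have h1 : α j * lam i ≤ (1/Λ₂) * Λ₁ :=
        mul_le_mul (hα2 j) (hup i) hlpos.le (by positivity)
      have h2 : 0 ≤ α j * lam i := mul_nonneg (hαpos j).le hlpos.le
      have h3 : Λ₁/Λ₂ - 1 ≤ Γ := le_max_left _ _
      have h4 : (1/Λ₂) * Λ₁ = Λ₁/Λ₂ := by ring
      apply sq_le_sq'
      · linarith
      · linarith
    have growth : ∀ j i, μ (j+1) i ^ 2 ≤ Γ^2 * μ j i ^ 2 := by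
      intro j i
      rw [hrec j i, mul_pow]
      exact mul_le_mul_of_nonneg_right (key1 j i) (sq_nonneg _)
    have growthIter : ∀ j i, μ j i ^ 2 ≤ (Γ^2)^j * μ 0 i ^ 2 := by
      intro j
      induction j with
      | zero => intro i; simp
      | succ j ihj =>
        intro i
        calc μ (j+1) i ^ 2 ≤ Γ^2 * μ j i ^ 2 := growth j i
        _ ≤ Γ^2 * ((Γ^2)^j * μ 0 i ^ 2) :=
            mul_le_mul_of_nonneg_left (ihj i) (by positivity)
        _ = (Γ^2)^(j+1) * μ 0 i ^ 2 := by rw [pow_succ]; ring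
    have singleLe : ∀ k (i : Fin n), μ k i ^ 2 ≤ ∑ i', μ k i' ^ 2 :=
      fun k i => Finset.single_le_sum (fun i _ => sq_nonneg (μ k i)) (mem_univ i)
    -- contraction step
    have contraction : ∀ k,
        (∑ i ∈ univ.filter (fun i : Fin n => (i : ℕ) < l), μ k i ^ 2)
          ≤ δ * (∑ i, μ k i ^ 2) →
        μ (k+2) iL ^ 2 ≤ θ^2 * μ (k+1) iL ^ 2 := by
      intro k hG
      by_cases h0 : (∑ i, μ k i ^ 2) = 0
      · have hz : μ k iL ^ 2 = 0 := le_antisymm (h0 ▸ singleLe k iL) (sq_nonneg _)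
        have hz' : μ k iL = 0 := by
          have := sq_eq_zero_iff.mp hz; exact this
        have h1 : μ (k+1) iL = 0 := by rw [hrec k iL, hz', mul_zero]
        have h2 : μ (k+2) iL = 0 := by rw [hrec (k+1) iL, h1, mul_zero]
        simp [h1, h2]
      · set S0 := ∑ i, μ k i ^ 2 with hS0
        have hS0pos : 0 < S0 :=
          lt_of_le_of_ne (Finset.sum_nonneg fun i _ => sq_nonneg _) (Ne.symm h0)
        set S1 := ∑ i, lam i * μ k i ^ 2 with hS1
        set G := ∑ i ∈ univ.filter (fun i : Fin n => (i : ℕ) < l), μ k i ^ 2 with hGdef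
        have hGnonneg : 0 ≤ G := Finset.sum_nonneg fun i _ => sq_nonneg _
        have hS1low : Λ₂ * S0 ≤ S1 := by
          rw [hS1, hS0, Finset.mul_sum]
          apply Finset.sum_le_sum
          intro i _
          exact mul_le_mul_of_nonneg_right (hlow i) (sq_nonneg _)
        have hS1up : S1 ≤ Λ₁ * S0 := by
          rw [hS1, hS0, Finset.mul_sum]
          apply Finset.sum_le_sum
          intro i _
          exact mul_le_mul_of_nonneg_right (hup i) (sq_nonneg _)
        have hS1pos : 0 < S1 := lt_of_lt_of_le (by positivity) hS1low
        have hra : α (k+1) * S1 = S0 := hray k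
        have hapos := hαpos (k+1)
        -- split sum
        have hsplit : S0 - G = ∑ i ∈ univ.filter (fun i : Fin n => ¬ (i : ℕ) < l), μ k i ^ 2 := by
          rw [hS0, hGdef, ← Finset.sum_filter_add_sum_filter_not univ (fun i : Fin n => (i : ℕ) < l)]
          ring
        have hS1geq : lam iL * (S0 - G) ≤ S1 := by
          rw [hsplit, hS1]
          calc lam iL * ∑ i ∈ univ.filter (fun i : Fin n => ¬ (i : ℕ) < l), μ k i ^ 2
              = ∑ i ∈ univ.filter (fun i : Fin n => ¬ (i : ℕ) < l), lam iL * μ k i ^ 2 := by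
                rw [Finset.mul_sum]
          _ ≤ ∑ i ∈ univ.filter (fun i : Fin n => ¬ (i : ℕ) < l), lam i * μ k i ^ 2 := by
                apply Finset.sum_le_sum
                intro i hi
                have hi' : ¬ (i:ℕ) < l := (Finset.mem_filter.mp hi).2
                have hle : iL ≤ i := by
                  rw [Fin.le_def]
                  show l ≤ (i:ℕ)
                  omega
                exact mul_le_mul_of_nonneg_right (hmono hle) (sq_nonneg _)
          _ ≤ ∑ i, lam i * μ k i ^ 2 := by
                apply Finset.sum_le_sum_of_subset_of_nonneg (Finset.filter_subset _ _)
                intro i _ _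
                exact mul_nonneg (le_trans hΛ₂.le (hlow i)) (sq_nonneg _)
        have hlamL : Λ₂ ≤ lam iL := hlow iL
        have hlamLup : lam iL ≤ Λ₁ := hup iL
        have hlamLpos : 0 < lam iL := lt_of_lt_of_le hΛ₂ hlamL
        set a := α (k+1) with ha
        -- bounds on a * lam iL
        have hup1 : 1 - a * lam iL ≤ θ := by
          -- a ≥ 1/Λ₁ via a * S1 = S0 and S1 ≤ Λ₁ S0 : a * Λ₁ * S0 ≥ S0
          have h5 : S0 ≤ a * (Λ₁ * S0) := by
            calc S0 = a * S1 := hra.symm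
            _ ≤ a * (Λ₁ * S0) := mul_le_mul_of_nonneg_left hS1up hapos.le
          have h6 : 1 ≤ a * Λ₁ := by
            have := (mul_le_mul_iff_of_pos_right hS0pos).mp (by linarith [h5] : 1 * S0 ≤ (a * Λ₁) * S0)
            linarith
          have h7 : Λ₂/Λ₁ ≤ a * lam iL := by
            rw [div_le_iff₀ hΛ₁]
            nlinarith
          have h8 : 1 - Λ₂/Λ₁ ≤ θ := le_max_left _ _
          linarith
        have hlow1 : -θ ≤ 1 - a * lam iL := by
          -- S0 = a S1 ≥ a lam iL (1-δ) S0
          have h5 : a * (lam iL * ((1-δ) * S0)) ≤ S0 := by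
            have h51 : lam iL * ((1-δ) * S0) ≤ S1 := by
              have : G ≤ δ * S0 := hG
              nlinarith
            calc a * (lam iL * ((1-δ) * S0)) ≤ a * S1 :=
                  mul_le_mul_of_nonneg_left h51 hapos.le
            _ = S0 := hra
          have h6 : a * lam iL * (1-δ) ≤ 1 := by
            have := (mul_le_mul_iff_of_pos_right hS0pos).mp
              (by linarith [h5] : (a * lam iL * (1-δ)) * S0 ≤ 1 * S0)
            linarith
          have h7 : a * lam iL ≤ 1 + 2*δ := by nlinarith [mul_pos hapos hlamLpos]
          have : 2*δ = θ := by rw [hδdef]; ring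
          linarith
        have habs : (1 - a * lam iL)^2 ≤ θ^2 := sq_le_sq' hlow1 hup1
        calc μ (k+2) iL ^ 2 = (1 - a * lam iL)^2 * μ (k+1) iL ^ 2 := by
              rw [hrec (k+1) iL, mul_pow]
        _ ≤ θ^2 * μ (k+1) iL ^ 2 := mul_le_mul_of_nonneg_right habs (sq_nonneg _)
    -- main invariant
    set S := ∑ i, μ 0 i ^ 2 with hSdef
    have hSnn : 0 ≤ S := Finset.sum_nonneg fun i _ => sq_nonneg _
    set B1 := Γ^4 * (ε'/δ) * S with hB1def
    set C1 := (Γ^2)^(Nl+2) * S with hC1def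
    have invariant : ∀ p, μ (Nl+2+p) iL ^ 2 ≤ max B1 ((θ^2)^p * C1) := by
      intro p
      induction p with
      | zero =>
        refine le_max_of_le_right ?_
        simp only [pow_zero, one_mul]
        calc μ (Nl+2+0) iL ^ 2 ≤ (Γ^2)^(Nl+2) * μ 0 iL ^ 2 := by
              have := growthIter (Nl+2) iL
              simpa using this
        _ ≤ C1 := by
              rw [hC1def]
              exact mul_le_mul_of_nonneg_left (singleLe 0 iL) (by positivity)
      | succ p ihp =>
        have hidx : Nl + 2 + (p+1) = (Nl+1+p) + 2 := by omega
        have hidx2 : (Nl+1+p) + 1 = Nl + 2 + p := by omega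
        by_cases hc : (∑ i ∈ univ.filter (fun i : Fin n => (i : ℕ) < l), μ (Nl+1+p) i ^ 2)
            ≤ δ * (∑ i, μ (Nl+1+p) i ^ 2)
        · have hcon := contraction (Nl+1+p) hc
          rw [hidx2] at hcon
          rw [hidx]
          calc μ ((Nl+1+p)+2) iL ^ 2 ≤ θ^2 * μ (Nl+2+p) iL ^ 2 := hcon
          _ ≤ θ^2 * max B1 ((θ^2)^p * C1) :=
              mul_le_mul_of_nonneg_left ihp (by positivity)
          _ ≤ max B1 ((θ^2)^(p+1) * C1) := by
              rw [mul_max_of_nonneg _ _ (by positivity : (0:ℝ) ≤ θ^2)]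
              apply max_le_max
              · have hB1nn : 0 ≤ B1 := by
                  rw [hB1def]
                  exact mul_nonneg (mul_nonneg (by positivity) (by positivity)) hSnn
                have hθsq : θ^2 ≤ 1 := by nlinarith
                nlinarith [mul_le_mul_of_nonneg_right hθsq hB1nn]
              · rw [pow_succ]; ring_nf; rfl
        · push_neg at hc
          have hGsmall := hNl lam μ α hmono hlow hup hα1 hα2 hrec hray (Nl+1+p) (by omega)
          have hmk : μ (Nl+1+p) iL ^ 2 ≤ (ε'/δ) * S := by
            have h1 : δ * μ (Nl+1+p) iL ^ 2 ≤ δ * ∑ i, μ (Nl+1+p) i ^ 2 :=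
              mul_le_mul_of_nonneg_left (singleLe _ _) hδ0.le
            have h2 : δ * μ (Nl+1+p) iL ^ 2 ≤ ε' * S := le_trans h1 (le_trans hc.le hGsmall)
            rw [div_mul_eq_mul_div, le_div_iff₀ hδ0]
            linarith
          refine le_max_of_le_left ?_
          rw [hidx]
          calc μ ((Nl+1+p)+2) iL ^ 2 ≤ Γ^2 * μ ((Nl+1+p)+1) iL ^ 2 := growth _ _
          _ ≤ Γ^2 * (Γ^2 * μ (Nl+1+p) iL ^ 2) :=
              mul_le_mul_of_nonneg_left (growth _ _) (by positivity)
          _ ≤ Γ^2 * (Γ^2 * ((ε'/δ) * S)) := by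
              apply mul_le_mul_of_nonneg_left _ (by positivity)
              exact mul_le_mul_of_nonneg_left hmk (by positivity)
          _ = B1 := by rw [hB1def]; ring
    -- conclude
    obtain ⟨p, hp, rfl⟩ : ∃ p, K ≤ p ∧ j = Nl+2+p := ⟨j - (Nl+2), by omega, by omega⟩
    have hmj := invariant p
    have hB1le : B1 ≤ ε/2 * S := by
      have h1 : ε'/δ ≤ (ε/2)/Γ^4 := by
        rw [div_le_div_iff₀ hδ0 (by positivity)]
        calc ε' * Γ^4 ≤ (δ * (ε/2) / Γ^4) * Γ^4 :=
              mul_le_mul_of_nonneg_right (min_le_right _ _) (by positivity)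
        _ = ε/2 * δ := by field_simp
      have h2 : ε'/δ * S ≤ (ε/2)/Γ^4 * S := mul_le_mul_of_nonneg_right h1 hSnn
      have h3 : Γ^4 * (ε'/δ * S) ≤ Γ^4 * ((ε/2)/Γ^4 * S) :=
        mul_le_mul_of_nonneg_left h2 (by positivity)
      calc B1 = Γ^4 * (ε'/δ * S) := by rw [hB1def]; ring
      _ ≤ Γ^4 * ((ε/2)/Γ^4 * S) := h3
      _ = ε/2 * S := by field_simp
    have hCle : (θ^2)^p * C1 ≤ ε/2 * S := by
      have h1 : (θ^2)^p ≤ (θ^2)^K := pow_le_pow_of_le_one (by positivity) (by nlinarith) hp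
      have h2 : (θ^2)^K * (Γ^2)^(Nl+2) ≤ ε/2 := by
        have := mul_le_mul_of_nonneg_right hK.le (by positivity : (0:ℝ) ≤ (Γ^2)^(Nl+2))
        calc (θ^2)^K * (Γ^2)^(Nl+2) ≤ ((ε/2)/((Γ^2)^(Nl+2))) * (Γ^2)^(Nl+2) := this
        _ = ε/2 := by field_simp
      calc (θ^2)^p * C1 = ((θ^2)^p * (Γ^2)^(Nl+2)) * S := by rw [hC1def]; ring
      _ ≤ ((θ^2)^K * (Γ^2)^(Nl+2)) * S := by
            apply mul_le_mul_of_nonneg_right _ hSnn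
            exact mul_le_mul_of_nonneg_right h1 (by positivity)
      _ ≤ ε/2 * S := mul_le_mul_of_nonneg_right h2 hSnn
    have hmfinal : μ (Nl+2+p) iL ^ 2 ≤ ε/2 * S := le_trans hmj (max_le hB1le hCle)
    have hfilter : univ.filter (fun i : Fin n => (i : ℕ) < l+1)
        = insert iL (univ.filter (fun i : Fin n => (i : ℕ) < l)) := by
      ext i
      simp only [Finset.mem_filter, Finset.mem_insert, Finset.mem_univ, true_and, Fin.ext_iff, hiL]
      omega
    have hnotmem : iL ∉ univ.filter (fun i : Fin n => (i : ℕ) < l) := by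
      simp [hiL]
    rw [hfilter, Finset.sum_insert hnotmem]
    have hGle := hNl lam μ α hmono hlow hup hα1 hα2 hrec hray (Nl+2+p) (by omega)
    have hε'half : ε' ≤ ε/2 := min_le_left _ _
    have := mul_le_mul_of_nonneg_right hε'half hSnn
    linarith


/-- Uniform contraction of the long Barzilai–Borwein gradient method on the
class of quadratics `f̂(x) = (1/2)(x−x*)ᵀH(x−x*)` with `Λ₂‖v‖² ≤ vᵀHv ≤ Λ₁‖v‖²`: there
is `N`, depending only on `Λ₁, Λ₂` (and the dimension), such that `‖x̂_j − x*‖ ≤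
(1/2)‖x̂₀ − x*‖` for all `j ≥ N`. The iteration remains constant once `Ĝ(x̂_j) = 0`
(automatic from the update rule), in which case the step-size is kept constant. -/
theorem stmt_16 (n : ℕ) (hn : 1 ≤ n) (Λ₁ Λ₂ : ℝ) (hΛ₂ : 0 < Λ₂) (hΛ : Λ₂ ≤ Λ₁) :
    ∃ N : ℕ, 0 < N ∧
      ∀ (H : Matrix (Fin n) (Fin n) ℝ), H.PosDef →
      (∀ v : EuclideanSpace ℝ (Fin n),
        Λ₂ * ‖v‖ ^ 2 ≤ ⟪v, Matrix.toEuclideanLin H v⟫ ∧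
          ⟪v, Matrix.toEuclideanLin H v⟫ ≤ Λ₁ * ‖v‖ ^ 2) →
      ∀ (xs : EuclideanSpace ℝ (Fin n)) (x : ℕ → EuclideanSpace ℝ (Fin n)) (α : ℕ → ℝ),
        α 0 ∈ Set.Icc (1 / Λ₁) (1 / Λ₂) →
        (∀ j, x (j + 1) = x j - α j • Matrix.toEuclideanLin H (x j - xs)) →
        (∀ j, Matrix.toEuclideanLin H (x j - xs) ≠ 0 →
          α (j + 1) = ⟪x (j + 1) - x j, x (j + 1) - x j⟫ /
            ⟪x (j + 1) - x j,
              Matrix.toEuclideanLin H (x (j + 1) - xs) - Matrix.toEuclideanLin H (x j - xs)⟫) →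
        (∀ j, Matrix.toEuclideanLin H (x j - xs) = 0 → α (j + 1) = α j) →
        ∀ j, N ≤ j → ‖x j - xs‖ ≤ 1 / 2 * ‖x 0 - xs‖ := by
  classical
  have hΛ₁ : 0 < Λ₁ := lt_of_lt_of_le hΛ₂ hΛ
  set c : ℝ := Λ₂ / (2 * Λ₁) with hc
  have hcpos : 0 < c := by positivity
  obtain ⟨N₀, hN₀⟩ := bb_core_s16 Λ₁ Λ₂ hΛ₂ hΛ n n le_rfl (c ^ 2) (by positivity)
  refine ⟨N₀ + 1, Nat.succ_pos _, ?_⟩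
  intro H hPD hQF xs x α hα0 hx hαup hαconst
  set T := Matrix.toEuclideanLin H with hTdef
  have hsymm : T.IsSymmetric := Matrix.isHermitian_iff_isSymmetric.mp hPD.isHermitian
  have hrank : Module.finrank ℝ (EuclideanSpace ℝ (Fin n)) = n := finrank_euclideanSpace_fin
  set b := hsymm.eigenvectorBasis hrank with hb
  set lam := hsymm.eigenvalues hrank with hlamdef
  have hreprT : ∀ (v : EuclideanSpace ℝ (Fin n)) (i : Fin n),
      b.repr (T v) i = lam i * b.repr v i := by
    intro v i
    exact hsymm.eigenvectorBasis_apply_self_apply hrank v i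
  have hinner : ∀ v w : EuclideanSpace ℝ (Fin n),
      ⟪v, w⟫ = ∑ i, b.repr v i * b.repr w i := by
    intro v w
    rw [← b.sum_inner_mul_inner v w]
    apply Finset.sum_congr rfl
    intro i _
    rw [b.repr_apply_apply, b.repr_apply_apply, real_inner_comm v (b i)]
  -- eigenvalue bounds
  have hlam_low : ∀ i, Λ₂ ≤ lam i := by
    intro i
    have h1 := (hQF (b i)).1
    have h2 : T (b i) = lam i • b i := hsymm.apply_eigenvectorBasis hrank i
    have h3 : ‖b i‖ = 1 := b.orthonormal.1 i
    rw [h2, real_inner_smul_right, real_inner_self_eq_norm_sq, h3] at h1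
    nlinarith [h1]
  have hlam_up : ∀ i, lam i ≤ Λ₁ := by
    intro i
    have h1 := (hQF (b i)).2
    have h2 : T (b i) = lam i • b i := hsymm.apply_eigenvectorBasis hrank i
    have h3 : ‖b i‖ = 1 := b.orthonormal.1 i
    rw [h2, real_inner_smul_right, real_inner_self_eq_norm_sq, h3] at h1
    nlinarith [h1]
  set g : ℕ → EuclideanSpace ℝ (Fin n) := fun j => T (x j - xs) with hgdef
  set μ : ℕ → Fin n → ℝ := fun j i => b.repr (g j) i with hμdef
  -- recursion for g
  have hgrec : ∀ j, g (j+1) = g j - α j • T (g j) := by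
    intro j
    show T (x (j+1) - xs) = T (x j - xs) - α j • T (T (x j - xs))
    rw [hx j]
    rw [show x j - α j • T (x j - xs) - xs = (x j - xs) - α j • T (x j - xs) by abel]
    rw [map_sub, map_smul]
  have hμrec : ∀ j i, μ (j+1) i = (1 - α j * lam i) * μ j i := by
    intro j i
    show b.repr (g (j+1)) i = (1 - α j * lam i) * b.repr (g j) i
    rw [hgrec j, map_sub, map_smul, PiLp.sub_apply, PiLp.smul_apply, hreprT (g j) i, smul_eq_mul]
    ring
  -- step-size bounds
  have hs_eq : ∀ j, x (j+1) - x j = (-(α j)) • g j := by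
    intro j
    rw [hx j]
    rw [neg_smul]
    abel
  have hTs : ∀ j, T (x (j + 1) - xs) - T (x j - xs) = T (x (j+1) - x j) := by
    intro j
    rw [← map_sub]
    congr 1
    abel
  have hquot : ∀ (s : EuclideanSpace ℝ (Fin n)), s ≠ 0 →
      1/Λ₁ ≤ ⟪s, s⟫ / ⟪s, T s⟫ ∧ ⟪s, s⟫ / ⟪s, T s⟫ ≤ 1/Λ₂ := by
    intro s hs
    have hns : 0 < ‖s‖ := norm_pos_iff.mpr hs
    have h1 := (hQF s).1
    have h2 := (hQF s).2
    have hss : ⟪s, s⟫ = ‖s‖ ^ 2 := real_inner_self_eq_norm_sq s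
    have hpos : 0 < ⟪s, T s⟫ := lt_of_lt_of_le (mul_pos hΛ₂ (pow_pos hns 2)) h1
    constructor
    · rw [div_le_div_iff₀ hΛ₁ hpos]
      rw [hss]; linarith
    · rw [div_le_div_iff₀ hpos hΛ₂]
      rw [hss]; nlinarith
  have hαbound : ∀ j, 1/Λ₁ ≤ α j ∧ α j ≤ 1/Λ₂ := by
    intro j
    induction j with
    | zero => exact ⟨hα0.1, hα0.2⟩
    | succ j ihj =>
      by_cases h0 : g j = 0
      · rw [hαconst j h0]; exact ihj
      · have hαjpos : 0 < α j := lt_of_lt_of_le (by positivity) ihj.1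
        have hs : x (j+1) - x j ≠ 0 := by
          rw [hs_eq j]
          exact smul_ne_zero (neg_ne_zero.mpr (ne_of_gt hαjpos)) h0
        have heq := hαup j h0
        rw [hTs j] at heq
        rw [heq]
        exact hquot _ hs
  -- Rayleigh identity
  have hsum_inner : ∀ j, (∑ i, μ j i ^ 2) = ⟪g j, g j⟫ := by
    intro j
    rw [hinner]
    apply Finset.sum_congr rfl
    intro i _
    rw [hμdef]; ring
  have hsum_lam : ∀ j, (∑ i, lam i * μ j i ^ 2) = ⟪g j, T (g j)⟫ := by
    intro j
    rw [hinner]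
    apply Finset.sum_congr rfl
    intro i _
    rw [hreprT (g j) i]
    simp only [hμdef]
    ring
  have hray : ∀ j, α (j+1) * (∑ i, lam i * μ j i ^ 2) = ∑ i, μ j i ^ 2 := by
    intro j
    rw [hsum_inner, hsum_lam]
    by_cases h0 : g j = 0
    · rw [h0]; simp
    · have hαjpos : 0 < α j := lt_of_lt_of_le (by positivity) (hαbound j).1
      have hs : x (j+1) - x j ≠ 0 := by
        rw [hs_eq j]
        exact smul_ne_zero (neg_ne_zero.mpr (ne_of_gt hαjpos)) h0
      have heq := hαup j h0
      rw [hTs j] at heq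
      have hTsmul : T (x (j+1) - x j) = (-(α j)) • T (g j) := by
        rw [hs_eq j, map_smul]
      have h1 : ⟪x (j+1) - x j, x (j+1) - x j⟫ = (α j)^2 * ⟪g j, g j⟫ := by
        rw [hs_eq j, real_inner_smul_left, real_inner_smul_right]; ring
      have h2 : ⟪x (j+1) - x j, T (x (j+1) - x j)⟫ = (α j)^2 * ⟪g j, T (g j)⟫ := by
        rw [hTsmul, hs_eq j, real_inner_smul_left, real_inner_smul_right]; ring
      have hgnorm : 0 < ‖g j‖ := norm_pos_iff.mpr h0
      have hgpos : 0 < ⟪g j, T (g j)⟫ :=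
        lt_of_lt_of_le (mul_pos hΛ₂ (pow_pos hgnorm 2)) (hQF (g j)).1
      have hαj2 : (α j)^2 ≠ 0 := pow_ne_zero _ (ne_of_gt hαjpos)
      rw [heq, h1, h2, mul_div_mul_left _ _ hαj2, div_mul_cancel₀ _ (ne_of_gt hgpos)]
  -- sort eigenvalues
  set σ := Tuple.sort lam with hσ
  have hmono : Monotone (lam ∘ σ) := Tuple.monotone_sort lam
  have key := hN₀ (lam ∘ σ) (fun j i => μ j (σ i)) α hmono
    (fun i => hlam_low (σ i)) (fun i => hlam_up (σ i))
    (fun j => (hαbound j).1) (fun j => (hαbound j).2)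
    (fun j i => hμrec j (σ i))
    (by
      intro j
      show α (j+1) * (∑ i, lam (σ i) * μ j (σ i) ^ 2) = ∑ i, μ j (σ i) ^ 2
      have e1 : (∑ i, lam (σ i) * μ j (σ i) ^ 2) = ∑ i, lam i * μ j i ^ 2 :=
        Fintype.sum_equiv σ _ _ (fun i => rfl)
      have e2 : (∑ i, μ j (σ i) ^ 2) = ∑ i, μ j i ^ 2 :=
        Fintype.sum_equiv σ _ _ (fun i => rfl)
      rw [e1, e2]
      exact hray j)
  intro j hj
  have hkey := key j (by omega)
  have hfilterall : (Finset.univ.filter (fun i : Fin n => (i : ℕ) < n)) = Finset.univ := by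
    apply Finset.filter_true_of_mem
    intro i _
    exact i.isLt
  rw [hfilterall] at hkey
  have e1 : (∑ i, μ j (σ i) ^ 2) = ∑ i, μ j i ^ 2 := Fintype.sum_equiv σ _ _ (fun i => rfl)
  have e2 : (∑ i, μ 0 (σ i) ^ 2) = ∑ i, μ 0 i ^ 2 := Fintype.sum_equiv σ _ _ (fun i => rfl)
  have hkey' : (∑ i, μ j i ^ 2) ≤ c ^ 2 * ∑ i, μ 0 i ^ 2 := by
    rw [← e1, ← e2]; exact hkey
  -- translate to norms
  have hgj_sq : ∀ k, (∑ i, μ k i ^ 2) = ‖g k‖ ^ 2 := by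
    intro k
    rw [hsum_inner k, real_inner_self_eq_norm_sq]
  rw [hgj_sq, hgj_sq] at hkey'
  -- ‖g j‖ ≤ c * ‖g 0‖
  have hgj : ‖g j‖ ≤ c * ‖g 0‖ := by
    nlinarith [hkey', norm_nonneg (g j), norm_nonneg (g 0), mul_nonneg hcpos.le (norm_nonneg (g 0))]
  -- ‖g 0‖ ≤ Λ₁ * ‖x 0 - xs‖
  have hg0 : ‖g 0‖ ≤ Λ₁ * ‖x 0 - xs‖ := by
    have h1 : ‖g 0‖ ^ 2 ≤ Λ₁^2 * ‖x 0 - xs‖ ^ 2 := by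
      have e1 : ‖g 0‖ ^ 2 = ∑ i, (lam i * b.repr (x 0 - xs) i) ^ 2 := by
        rw [← hgj_sq 0]
        apply Finset.sum_congr rfl
        intro i _
        show b.repr (T (x 0 - xs)) i ^ 2 = _
        rw [hreprT]
      have e2 : ‖x 0 - xs‖ ^ 2 = ∑ i, (b.repr (x 0 - xs) i) ^ 2 := by
        rw [← real_inner_self_eq_norm_sq, hinner]
        apply Finset.sum_congr rfl
        intro i _; ring
      rw [e1, e2, Finset.mul_sum]
      apply Finset.sum_le_sum
      intro i _
      have h4 : lam i ^ 2 ≤ Λ₁ ^ 2 := by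
        nlinarith [hlam_low i, hlam_up i, hΛ₂]
      calc (lam i * b.repr (x 0 - xs) i) ^ 2 = lam i ^ 2 * b.repr (x 0 - xs) i ^ 2 := by ring
      _ ≤ Λ₁ ^ 2 * b.repr (x 0 - xs) i ^ 2 :=
          mul_le_mul_of_nonneg_right h4 (sq_nonneg _)
    nlinarith [norm_nonneg (g 0), norm_nonneg (x 0 - xs), mul_nonneg hΛ₁.le (norm_nonneg (x 0 - xs))]
  -- Λ₂ ‖x j - xs‖ ≤ ‖g j‖
  have hej : Λ₂ * ‖x j - xs‖ ≤ ‖g j‖ := by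
    by_cases h0 : x j - xs = 0
    · rw [h0]; simp [norm_nonneg]
    · have h1 := (hQF (x j - xs)).1
      have h2 : ⟪x j - xs, g j⟫ ≤ ‖x j - xs‖ * ‖g j‖ := real_inner_le_norm _ _
      have h3 : 0 < ‖x j - xs‖ := norm_pos_iff.mpr h0
      nlinarith
  -- finish
  have : Λ₂ * ‖x j - xs‖ ≤ c * (Λ₁ * ‖x 0 - xs‖) := by
    calc Λ₂ * ‖x j - xs‖ ≤ ‖g j‖ := hej
    _ ≤ c * ‖g 0‖ := hgj
    _ ≤ c * (Λ₁ * ‖x 0 - xs‖) := mul_le_mul_of_nonneg_left hg0 hcpos.le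
  have hcc : c * Λ₁ = Λ₂ / 2 := by
    rw [hc]; field_simp
  nlinarith [norm_nonneg (x 0 - xs), this, hcc, hΛ₂]
end
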